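/- arXiv:1207.2008 — 7 statements merged into one kernel-verified Lean document; each statement's English description precedes it below -/
import Mathlib

section
/- Let a,b,c,d range over ℕ∪{∅}. For every n ≥ 1, every choice of parameters a,b,c,d ∈ ℕ∪{∅} and every k ∈ ℕ, the number of up-down permutations σ of length 2n with mmp^{(a,b,c,d)}(σ) = k equals the number of down-up permutations τ of length 2n with mmp^{(b,a,d,c)}(τ) = k, equals the number of down-up permutations τ of length 2n with mmp^{(d,c,b,a)}(τ) = k, and equals the number of up-down permutations σ of length 2n with mmp^{(c,d,a,b)}(σ) = k. (Equivalently, A^{(a,b,c,d)}_{2n}(x) = C^{(b,a,d,c)}_{2n}(x) = C^{(d,c,b,a)}_{2n}(x) = A^{(c,d,a,b)}_{2n}(x).) -/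
/-- A permutation `σ` of `{1,…,n}` (as a permutation of `Fin n`) is up-down if
`σ_1 < σ_2 > σ_3 < σ_4 > ⋯`. -/
def UpDown {n : ℕ} (σ : Equiv.Perm (Fin n)) : Prop :=
  ∀ i : Fin n, ∀ h : i.val + 1 < n,
    if Even i.val then σ i < σ ⟨i.val + 1, h⟩ else σ ⟨i.val + 1, h⟩ < σ i

/-- A permutation is down-up if `σ_1 > σ_2 < σ_3 > σ_4 < ⋯`. -/
def DownUp {n : ℕ} (σ : Equiv.Perm (Fin n)) : Prop :=
  ∀ i : Fin n, ∀ h : i.val + 1 < n,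
    if Even i.val then σ ⟨i.val + 1, h⟩ < σ i else σ i < σ ⟨i.val + 1, h⟩

/-- The condition placed on the number `c` of points in a quadrant by a parameter
`p ∈ ℕ ∪ {∅}` (here `none` plays the role of `∅`): `c ≥ a` if `p = some a`,
and `c = 0` if `p = none`. -/
def QuadOK : Option ℕ → ℕ → Prop
  | some a, c => a ≤ c
  | none, c => c = 0

/-- `σ_i` matches the quadrant marked mesh pattern `MMP(a,b,c,d)` in `σ`. -/
def MatchesMMP (a b c d : Option ℕ) {n : ℕ} (σ : Equiv.Perm (Fin n)) (i : Fin n) : Prop :=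
  QuadOK a {j : Fin n | i < j ∧ σ i < σ j}.ncard ∧
  QuadOK b {j : Fin n | j < i ∧ σ i < σ j}.ncard ∧
  QuadOK c {j : Fin n | j < i ∧ σ j < σ i}.ncard ∧
  QuadOK d {j : Fin n | i < j ∧ σ j < σ i}.ncard

/-- `mmp^{(a,b,c,d)}(σ)`: the number of indices `i` such that `σ_i` matches
`MMP(a,b,c,d)` in `σ`. -/
noncomputable def mmp (a b c d : Option ℕ) {n : ℕ} (σ : Equiv.Perm (Fin n)) : ℕ :=
  {i : Fin n | MatchesMMP a b c d σ i}.ncard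

-- auxiliary lemmas

lemma myNcardCongrInvol {α : Type*} {f : α → α} (hf : Function.Involutive f)
    {A B : Set α} (h : ∀ x, x ∈ A ↔ f x ∈ B) : A.ncard = B.ncard := by
  have hAB : A = f '' B := by
    ext x
    rw [h]
    constructor
    · intro hx; exact ⟨f x, hx, hf x⟩
    · rintro ⟨y, hy, rfl⟩; rwa [hf]
  rw [hAB, Set.ncard_image_of_injective _ hf.injective]

lemma myNcardRevPre {n : ℕ} (S : Set (Fin n)) : (Fin.rev ⁻¹' S).ncard = S.ncard := by
  have h : Fin.rev ⁻¹' S = Fin.rev '' S := by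
    ext x
    simp only [Set.mem_preimage, Set.mem_image]
    constructor
    · intro hx; exact ⟨x.rev, hx, Fin.rev_rev x⟩
    · rintro ⟨y, hy, rfl⟩; rwa [Fin.rev_rev]
  rw [h, Set.ncard_image_of_injective _ Fin.rev_injective]

lemma myUpDownComp {n : ℕ} (σ : Equiv.Perm (Fin n)) :
    UpDown (σ.trans Fin.revPerm) ↔ DownUp σ := by
  unfold UpDown DownUp
  apply forall_congr'; intro i; apply forall_congr'; intro h
  simp only [Equiv.trans_apply, Fin.revPerm_apply]
  split_ifs <;> exact Fin.rev_lt_rev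

lemma myDownUpComp {n : ℕ} (σ : Equiv.Perm (Fin n)) :
    DownUp (σ.trans Fin.revPerm) ↔ UpDown σ := by
  unfold UpDown DownUp
  apply forall_congr'; intro i; apply forall_congr'; intro h
  simp only [Equiv.trans_apply, Fin.revPerm_apply]
  split_ifs <;> exact Fin.rev_lt_rev

lemma myUpDownRevAux {n : ℕ} (hn : Even n) (σ : Equiv.Perm (Fin n))
    (H : UpDown (Fin.revPerm.trans σ)) : DownUp σ := by
  intro j h
  have h2 : n - (j.val + 2) + 1 < n := by omega
  have H' := H ⟨n - (j.val + 2), by omega⟩ h2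
  simp only [Equiv.trans_apply, Fin.revPerm_apply] at H'
  have e1 : (Fin.rev (⟨n - (j.val + 2), by omega⟩ : Fin n)) = ⟨j.val + 1, h⟩ := by
    ext; simp only [Fin.val_rev]; omega
  have e2 : (Fin.rev (⟨n - (j.val + 2) + 1, h2⟩ : Fin n)) = j := by
    ext; simp only [Fin.val_rev]; omega
  rw [e1, e2] at H'
  have hpar : Even (n - (j.val + 2)) ↔ Even j.val := by
    obtain ⟨m, hm⟩ := hn
    simp only [Nat.even_iff] at *
    omega
  rw [if_congr hpar rfl rfl] at H'
  exact H'

lemma myDownUpRevAux {n : ℕ} (hn : Even n) (σ : Equiv.Perm (Fin n))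
    (H : DownUp (Fin.revPerm.trans σ)) : UpDown σ := by
  intro j h
  have h2 : n - (j.val + 2) + 1 < n := by omega
  have H' := H ⟨n - (j.val + 2), by omega⟩ h2
  simp only [Equiv.trans_apply, Fin.revPerm_apply] at H'
  have e1 : (Fin.rev (⟨n - (j.val + 2), by omega⟩ : Fin n)) = ⟨j.val + 1, h⟩ := by
    ext; simp only [Fin.val_rev]; omega
  have e2 : (Fin.rev (⟨n - (j.val + 2) + 1, h2⟩ : Fin n)) = j := by
    ext; simp only [Fin.val_rev]; omega
  rw [e1, e2] at H'
  have hpar : Even (n - (j.val + 2)) ↔ Even j.val := by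
    obtain ⟨m, hm⟩ := hn
    simp only [Nat.even_iff] at *
    omega
  rw [if_congr hpar rfl rfl] at H'
  exact H'

lemma myRevTransRevTrans {n : ℕ} (σ : Equiv.Perm (Fin n)) :
    Fin.revPerm.trans (Fin.revPerm.trans σ) = σ := by
  ext i
  simp [Fin.rev_rev]

lemma myUpDownRev {n : ℕ} (hn : Even n) (σ : Equiv.Perm (Fin n)) :
    UpDown (Fin.revPerm.trans σ) ↔ DownUp σ := by
  constructor
  · exact myUpDownRevAux hn σ
  · intro H
    have := myDownUpRevAux hn (Fin.revPerm.trans σ) ?_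
    · exact this
    · rwa [myRevTransRevTrans]

lemma myDownUpRev {n : ℕ} (hn : Even n) (σ : Equiv.Perm (Fin n)) :
    DownUp (Fin.revPerm.trans σ) ↔ UpDown σ := by
  constructor
  · exact myDownUpRevAux hn σ
  · intro H
    have := myUpDownRevAux hn (Fin.revPerm.trans σ) ?_
    · exact this
    · rwa [myRevTransRevTrans]

lemma myMatchesComp (a b c d : Option ℕ) {n : ℕ} (σ : Equiv.Perm (Fin n)) (i : Fin n) :
    MatchesMMP a b c d (σ.trans Fin.revPerm) i ↔ MatchesMMP d c b a σ i := by
  unfold MatchesMMP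
  simp only [Equiv.trans_apply, Fin.revPerm_apply, Fin.rev_lt_rev]
  tauto

lemma myMmpComp (a b c d : Option ℕ) {n : ℕ} (σ : Equiv.Perm (Fin n)) :
    mmp a b c d (σ.trans Fin.revPerm) = mmp d c b a σ := by
  unfold mmp
  congr 1
  ext i
  exact myMatchesComp a b c d σ i

lemma myMatchesRev (a b c d : Option ℕ) {n : ℕ} (σ : Equiv.Perm (Fin n)) (i : Fin n) :
    MatchesMMP a b c d (Fin.revPerm.trans σ) i ↔ MatchesMMP b a d c σ i.rev := by
  unfold MatchesMMP
  simp only [Equiv.trans_apply, Fin.revPerm_apply]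
  have h1 : {j : Fin n | i < j ∧ σ i.rev < σ j.rev}.ncard
      = {j : Fin n | j < i.rev ∧ σ i.rev < σ j}.ncard := by
    rw [show {j : Fin n | i < j ∧ σ i.rev < σ j.rev}
        = Fin.rev ⁻¹' {j : Fin n | j < i.rev ∧ σ i.rev < σ j} by
      ext j; simp [Fin.rev_lt_rev]]
    exact myNcardRevPre _
  have h2 : {j : Fin n | j < i ∧ σ i.rev < σ j.rev}.ncard
      = {j : Fin n | i.rev < j ∧ σ i.rev < σ j}.ncard := by
    rw [show {j : Fin n | j < i ∧ σ i.rev < σ j.rev}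
        = Fin.rev ⁻¹' {j : Fin n | i.rev < j ∧ σ i.rev < σ j} by
      ext j; simp [Fin.rev_lt_rev]]
    exact myNcardRevPre _
  have h3 : {j : Fin n | j < i ∧ σ j.rev < σ i.rev}.ncard
      = {j : Fin n | i.rev < j ∧ σ j < σ i.rev}.ncard := by
    rw [show {j : Fin n | j < i ∧ σ j.rev < σ i.rev}
        = Fin.rev ⁻¹' {j : Fin n | i.rev < j ∧ σ j < σ i.rev} by
      ext j; simp [Fin.rev_lt_rev]]
    exact myNcardRevPre _
  have h4 : {j : Fin n | i < j ∧ σ j.rev < σ i.rev}.ncard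
      = {j : Fin n | j < i.rev ∧ σ j < σ i.rev}.ncard := by
    rw [show {j : Fin n | i < j ∧ σ j.rev < σ i.rev}
        = Fin.rev ⁻¹' {j : Fin n | j < i.rev ∧ σ j < σ i.rev} by
      ext j; simp [Fin.rev_lt_rev]]
    exact myNcardRevPre _
  rw [h1, h2, h3, h4]
  tauto

lemma myMmpRev (a b c d : Option ℕ) {n : ℕ} (σ : Equiv.Perm (Fin n)) :
    mmp a b c d (Fin.revPerm.trans σ) = mmp b a d c σ := by
  unfold mmp
  rw [show {i : Fin n | MatchesMMP a b c d (Fin.revPerm.trans σ) i}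
      = Fin.rev ⁻¹' {i : Fin n | MatchesMMP b a d c σ i} by
    ext i; simp only [Set.mem_setOf_eq, Set.mem_preimage]; exact myMatchesRev a b c d σ i]
  exact myNcardRevPre _

theorem stmt0 (n : ℕ) (hn : 1 ≤ n) (a b c d : Option ℕ) (k : ℕ) :
    {σ : Equiv.Perm (Fin (2*n)) | UpDown σ ∧ mmp a b c d σ = k}.ncard
      = {τ : Equiv.Perm (Fin (2*n)) | DownUp τ ∧ mmp b a d c τ = k}.ncard ∧
    {σ : Equiv.Perm (Fin (2*n)) | UpDown σ ∧ mmp a b c d σ = k}.ncard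
      = {τ : Equiv.Perm (Fin (2*n)) | DownUp τ ∧ mmp d c b a τ = k}.ncard ∧
    {σ : Equiv.Perm (Fin (2*n)) | UpDown σ ∧ mmp a b c d σ = k}.ncard
      = {σ : Equiv.Perm (Fin (2*n)) | UpDown σ ∧ mmp c d a b σ = k}.ncard := by
  have hne : Even (2 * n) := even_two_mul n
  have hRinv : Function.Involutive
      (fun σ : Equiv.Perm (Fin (2*n)) => Fin.revPerm.trans σ) :=
    fun σ => myRevTransRevTrans σ
  have hCinv : Function.Involutive
      (fun σ : Equiv.Perm (Fin (2*n)) => σ.trans Fin.revPerm) := by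
    intro σ; ext i; simp [Fin.rev_rev]
  have eq1 : {σ : Equiv.Perm (Fin (2*n)) | UpDown σ ∧ mmp a b c d σ = k}.ncard
      = {τ : Equiv.Perm (Fin (2*n)) | DownUp τ ∧ mmp b a d c τ = k}.ncard := by
    apply myNcardCongrInvol hRinv
    intro x
    simp only [Set.mem_setOf_eq]
    rw [myDownUpRev hne x, myMmpRev b a d c x]
  have eq2 : {σ : Equiv.Perm (Fin (2*n)) | UpDown σ ∧ mmp a b c d σ = k}.ncard
      = {τ : Equiv.Perm (Fin (2*n)) | DownUp τ ∧ mmp d c b a τ = k}.ncard := by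
    apply myNcardCongrInvol hCinv
    intro x
    simp only [Set.mem_setOf_eq]
    rw [myDownUpComp x, myMmpComp d c b a x]
  have eq3 : {τ : Equiv.Perm (Fin (2*n)) | DownUp τ ∧ mmp b a d c τ = k}.ncard
      = {σ : Equiv.Perm (Fin (2*n)) | UpDown σ ∧ mmp c d a b σ = k}.ncard := by
    apply myNcardCongrInvol hCinv
    intro x
    simp only [Set.mem_setOf_eq]
    rw [myUpDownComp x, myMmpComp c d a b x]
  exact ⟨eq1, eq2, eq1.trans eq3⟩
end

section
/- Let a,b,c,d range over ℕ∪{∅}. For every n ≥ 1, every choice of parameters a,b,c,d ∈ ℕ∪{∅} and every k ∈ ℕ, the number of up-down permutations σ of length 2n−1 with mmp^{(a,b,c,d)}(σ) = k equals the number of up-down permutations σ of length 2n−1 with mmp^{(b,a,d,c)}(σ) = k, equals the number of down-up permutations τ of length 2n−1 with mmp^{(d,c,b,a)}(τ) = k, and equals the number of down-up permutations τ of length 2n−1 with mmp^{(c,d,a,b)}(τ) = k. (Equivalently, B^{(a,b,c,d)}_{2n−1}(x) = B^{(b,a,d,c)}_{2n−1}(x) = D^{(d,c,b,a)}_{2n−1}(x)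 = D^{(c,d,a,b)}_{2n−1}(x).) -/
-- ncard under rev-substitution
lemma ncard_rev {m : ℕ} (p : Fin m → Prop) :
    {j : Fin m | p (Fin.rev j)}.ncard = {j : Fin m | p j}.ncard := by
  have h : {j : Fin m | p j} = Fin.rev '' {j : Fin m | p (Fin.rev j)} := by
    ext x
    constructor
    · intro hx
      exact ⟨Fin.rev x, by simpa using hx, Fin.rev_rev x⟩
    · rintro ⟨y, hy, rfl⟩
      exact hy
  rw [h, Set.ncard_image_of_injective _ Fin.rev_injective]

lemma lt_rev_iff {m : ℕ} {i j : Fin m} : i < Fin.rev j ↔ j < Fin.rev i := by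
  have hi := i.isLt; have hj := j.isLt
  simp only [Fin.lt_def, Fin.val_rev]
  omega

-- position reversal
lemma matches_rev (a b c d : Option ℕ) {m : ℕ} (σ : Equiv.Perm (Fin m)) (i : Fin m) :
    MatchesMMP a b c d (Fin.revPerm.trans σ) i ↔ MatchesMMP b a d c σ (Fin.rev i) := by
  have e1 : {j : Fin m | i < j ∧ (Fin.revPerm.trans σ) i < (Fin.revPerm.trans σ) j}.ncard
      = {j : Fin m | j < Fin.rev i ∧ σ (Fin.rev i) < σ j}.ncard := by
    rw [← ncard_rev (fun j => j < Fin.rev i ∧ σ (Fin.rev i) < σ j)]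
    congr 1; ext j
    simp [Equiv.trans_apply, lt_rev_iff, Fin.rev_rev]
  have e2 : {j : Fin m | j < i ∧ (Fin.revPerm.trans σ) i < (Fin.revPerm.trans σ) j}.ncard
      = {j : Fin m | Fin.rev i < j ∧ σ (Fin.rev i) < σ j}.ncard := by
    rw [← ncard_rev (fun j => Fin.rev i < j ∧ σ (Fin.rev i) < σ j)]
    congr 1; ext j
    simp [Equiv.trans_apply, lt_rev_iff, Fin.rev_rev]
  have e3 : {j : Fin m | j < i ∧ (Fin.revPerm.trans σ) j < (Fin.revPerm.trans σ) i}.ncard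
      = {j : Fin m | Fin.rev i < j ∧ σ j < σ (Fin.rev i)}.ncard := by
    rw [← ncard_rev (fun j => Fin.rev i < j ∧ σ j < σ (Fin.rev i))]
    congr 1; ext j
    simp [Equiv.trans_apply, lt_rev_iff, Fin.rev_rev]
  have e4 : {j : Fin m | i < j ∧ (Fin.revPerm.trans σ) j < (Fin.revPerm.trans σ) i}.ncard
      = {j : Fin m | j < Fin.rev i ∧ σ j < σ (Fin.rev i)}.ncard := by
    rw [← ncard_rev (fun j => j < Fin.rev i ∧ σ j < σ (Fin.rev i))]
    congr 1; ext j
    simp [Equiv.trans_apply, lt_rev_iff, Fin.rev_rev]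
  unfold MatchesMMP
  rw [e1, e2, e3, e4]
  tauto

lemma mmp_rev (a b c d : Option ℕ) {m : ℕ} (σ : Equiv.Perm (Fin m)) :
    mmp a b c d (Fin.revPerm.trans σ) = mmp b a d c σ := by
  unfold mmp
  rw [← ncard_rev (fun i => MatchesMMP b a d c σ i)]
  congr 1; ext i
  simp only [Set.mem_setOf_eq, matches_rev]

-- complement
lemma matches_compl (a b c d : Option ℕ) {m : ℕ} (σ : Equiv.Perm (Fin m)) (i : Fin m) :
    MatchesMMP a b c d (σ.trans Fin.revPerm) i ↔ MatchesMMP d c b a σ i := by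
  unfold MatchesMMP
  have h : ∀ x y : Fin m, (σ.trans Fin.revPerm) x < (σ.trans Fin.revPerm) y ↔ σ y < σ x := by
    intro x y; simp [Equiv.trans_apply, Fin.rev_lt_rev]
  simp only [h]
  tauto

lemma mmp_compl (a b c d : Option ℕ) {m : ℕ} (σ : Equiv.Perm (Fin m)) :
    mmp a b c d (σ.trans Fin.revPerm) = mmp d c b a σ := by
  unfold mmp
  congr 1; ext i
  simp only [Set.mem_setOf_eq, matches_compl]

lemma updown_compl {m : ℕ} (σ : Equiv.Perm (Fin m)) :
    DownUp (σ.trans Fin.revPerm) ↔ UpDown σ := by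
  unfold UpDown DownUp
  constructor <;> intro H i h <;> have := H i h <;>
    · split at this <;> split <;> simp_all [Equiv.trans_apply, Fin.rev_lt_rev]

lemma updown_rev {m : ℕ} (hm : Odd m) (σ : Equiv.Perm (Fin m)) (hσ : UpDown σ) :
    UpDown (Fin.revPerm.trans σ) := by
  intro i h
  have hi := i.isLt
  set j : Fin m := ⟨m - (i.val + 2), by omega⟩ with hj
  have hj1 : j.val + 1 < m := by simp [hj]; omega
  have hrev1 : Fin.rev i = ⟨j.val + 1, hj1⟩ := by
    apply Fin.ext; simp [Fin.val_rev, hj]; omega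
  have hrev2 : Fin.rev ⟨i.val + 1, h⟩ = j := by
    apply Fin.ext; simp [Fin.val_rev, hj]
  have hpar : Even j.val ↔ ¬ Even i.val := by
    obtain ⟨t, ht⟩ := hm
    simp only [hj]
    rcases Nat.even_or_odd i.val with he | ho
    · obtain ⟨u, hu⟩ := he
      constructor
      · rintro ⟨v, hv⟩ _; omega
      · intro hne; exact absurd (⟨u, hu⟩ : Even i.val) (by tauto)
    · obtain ⟨u, hu⟩ := ho
      constructor
      · intro _ he; obtain ⟨v,hv⟩ := he; omega
      · intro _; exact ⟨(m - (i.val+2))/2, by omega⟩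
  have hs := hσ j hj1
  simp only [Equiv.trans_apply, Fin.revPerm_apply, hrev1, hrev2]
  split at hs <;> split <;> simp_all [Nat.odd_iff, Nat.even_iff]

lemma involutive_rev_trans {m : ℕ} : Function.Involutive
    (fun σ : Equiv.Perm (Fin m) => Fin.revPerm.trans σ) := by
  intro σ
  ext x
  simp [Equiv.trans_apply]

lemma involutive_trans_rev {m : ℕ} : Function.Involutive
    (fun σ : Equiv.Perm (Fin m) => σ.trans Fin.revPerm) := by
  intro σ
  ext x
  simp [Equiv.trans_apply]

lemma ncard_eq_of_map {m : ℕ} (P Q : Equiv.Perm (Fin m) → Prop)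
    (F : Equiv.Perm (Fin m) → Equiv.Perm (Fin m)) (hF : Function.Involutive F)
    (h : ∀ σ, P σ ↔ Q (F σ)) :
    {σ | P σ}.ncard = {σ | Q σ}.ncard := by
  have himg : {σ | Q σ} = F '' {σ | P σ} := by
    ext τ
    constructor
    · intro hτ
      refine ⟨F τ, ?_, hF τ⟩
      rw [Set.mem_setOf_eq, h, hF τ]
      exact hτ
    · rintro ⟨σ, hσ, rfl⟩
      exact (h σ).mp hσ
  rw [himg, Set.ncard_image_of_injective _ hF.injective]


lemma updown_rev_iff {m : ℕ} (hm : Odd m) (σ : Equiv.Perm (Fin m)) :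
    UpDown (Fin.revPerm.trans σ) ↔ UpDown σ := by
  constructor
  · intro h
    have := updown_rev hm _ h
    rwa [show Equiv.trans Fin.revPerm (Equiv.trans Fin.revPerm σ) = σ from involutive_rev_trans σ] at this
  · exact updown_rev hm σ

theorem stmt1 (n : ℕ) (hn : 1 ≤ n) (a b c d : Option ℕ) (k : ℕ) :
    {σ : Equiv.Perm (Fin (2*n - 1)) | UpDown σ ∧ mmp a b c d σ = k}.ncard
      = {σ : Equiv.Perm (Fin (2*n - 1)) | UpDown σ ∧ mmp b a d c σ = k}.ncard ∧
    {σ : Equiv.Perm (Fin (2*n - 1)) | UpDown σ ∧ mmp a b c d σ = k}.ncard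
      = {τ : Equiv.Perm (Fin (2*n - 1)) | DownUp τ ∧ mmp d c b a τ = k}.ncard ∧
    {σ : Equiv.Perm (Fin (2*n - 1)) | UpDown σ ∧ mmp a b c d σ = k}.ncard
      = {τ : Equiv.Perm (Fin (2*n - 1)) | DownUp τ ∧ mmp c d a b τ = k}.ncard := by
  have hm : Odd (2*n - 1) := ⟨n - 1, by omega⟩
  have E1 : {σ : Equiv.Perm (Fin (2*n - 1)) | UpDown σ ∧ mmp a b c d σ = k}.ncard
      = {σ : Equiv.Perm (Fin (2*n - 1)) | UpDown σ ∧ mmp b a d c σ = k}.ncard := by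
    apply ncard_eq_of_map _ _ _ involutive_rev_trans
    intro σ
    rw [mmp_rev b a d c σ, updown_rev_iff hm]
  have E2 : ∀ a' b' c' d', {σ : Equiv.Perm (Fin (2*n - 1)) | UpDown σ ∧ mmp a' b' c' d' σ = k}.ncard
      = {τ : Equiv.Perm (Fin (2*n - 1)) | DownUp τ ∧ mmp d' c' b' a' τ = k}.ncard := by
    intro a' b' c' d'
    apply ncard_eq_of_map _ _ _ involutive_trans_rev
    intro σ
    rw [mmp_compl d' c' b' a' σ, updown_compl]
  exact ⟨E1, E2 a b c d, E1.trans (E2 b a d c)⟩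
end

section
/- For every n ≥ 1, the number of up-down permutations σ of length 2n with mmp^{(1,0,∅,0)}(σ) = 1 equals the number of up-down permutations of length 2n−1. (Equivalently, the coefficient of x in A^{(1,0,∅,0)}_{2n}(x) is B_{2n−1}(1).) -/
/-- `σ_i` matches `MMP(1,0,∅,0)`: there exists `j > i` with `σ_j > σ_i` and
there is no `j < i` with `σ_j < σ_i`. -/
def Matches1 {n : ℕ} (σ : Equiv.Perm (Fin n)) (i : Fin n) : Prop :=
  (∃ j, i < j ∧ σ i < σ j) ∧ ¬ ∃ j, j < i ∧ σ j < σ i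

/-- `mmp^{(1,0,∅,0)}(σ)`: the number of indices matching `MMP(1,0,∅,0)` in `σ`. -/
noncomputable def mmp1 {n : ℕ} (σ : Equiv.Perm (Fin n)) : ℕ :=
  {i : Fin n | Matches1 σ i}.ncard

/-- The number of up-down permutations of length `m`. -/
noncomputable def UDcount (m : ℕ) : ℕ := {σ : Equiv.Perm (Fin m) | UpDown σ}.ncard

open Equiv

lemma lemA {m : ℕ} (hm : Odd m) (σ : Equiv.Perm (Fin (m+1))) (hσ : UpDown σ) :
    mmp1 σ = 1 ↔ σ 0 = 0 := by
  have hm1 : 1 ≤ m := hm.pos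
  -- index 0 always matches
  have h0m : Matches1 σ 0 := by
    constructor
    · refine ⟨⟨1, by omega⟩, by simp [Fin.lt_def], ?_⟩
      have := hσ 0 (by show (0:Fin (m+1)).val + 1 < m + 1; simp; omega)
      rw [if_pos (by simp)] at this
      convert this using 3 <;> simp
    · rintro ⟨j, hj, -⟩
      exact absurd hj (by simp)
  constructor
  · intro h1
    by_contra h0
    obtain ⟨i, hσi⟩ : ∃ i, σ i = 0 := ⟨σ.symm 0, σ.apply_symm_apply 0⟩
    have hi0 : i ≠ 0 := fun e => h0 (e ▸ hσi)
    have hilt : i.val < m := by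
      by_contra hle
      have hval : i.val = m := by have := i.isLt; omega
      have heven : Even (m-1) := by
        rcases hm with ⟨k, rfl⟩; simpa using even_two_mul k
      have H := hσ ⟨m-1, by omega⟩
        (by show m - 1 + 1 < m + 1; omega)
      rw [if_pos (by simpa using heven)] at H
      have hmk : (⟨m-1+1, by omega⟩ : Fin (m+1)) = i := Fin.ext (by simp; omega)
      rw [hmk, hσi] at H
      exact absurd H (by simp)
    have him : Matches1 σ i := by
      constructor
      · refine ⟨⟨i.val+1, by omega⟩, by simp [Fin.lt_def], ?_⟩
        rw [hσi]
        refine Fin.pos_of_ne_zero ?_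
        rw [← hσi]
        intro he
        exact absurd (σ.injective he) (by simp [Fin.ext_iff])
      · rintro ⟨j, hj, hlt⟩
        rw [hσi] at hlt
        exact absurd hlt (by simp)
    have : 1 < mmp1 σ := by
      rw [mmp1, Set.one_lt_ncard_iff (Set.toFinite _)]
      exact ⟨0, i, h0m, him, (Ne.symm hi0)⟩
    omega
  · intro h0
    have : {i : Fin (m+1) | Matches1 σ i} = {0} := by
      ext j
      simp only [Set.mem_setOf_eq, Set.mem_singleton_iff]
      constructor
      · intro hj
        by_contra hj0
        refine hj.2 ⟨0, Fin.pos_of_ne_zero hj0, ?_⟩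
        rw [h0]
        exact Fin.pos_of_ne_zero (fun he => hj0 (σ.injective (he.trans h0.symm)))
      · rintro rfl; exact h0m
    rw [mmp1, this, Set.ncard_singleton]

lemma updown_iff {m : ℕ} (σ : Equiv.Perm (Fin (m+1))) (τ : Equiv.Perm (Fin m))
    (h0 : σ 0 = 0) (hs : ∀ i : Fin m, σ i.succ = (τ i).succ) :
    UpDown σ ↔ DownUp τ := by
  constructor
  · intro h i hi
    have hi1 : i.val + 1 < m + 1 := by omega
    have hi2 : i.val + 1 + 1 < m + 1 := by omega
    have H := h ⟨i.val+1, hi1⟩ (show i.val + 1 + 1 < m + 1 from hi2)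
    have key : σ ((⟨i.val, i.isLt⟩ : Fin m).succ) = (τ ⟨i.val, i.isLt⟩).succ := hs _
    have key2 : σ ((⟨i.val+1, hi⟩ : Fin m).succ) = (τ ⟨i.val+1, hi⟩).succ := hs _
    have e0 : (⟨i.val, i.isLt⟩ : Fin m) = i := rfl
    by_cases he : Even i.val
    · rw [if_pos he]
      rw [if_neg (show ¬ Even ((⟨i.val+1, hi1⟩ : Fin (m+1)).val) from
        by simpa [Nat.even_add_one] using he)] at H
      have H' : σ ((⟨i.val+1, hi⟩ : Fin m).succ) < σ ((⟨i.val, i.isLt⟩ : Fin m).succ) := H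
      rw [key, key2, Fin.succ_lt_succ_iff, e0] at H'
      exact H'
    · rw [if_neg he]
      rw [if_pos (show Even ((⟨i.val+1, hi1⟩ : Fin (m+1)).val) from
        by simpa [Nat.even_add_one] using he)] at H
      have H' : σ ((⟨i.val, i.isLt⟩ : Fin m).succ) < σ ((⟨i.val+1, hi⟩ : Fin m).succ) := H
      rw [key, key2, Fin.succ_lt_succ_iff, e0] at H'
      exact H'
  · intro h i hi
    rcases i with ⟨iv, hiv⟩
    have hi' : iv + 1 < m + 1 := hi
    cases iv with
    | zero =>
      rw [if_pos (by simp)]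
      have h1ne : σ ⟨0+1, hi⟩ ≠ 0 := by
        rw [← h0]
        intro he
        exact absurd (σ.injective he) (by simp [Fin.ext_iff])
      calc σ ⟨0, hiv⟩ = 0 := by rw [show (⟨0, hiv⟩ : Fin (m+1)) = 0 from rfl, h0]
        _ < σ ⟨0+1, hi⟩ := Fin.pos_of_ne_zero h1ne
    | succ j =>
      have hj : j + 1 < m := by omega
      have hjm : j < m := by omega
      have H := h ⟨j, hjm⟩ (show j + 1 < m from hj)
      have key : σ ((⟨j, hjm⟩ : Fin m).succ) = (τ ⟨j, hjm⟩).succ := hs _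
      have key2 : σ ((⟨j+1, hj⟩ : Fin m).succ) = (τ ⟨j+1, hj⟩).succ := hs _
      by_cases he : Even j
      · rw [if_neg (show ¬ Even ((⟨j+1, hiv⟩ : Fin (m+1)).val) from
          by simpa [Nat.even_add_one] using he)]
        rw [if_pos (show Even ((⟨j, hjm⟩ : Fin m).val) from he)] at H
        show σ ((⟨j+1, hj⟩ : Fin m).succ) < σ ((⟨j, hjm⟩ : Fin m).succ)
        rw [key, key2, Fin.succ_lt_succ_iff]
        exact H
      · rw [if_pos (show Even ((⟨j+1, hiv⟩ : Fin (m+1)).val) from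
          by simpa [Nat.even_add_one] using he)]
        rw [if_neg (show ¬ Even ((⟨j, hjm⟩ : Fin m).val) from he)] at H
        show σ ((⟨j, hjm⟩ : Fin m).succ) < σ ((⟨j+1, hj⟩ : Fin m).succ)
        rw [key, key2, Fin.succ_lt_succ_iff]
        exact H

lemma lemB (m : ℕ) :
    {σ : Equiv.Perm (Fin (m+1)) | UpDown σ ∧ σ 0 = 0}.ncard
      = {τ : Equiv.Perm (Fin m) | DownUp τ}.ncard := by
  classical
  set G : Equiv.Perm (Fin m) → Equiv.Perm (Fin (m+1)) :=
    fun τ => Equiv.Perm.decomposeFin.symm (0, τ) with hG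
  have hGzero : ∀ τ, G τ 0 = 0 := fun τ => by simp [hG]
  have hGsucc : ∀ τ (i : Fin m), G τ i.succ = (τ i).succ := fun τ i => by simp [hG]
  have himg : {σ : Equiv.Perm (Fin (m+1)) | UpDown σ ∧ σ 0 = 0}
      = G '' {τ | DownUp τ} := by
    ext σ
    simp only [Set.mem_setOf_eq, Set.mem_image]
    constructor
    · rintro ⟨hud, h0⟩
      obtain ⟨⟨p, τ⟩, hq⟩ : ∃ q, Equiv.Perm.decomposeFin.symm q = σ :=
        ⟨_, Equiv.symm_apply_apply _ _⟩
      have hp : p = 0 := by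
        have := Equiv.Perm.decomposeFin_symm_apply_zero p τ
        rw [hq] at this
        rw [← this, h0]
      have hσG : G τ = σ := by rw [hG]; simp only; rw [← hp]; exact hq
      refine ⟨τ, ?_, hσG⟩
      refine (updown_iff σ τ h0 ?_).mp hud
      intro i
      rw [← hσG]
      exact hGsucc τ i
    · rintro ⟨τ, hτ, rfl⟩
      exact ⟨(updown_iff (G τ) τ (hGzero τ) (hGsucc τ)).mpr hτ, hGzero τ⟩
  have hinj : Function.Injective G := by
    intro a b hab
    have := Equiv.Perm.decomposeFin.symm.injective hab
    simpa using this
  rw [himg, Set.ncard_image_of_injective _ hinj]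

lemma downup_upd_rev {m : ℕ} (τ : Equiv.Perm (Fin m)) :
    DownUp τ ↔ UpDown (τ.trans Fin.revPerm) := by
  constructor
  · intro h i hi
    have H := h i hi
    by_cases he : Even i.val
    · rw [if_pos he] at H ⊢
      simpa [Equiv.trans_apply, Fin.rev_lt_rev] using H
    · rw [if_neg he] at H ⊢
      simpa [Equiv.trans_apply, Fin.rev_lt_rev] using H
  · intro h i hi
    have H := h i hi
    by_cases he : Even i.val
    · rw [if_pos he] at H ⊢
      simpa [Equiv.trans_apply, Fin.rev_lt_rev] using H
    · rw [if_neg he] at H ⊢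
      simpa [Equiv.trans_apply, Fin.rev_lt_rev] using H

lemma lemC (m : ℕ) : {τ : Equiv.Perm (Fin m) | DownUp τ}.ncard = UDcount m := by
  classical
  have hrr : ∀ σ : Equiv.Perm (Fin m), (σ.trans Fin.revPerm).trans Fin.revPerm = σ := by
    intro σ; ext x; simp [Equiv.trans_apply]
  have himg : {σ : Equiv.Perm (Fin m) | UpDown σ}
      = (fun τ => τ.trans Fin.revPerm) '' {τ | DownUp τ} := by
    ext σ
    simp only [Set.mem_setOf_eq, Set.mem_image]
    constructor
    · intro h
      refine ⟨σ.trans Fin.revPerm, ?_, hrr σ⟩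
      rw [downup_upd_rev, hrr σ]
      exact h
    · rintro ⟨τ, hτ, rfl⟩
      exact (downup_upd_rev τ).mp hτ
  have hinj : Function.Injective (fun τ : Equiv.Perm (Fin m) => τ.trans Fin.revPerm) := by
    intro a b hab
    have := congrArg (fun e : Equiv.Perm (Fin m) => e.trans Fin.revPerm) hab
    simpa [hrr] using this
  rw [UDcount, himg, Set.ncard_image_of_injective _ hinj]

lemma main' (m : ℕ) (hm : Odd m) :
    {σ : Equiv.Perm (Fin (m+1)) | UpDown σ ∧ mmp1 σ = 1}.ncard = UDcount m := by
  have hset : {σ : Equiv.Perm (Fin (m+1)) | UpDown σ ∧ mmp1 σ = 1}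
      = {σ : Equiv.Perm (Fin (m+1)) | UpDown σ ∧ σ 0 = 0} := by
    ext σ
    simp only [Set.mem_setOf_eq]
    exact and_congr_right fun h => lemA hm σ h
  rw [hset, lemB m, lemC m]

theorem stmt7 (n : ℕ) (hn : 1 ≤ n) :
    {σ : Equiv.Perm (Fin (2*n)) | UpDown σ ∧ mmp1 σ = 1}.ncard = UDcount (2*n - 1) := by
  obtain ⟨k, rfl⟩ : ∃ k, n = k + 1 := ⟨n - 1, by omega⟩
  exact main' (2*k+1) ⟨k, by ring⟩
end

section
/- For every n ≥ 1, the number of up-down permutations σ of length 2n+1 with mmp^{(1,0,∅,0)}(σ) = 1 equals (number of up-down permutations of length 2n) + (number of up-down permutations of length 2n−1). (Equivalently, the coefficient of x in B^{(1,0,∅,0)}_{2n+1}(x) is A_{2n}(1) + B_{2n−1}(1).) -/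
section Aux

open Equiv

variable {n : ℕ}

/-- The auxiliary condition: `σ 0` is smaller than all entries at positions `1,…,2n-1`. -/
def Pc (n : ℕ) (σ : Equiv.Perm (Fin (2*n+1))) : Prop :=
  ∀ i : Fin (2*n+1), 0 < i.val → i.val < 2*n → σ 0 < σ i

lemma matches_zero (hn : 1 ≤ n) {σ : Equiv.Perm (Fin (2*n+1))} (hσ : UpDown σ) :
    Matches1 σ (0 : Fin (2*n+1)) := by
  constructor
  · have h01 : (0 : Fin (2*n+1)).val + 1 < 2*n+1 := by simp; omega
    refine ⟨⟨(0 : Fin (2*n+1)).val + 1, h01⟩, ?_, ?_⟩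
    · simp [Fin.lt_def]
    · have := hσ 0 h01
      simpa using this
  · rintro ⟨j, hj, -⟩
    exact absurd hj (by simp [Fin.lt_def])

lemma mmp1_eq_one_iff (hn : 1 ≤ n) {σ : Equiv.Perm (Fin (2*n+1))} (hσ : UpDown σ) :
    mmp1 σ = 1 ↔ Pc n σ := by
  have h0 := matches_zero hn hσ
  have hset : mmp1 σ = 1 ↔ {i | Matches1 σ i} = {(0 : Fin (2*n+1))} := by
    constructor
    · intro h
      obtain ⟨a, ha⟩ := Set.ncard_eq_one.mp h
      have h0a : (0 : Fin (2*n+1)) ∈ ({a} : Set (Fin (2*n+1))) := ha ▸ h0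
      simp only [Set.mem_singleton_iff] at h0a
      rw [ha, ← h0a]
    · intro h; rw [mmp1, h]; simp
  rw [hset]
  constructor
  · -- set = {0} → Pc
    intro h i hi1 hi2
    by_contra hlt
    have hne : σ i ≠ σ 0 := fun he => by
      have := σ.injective he
      rw [this] at hi1; simp at hi1
    have hlt' : σ i < σ 0 := lt_of_le_of_ne (not_lt.mp hlt) hne
    obtain ⟨m, hm_mem, hmin⟩ := Finset.exists_min_image (Finset.Iic i) σ ⟨i, by simp⟩
    have hmi : m ≤ i := Finset.mem_Iic.mp hm_mem
    have hm_le : ∀ j : Fin (2*n+1), j ≤ i → σ m ≤ σ j := fun j hj =>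
      hmin j (Finset.mem_Iic.mpr hj)
    have hm0 : σ m < σ 0 := lt_of_le_of_lt (hm_le i le_rfl) hlt'
    have hmne0 : m.val ≠ 0 := by
      intro hv
      have : m = 0 := Fin.ext hv
      rw [this] at hm0; exact lt_irrefl _ hm0
    have hmeven : Even m.val := by
      by_contra hodd
      have h1m : 1 ≤ m.val := Nat.one_le_iff_ne_zero.mpr hmne0
      have hb : (m.val - 1) + 1 < 2*n+1 := by omega
      have key := hσ ⟨m.val - 1, by omega⟩ hb
      have hevm' : Even (m.val - 1 : ℕ) := by
        rcases Nat.even_or_odd m.val with h | h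
        · exact absurd h hodd
        · obtain ⟨k, hk⟩ := h; exact ⟨k, by omega⟩
      rw [if_pos hevm'] at key
      have hmm : (⟨(m.val - 1) + 1, hb⟩ : Fin (2*n+1)) = m := Fin.ext (by simp; omega)
      rw [hmm] at key
      have hle : σ m ≤ σ ⟨m.val - 1, by omega⟩ :=
        hm_le _ (by rw [Fin.le_def]; simp; rw [Fin.le_def] at hmi; omega)
      exact absurd key (not_lt.mpr hle)
    have hmb : m.val + 1 < 2*n+1 := by
      have := hmi
      rw [Fin.le_def] at this
      omega
    have hmlt : σ m < σ ⟨m.val + 1, hmb⟩ := by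
      have := hσ m hmb
      rwa [if_pos hmeven] at this
    have hMm : Matches1 σ m := by
      constructor
      · exact ⟨⟨m.val + 1, hmb⟩, by simp [Fin.lt_def], hmlt⟩
      · rintro ⟨j, hj, hsj⟩
        have : σ m ≤ σ j := hm_le j (le_trans (le_of_lt hj) hmi)
        exact absurd hsj (not_lt.mpr this)
    have : m ∈ ({(0 : Fin (2*n+1))} : Set (Fin (2*n+1))) := h ▸ hMm
    simp only [Set.mem_singleton_iff] at this
    exact hmne0 (by rw [this]; simp)
  · -- Pc → set = {0}
    intro hP
    ext i
    simp only [Set.mem_setOf_eq, Set.mem_singleton_iff]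
    constructor
    · intro hM
      by_contra hne
      obtain ⟨⟨j, hij, hσij⟩, hno⟩ := hM
      have hi0 : 0 < i.val := by
        rcases Nat.eq_zero_or_pos i.val with h | h
        · exact absurd (Fin.ext h) hne
        · exact h
      have hi2n : i.val < 2*n := by
        rw [Fin.lt_def] at hij
        have := j.isLt
        by_contra hge
        have : i.val = 2*n := by omega
        omega
      exact hno ⟨0, by rw [Fin.lt_def, Fin.val_zero]; exact hi0, hP i hi0 hi2n⟩
    · intro h; rw [h]; exact h0


lemma ne_imp_val_ne {σ : Equiv.Perm (Fin (2*n+1))} {i j : Fin (2*n+1)} (h : i ≠ j) :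
    σ i ≠ σ j := fun he => h (σ.injective he)

lemma sigma0_cases (hn : 1 ≤ n) {σ : Equiv.Perm (Fin (2*n+1))} (hσ : UpDown σ) (hP : Pc n σ) :
    (σ 0).val = 0 ∨ (σ 0).val = 1 := by
  by_contra hc
  push_neg at hc
  obtain ⟨hc0, hc1⟩ := hc
  have key : ∀ v : Fin (2*n+1), v.val < (σ 0).val → (σ.symm v).val = 2*n := by
    intro v hv
    have hsv : σ (σ.symm v) = v := σ.apply_symm_apply v
    have hne0 : (σ.symm v) ≠ 0 := by
      intro he
      rw [he] at hsv
      rw [hsv] at hv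
      exact lt_irrefl _ hv
    have h1 : 0 < (σ.symm v).val := by
      rcases Nat.eq_zero_or_pos (σ.symm v).val with h | h
      · exact absurd (Fin.ext h) hne0
      · exact h
    by_contra hne
    have h2 : (σ.symm v).val < 2*n := by have := (σ.symm v).isLt; omega
    have := hP (σ.symm v) h1 h2
    rw [hsv] at this
    rw [Fin.lt_def] at this
    omega
  have hv0 : ((⟨0, by omega⟩ : Fin (2*n+1))).val < (σ 0).val := by show 0 < (σ 0).val; omega
  have hv1 : ((⟨1, by omega⟩ : Fin (2*n+1))).val < (σ 0).val := by simp; omega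
  have e0 := key _ hv0
  have e1 := key _ hv1
  have : σ.symm ⟨0, by omega⟩ = σ.symm ⟨1, by omega⟩ := Fin.ext (by rw [e0, e1])
  have h01 := σ.symm.injective this
  have := congrArg Fin.val h01
  simp at this

lemma sigma_last (hn : 1 ≤ n) {σ : Equiv.Perm (Fin (2*n+1))} (hP : Pc n σ)
    (h0 : (σ 0).val = 1) : (σ ⟨2*n, by omega⟩).val = 0 := by
  set a := σ.symm ⟨0, by omega⟩ with ha
  have hsa : σ a = ⟨0, by omega⟩ := σ.apply_symm_apply _
  have hane : a ≠ 0 := by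
    intro he
    rw [he] at hsa
    rw [hsa] at h0
    simp at h0
  have h1 : 0 < a.val := by
    rcases Nat.eq_zero_or_pos a.val with h | h
    · exact absurd (Fin.ext h) hane
    · exact h
  have h2n : a.val = 2*n := by
    by_contra hne
    have h2 : a.val < 2*n := by have := a.isLt; omega
    have := hP a h1 h2
    rw [hsa, Fin.lt_def] at this
    simp at this
  have : a = ⟨2*n, by omega⟩ := Fin.ext h2n
  rw [← this, hsa]


lemma val_pos_of_ne_zero {σ : Equiv.Perm (Fin (2*n+1))} (h0 : (σ 0).val = 0)
    {i : Fin (2*n+1)} (hi : i.val ≠ 0) : 0 < (σ i).val := by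
  rcases Nat.eq_zero_or_pos (σ i).val with h | h
  · exfalso
    have : σ i = σ 0 := Fin.ext (by omega)
    exact hi (congrArg Fin.val (σ.injective this))
  · exact h

/-- Forward map for case A: strip off `σ 0 = 0` and shift down by one. -/
noncomputable def permA (hn : 1 ≤ n) (σ : Equiv.Perm (Fin (2*n+1)))
    (h0 : (σ 0).val = 0) : Equiv.Perm (Fin (2*n)) :=
  Equiv.ofBijective
    (fun i => ⟨(σ ⟨i.val + 1, by omega⟩).val - 1, by
      have := (σ ⟨i.val + 1, by omega⟩).isLt
      have hp := val_pos_of_ne_zero h0 (i := ⟨i.val + 1, by omega⟩) (by simp)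
      omega⟩)
    (Finite.injective_iff_bijective.mp (fun i j hij => by
      have hvi := val_pos_of_ne_zero h0 (i := ⟨i.val + 1, by omega⟩) (by simp)
      have hvj := val_pos_of_ne_zero h0 (i := ⟨j.val + 1, by omega⟩) (by simp)
      have h := congrArg Fin.val hij
      simp only [Fin.val_mk] at h
      have : (σ ⟨i.val + 1, by omega⟩).val = (σ ⟨j.val + 1, by omega⟩).val := by omega
      have := σ.injective (Fin.ext this)
      have := congrArg Fin.val this
      simp at this
      exact Fin.ext this))

lemma permA_val (hn : 1 ≤ n) (σ : Equiv.Perm (Fin (2*n+1))) (h0 : (σ 0).val = 0)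
    (i : Fin (2*n)) :
    (permA hn σ h0 i).val = (σ ⟨i.val + 1, by omega⟩).val - 1 := rfl

lemma permA_downUp (hn : 1 ≤ n) {σ : Equiv.Perm (Fin (2*n+1))} (hσ : UpDown σ)
    (h0 : (σ 0).val = 0) : DownUp (permA hn σ h0) := by
  intro i h
  have hb : (i.val + 1) + 1 < 2*n+1 := by omega
  have key := hσ ⟨i.val + 1, by omega⟩ hb
  have hp1 := val_pos_of_ne_zero h0 (i := ⟨i.val + 1, by omega⟩) (by simp)
  have hp2 := val_pos_of_ne_zero h0 (i := ⟨(i.val + 1) + 1, hb⟩) (by simp)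
  by_cases he : Even i.val
  · rw [if_pos he]
    have hne : ¬ Even ((⟨i.val + 1, by omega⟩ : Fin (2*n+1)).val) := by
      simp [Nat.even_add_one, he]
    rw [if_neg hne] at key
    rw [Fin.lt_def] at key ⊢
    rw [permA_val, permA_val]
    simp only [Fin.val_mk] at *
    omega
  · rw [if_neg he]
    have hev : Even ((⟨i.val + 1, by omega⟩ : Fin (2*n+1)).val) := by
      simp [Nat.even_add_one, he]
    rw [if_pos hev] at key
    rw [Fin.lt_def] at key ⊢
    rw [permA_val, permA_val]
    simp only [Fin.val_mk] at *
    omega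

/-- Backward map for case A. -/
noncomputable def permA' (hn : 1 ≤ n) (τ : Equiv.Perm (Fin (2*n))) :
    Equiv.Perm (Fin (2*n+1)) :=
  Equiv.ofBijective
    (fun i => if h : i.val = 0 then ⟨0, by omega⟩ else
      ⟨(τ ⟨i.val - 1, by have := i.isLt; omega⟩).val + 1, by
        have := (τ ⟨i.val - 1, by have := i.isLt; omega⟩).isLt; omega⟩)
    (Finite.injective_iff_bijective.mp (fun i j hij => by
      by_cases hi : i.val = 0 <;> by_cases hj : j.val = 0
      · exact Fin.ext (by omega)
      · rw [dif_pos hi, dif_neg hj] at hij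
        have := congrArg Fin.val hij
        simp at this
      · rw [dif_neg hi, dif_pos hj] at hij
        have := congrArg Fin.val hij
        simp at this
      · rw [dif_neg hi, dif_neg hj] at hij
        have := congrArg Fin.val hij
        simp only [Fin.val_mk, add_left_inj] at this
        have := τ.injective (Fin.ext this)
        have := congrArg Fin.val this
        simp at this
        exact Fin.ext (by omega)))

lemma permA'_val_zero (hn : 1 ≤ n) (τ : Equiv.Perm (Fin (2*n))) {i : Fin (2*n+1)}
    (hi : i.val = 0) : (permA' hn τ i).val = 0 := by
  show ((if h : i.val = 0 then _ else _ : Fin (2*n+1))).val = 0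
  rw [dif_pos hi]

lemma permA'_val_pos (hn : 1 ≤ n) (τ : Equiv.Perm (Fin (2*n))) {i : Fin (2*n+1)}
    (hi : i.val ≠ 0) :
    (permA' hn τ i).val = (τ ⟨i.val - 1, by have := i.isLt; omega⟩).val + 1 := by
  show ((if h : i.val = 0 then _ else _ : Fin (2*n+1))).val = _
  rw [dif_neg hi]

lemma permA'_upDown (hn : 1 ≤ n) {τ : Equiv.Perm (Fin (2*n))} (hτ : DownUp τ) :
    UpDown (permA' hn τ) := by
  intro i h
  rcases Nat.eq_zero_or_pos i.val with hi0 | hi0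
  · have he : Even i.val := by rw [hi0]; exact Even.zero
    rw [if_pos he]
    rw [Fin.lt_def, permA'_val_zero hn τ hi0, permA'_val_pos hn τ (by simp : ((⟨i.val+1, h⟩ : Fin (2*n+1))).val ≠ 0)]
    omega
  · -- i.val = k+1
    have hk : i.val - 1 < 2*n - 1 := by omega
    have hb : (i.val - 1) + 1 < 2*n := by omega
    have key := hτ ⟨i.val - 1, by omega⟩ hb
    have e1 : (permA' hn τ i).val = (τ ⟨i.val - 1, by omega⟩).val + 1 :=
      permA'_val_pos hn τ (by omega)
    have e2 : (permA' hn τ ⟨i.val + 1, h⟩).val = (τ ⟨i.val, by omega⟩).val + 1 := by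
      rw [permA'_val_pos hn τ (by simp)]
      norm_num
    have hidx : (⟨(i.val - 1) + 1, hb⟩ : Fin (2*n)) = ⟨i.val, by omega⟩ :=
      Fin.ext (by simp; omega)
    rw [hidx] at key
    by_cases he : Even i.val
    · rw [if_pos he]
      have hne : ¬ Even ((⟨i.val - 1, by omega⟩ : Fin (2*n)).val) := by
        simp only [Fin.val_mk]
        rw [Nat.even_iff] at he ⊢
        omega
      rw [if_neg hne] at key
      rw [Fin.lt_def] at key ⊢
      omega
    · rw [if_neg he]
      have hev : Even ((⟨i.val - 1, by omega⟩ : Fin (2*n)).val) := by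
        simp only [Fin.val_mk]
        rw [Nat.even_iff] at he ⊢
        omega
      rw [if_pos hev] at key
      rw [Fin.lt_def] at key ⊢
      omega


lemma permA'_zero_val (hn : 1 ≤ n) (τ : Equiv.Perm (Fin (2*n))) :
    ((permA' hn τ) 0).val = 0 := permA'_val_zero hn τ (by simp)

lemma permA'_Pc (hn : 1 ≤ n) (τ : Equiv.Perm (Fin (2*n))) : Pc n (permA' hn τ) := by
  intro i hi1 hi2
  rw [Fin.lt_def, permA'_zero_val hn τ, permA'_val_pos hn τ (by omega)]
  omega

/-- The equivalence for case A. -/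
noncomputable def equivA (hn : 1 ≤ n) :
    {σ : Equiv.Perm (Fin (2*n+1)) // UpDown σ ∧ Pc n σ ∧ (σ 0).val = 0} ≃
    {τ : Equiv.Perm (Fin (2*n)) // DownUp τ} where
  toFun s := ⟨permA hn s.1 s.2.2.2, permA_downUp hn s.2.1 s.2.2.2⟩
  invFun t := ⟨permA' hn t.1, permA'_upDown hn t.2, permA'_Pc hn t.1, permA'_zero_val hn t.1⟩
  left_inv s := by
    obtain ⟨σ, hσ, hP, h0⟩ := s
    apply Subtype.ext
    apply Equiv.ext
    intro i
    apply Fin.ext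
    rcases Nat.eq_zero_or_pos i.val with hi | hi
    · rw [permA'_val_zero hn _ hi]
      have : i = 0 := Fin.ext (by simpa using hi)
      rw [this, h0]
    · rw [permA'_val_pos hn _ (by omega), permA_val]
      have hpos := val_pos_of_ne_zero h0 (i := ⟨(i.val - 1) + 1, by have := i.isLt; omega⟩) (by simp)
      have hidx : (⟨(i.val - 1) + 1, by have := i.isLt; omega⟩ : Fin (2*n+1)) = i :=
        Fin.ext (by simp; omega)
      simp only [Fin.val_mk] at hpos ⊢
      rw [show (⟨i.val - 1 + 1, by have := i.isLt; omega⟩ : Fin (2*n+1)) = i from Fin.ext (by simp; omega)] at hpos ⊢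
      omega
  right_inv t := by
    obtain ⟨τ, hτ⟩ := t
    apply Subtype.ext
    apply Equiv.ext
    intro i
    apply Fin.ext
    rw [permA_val, permA'_val_pos hn _ (by simp)]
    have hidx : (⟨(⟨i.val + 1, by omega⟩ : Fin (2*n+1)).val - 1, by omega⟩ : Fin (2*n)) = i :=
      Fin.ext (by simp)
    rw [hidx]
    omega


lemma val_ge_two (hn : 1 ≤ n) {σ : Equiv.Perm (Fin (2*n+1))} (h0 : (σ 0).val = 1)
    (hlast : (σ ⟨2*n, by omega⟩).val = 0) {i : Fin (2*n+1)} (hi0 : i.val ≠ 0)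
    (hi2n : i.val ≠ 2*n) : 2 ≤ (σ i).val := by
  by_contra hlt
  push_neg at hlt
  interval_cases hv : (σ i).val
  · have : σ i = σ ⟨2*n, by omega⟩ := Fin.ext (by omega)
    have := congrArg Fin.val (σ.injective this)
    simp at this
    exact hi2n this
  · have : σ i = σ 0 := Fin.ext (by omega)
    have := congrArg Fin.val (σ.injective this)
    simp at this
    exact hi0 (by simp [this])

/-- Forward map for case B. -/
noncomputable def permB (hn : 1 ≤ n) (σ : Equiv.Perm (Fin (2*n+1)))
    (h0 : (σ 0).val = 1) (hlast : (σ ⟨2*n, by omega⟩).val = 0) :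
    Equiv.Perm (Fin (2*n-1)) :=
  Equiv.ofBijective
    (fun i => ⟨(σ ⟨i.val + 1, by have := i.isLt; omega⟩).val - 2, by
      have := (σ ⟨i.val + 1, by have := i.isLt; omega⟩).isLt
      have := i.isLt
      omega⟩)
    (Finite.injective_iff_bijective.mp (fun i j hij => by
      have hvi := val_ge_two hn h0 hlast (i := ⟨i.val + 1, by have := i.isLt; omega⟩)
        (by simp) (by have := i.isLt; simp; omega)
      have hvj := val_ge_two hn h0 hlast (i := ⟨j.val + 1, by have := j.isLt; omega⟩)
        (by simp) (by have := j.isLt; simp; omega)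
      have h := congrArg Fin.val hij
      simp only [Fin.val_mk] at h
      have : (σ ⟨i.val + 1, by have := i.isLt; omega⟩).val
          = (σ ⟨j.val + 1, by have := j.isLt; omega⟩).val := by omega
      have := σ.injective (Fin.ext this)
      have := congrArg Fin.val this
      simp at this
      exact Fin.ext this))

lemma permB_val (hn : 1 ≤ n) (σ : Equiv.Perm (Fin (2*n+1))) (h0 : (σ 0).val = 1)
    (hlast : (σ ⟨2*n, by omega⟩).val = 0) (i : Fin (2*n-1)) :
    (permB hn σ h0 hlast i).val = (σ ⟨i.val + 1, by have := i.isLt; omega⟩).val - 2 := rfl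

lemma permB_downUp (hn : 1 ≤ n) {σ : Equiv.Perm (Fin (2*n+1))} (hσ : UpDown σ)
    (h0 : (σ 0).val = 1) (hlast : (σ ⟨2*n, by omega⟩).val = 0) :
    DownUp (permB hn σ h0 hlast) := by
  intro i h
  have hi : i.val + 1 < 2*n - 1 := h
  have hb : (i.val + 1) + 1 < 2*n+1 := by omega
  have key := hσ ⟨i.val + 1, by omega⟩ hb
  have hp1 := val_ge_two hn h0 hlast (i := ⟨i.val + 1, by omega⟩) (by simp) (by simp; omega)
  have hp2 := val_ge_two hn h0 hlast (i := ⟨(i.val + 1) + 1, hb⟩) (by simp) (by simp; omega)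
  rw [Fin.lt_def, Fin.lt_def, permB_val, permB_val]
  simp only [Fin.val_mk] at *
  by_cases he : Even i.val
  · rw [if_pos he]
    rw [if_neg (by simp [Nat.even_add_one, he])] at key
    rw [Fin.lt_def] at key
    omega
  · rw [if_neg he]
    rw [if_pos (by simp [Nat.even_add_one, he])] at key
    rw [Fin.lt_def] at key
    omega

/-- Underlying function of the backward map for case B. -/
noncomputable def fB' (hn : 1 ≤ n) (τ : Equiv.Perm (Fin (2*n-1))) :
    Fin (2*n+1) → Fin (2*n+1) := fun i =>
  if h0 : i.val = 0 then ⟨1, by omega⟩ else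
  if h2 : i.val = 2*n then ⟨0, by omega⟩ else
  ⟨(τ ⟨i.val - 1, by have := i.isLt; omega⟩).val + 2, by
    have := (τ ⟨i.val - 1, by have := i.isLt; omega⟩).isLt; omega⟩

lemma fB'_val_zero (hn : 1 ≤ n) (τ : Equiv.Perm (Fin (2*n-1))) {i : Fin (2*n+1)}
    (hi : i.val = 0) : (fB' hn τ i).val = 1 := by
  unfold fB'
  rw [dif_pos hi]

lemma fB'_val_last (hn : 1 ≤ n) (τ : Equiv.Perm (Fin (2*n-1))) {i : Fin (2*n+1)}
    (hi : i.val = 2*n) : (fB' hn τ i).val = 0 := by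
  unfold fB'
  rw [dif_neg (by omega), dif_pos hi]

lemma fB'_val_mid (hn : 1 ≤ n) (τ : Equiv.Perm (Fin (2*n-1))) {i : Fin (2*n+1)}
    (hi0 : i.val ≠ 0) (hi2 : i.val ≠ 2*n) :
    (fB' hn τ i).val = (τ ⟨i.val - 1, by have := i.isLt; omega⟩).val + 2 := by
  unfold fB'
  rw [dif_neg hi0, dif_neg hi2]

lemma fB'_inj (hn : 1 ≤ n) (τ : Equiv.Perm (Fin (2*n-1))) :
    Function.Injective (fB' hn τ) := by
  intro i j hij
  have h := congrArg Fin.val hij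
  by_cases hi0 : i.val = 0 <;> by_cases hj0 : j.val = 0
  · exact Fin.ext (by omega)
  · by_cases hj2 : j.val = 2*n
    · rw [fB'_val_zero hn τ hi0, fB'_val_last hn τ hj2] at h
      omega
    · rw [fB'_val_zero hn τ hi0, fB'_val_mid hn τ hj0 hj2] at h
      omega
  · by_cases hi2 : i.val = 2*n
    · rw [fB'_val_last hn τ hi2, fB'_val_zero hn τ hj0] at h
      omega
    · rw [fB'_val_mid hn τ hi0 hi2, fB'_val_zero hn τ hj0] at h
      omega
  · by_cases hi2 : i.val = 2*n <;> by_cases hj2 : j.val = 2*n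
    · exact Fin.ext (by omega)
    · rw [fB'_val_last hn τ hi2, fB'_val_mid hn τ hj0 hj2] at h
      omega
    · rw [fB'_val_mid hn τ hi0 hi2, fB'_val_last hn τ hj2] at h
      omega
    · rw [fB'_val_mid hn τ hi0 hi2, fB'_val_mid hn τ hj0 hj2] at h
      have h' : (↑(τ ⟨i.val - 1, by have := i.isLt; omega⟩) : ℕ)
          = ↑(τ ⟨j.val - 1, by have := j.isLt; omega⟩) := by omega
      have h2 := congrArg Fin.val (τ.injective (Fin.ext h'))
      simp only [Fin.val_mk] at h2
      exact Fin.ext (by omega)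

/-- Backward map for case B. -/
noncomputable def permB' (hn : 1 ≤ n) (τ : Equiv.Perm (Fin (2*n-1))) :
    Equiv.Perm (Fin (2*n+1)) :=
  Equiv.ofBijective (fB' hn τ) (Finite.injective_iff_bijective.mp (fB'_inj hn τ))

lemma permB'_val_zero (hn : 1 ≤ n) (τ : Equiv.Perm (Fin (2*n-1))) {i : Fin (2*n+1)}
    (hi : i.val = 0) : (permB' hn τ i).val = 1 := fB'_val_zero hn τ hi

lemma permB'_val_last (hn : 1 ≤ n) (τ : Equiv.Perm (Fin (2*n-1))) {i : Fin (2*n+1)}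
    (hi : i.val = 2*n) : (permB' hn τ i).val = 0 := fB'_val_last hn τ hi

lemma permB'_val_mid (hn : 1 ≤ n) (τ : Equiv.Perm (Fin (2*n-1))) {i : Fin (2*n+1)}
    (hi0 : i.val ≠ 0) (hi2 : i.val ≠ 2*n) :
    (permB' hn τ i).val = (τ ⟨i.val - 1, by have := i.isLt; omega⟩).val + 2 :=
  fB'_val_mid hn τ hi0 hi2

lemma permB'_upDown (hn : 1 ≤ n) {τ : Equiv.Perm (Fin (2*n-1))} (hτ : DownUp τ) :
    UpDown (permB' hn τ) := by
  intro i h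
  rcases Nat.eq_zero_or_pos i.val with hi0 | hi0
  · rw [if_pos (by rw [hi0]; exact Even.zero)]
    rw [Fin.lt_def, permB'_val_zero hn τ hi0,
      permB'_val_mid hn τ (i := ⟨i.val+1, h⟩) (by simp) (by simp; omega)]
    omega
  · by_cases hlast : i.val + 1 = 2*n
    · -- last step: index i.val = 2n-1, odd
      have hodd : ¬ Even i.val := by rw [Nat.even_iff]; omega
      rw [if_neg hodd]
      rw [Fin.lt_def, permB'_val_last hn τ (i := ⟨i.val+1, h⟩) (by simpa using hlast),
        permB'_val_mid hn τ (by omega) (by omega)]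
      omega
    · have hi2 : i.val + 1 < 2*n := by have : i.val + 1 < 2*n+1 := h; omega
      have hb : (i.val - 1) + 1 < 2*n-1 := by omega
      have key := hτ ⟨i.val - 1, by omega⟩ hb
      have e1 : (permB' hn τ i).val = (τ ⟨i.val - 1, by omega⟩).val + 2 :=
        permB'_val_mid hn τ (by omega) (by omega)
      have e2 : (permB' hn τ ⟨i.val + 1, h⟩).val = (τ ⟨i.val, by omega⟩).val + 2 := by
        rw [permB'_val_mid hn τ (by simp) (by simp; omega)]
        norm_num
      rw [show (⟨(i.val - 1) + 1, hb⟩ : Fin (2*n-1)) = ⟨i.val, by omega⟩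
        from Fin.ext (by simp; omega)] at key
      by_cases he : Even i.val
      · rw [if_pos he]
        rw [if_neg (by simp only [Fin.val_mk]; rw [Nat.even_iff] at he ⊢; omega)] at key
        rw [Fin.lt_def] at key ⊢
        omega
      · rw [if_neg he]
        rw [if_pos (by simp only [Fin.val_mk]; rw [Nat.even_iff] at he ⊢; omega)] at key
        rw [Fin.lt_def] at key ⊢
        omega

lemma permB'_Pc (hn : 1 ≤ n) (τ : Equiv.Perm (Fin (2*n-1))) : Pc n (permB' hn τ) := by
  intro i hi1 hi2
  rw [Fin.lt_def, permB'_val_zero hn τ (by simp), permB'_val_mid hn τ (by omega) (by omega)]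
  omega

/-- The equivalence for case B. -/
noncomputable def equivB (hn : 1 ≤ n) :
    {σ : Equiv.Perm (Fin (2*n+1)) // UpDown σ ∧ Pc n σ ∧ (σ 0).val = 1} ≃
    {τ : Equiv.Perm (Fin (2*n-1)) // DownUp τ} where
  toFun s := ⟨permB hn s.1 s.2.2.2 (sigma_last hn s.2.2.1 s.2.2.2),
      permB_downUp hn s.2.1 s.2.2.2 (sigma_last hn s.2.2.1 s.2.2.2)⟩
  invFun t := ⟨permB' hn t.1, permB'_upDown hn t.2, permB'_Pc hn t.1,
      permB'_val_zero hn t.1 (by simp)⟩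
  left_inv s := by
    obtain ⟨σ, hσ, hP, h0⟩ := s
    have hlast := sigma_last hn hP h0
    apply Subtype.ext
    apply Equiv.ext
    intro i
    apply Fin.ext
    rcases Nat.eq_zero_or_pos i.val with hi | hi
    · rw [permB'_val_zero hn _ hi]
      have : i = 0 := Fin.ext (by simpa using hi)
      rw [this, h0]
    · by_cases hi2 : i.val = 2*n
      · rw [permB'_val_last hn _ hi2]
        rw [show i = ⟨2*n, by omega⟩ from Fin.ext hi2, hlast]
      · rw [permB'_val_mid hn _ (by omega) hi2, permB_val]
        have hge := val_ge_two hn h0 hlast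
          (i := ⟨(⟨i.val - 1, by have := i.isLt; omega⟩ : Fin (2*n-1)).val + 1,
            by have := i.isLt; simp; omega⟩) (by simp) (by simp; omega)
        simp only [Fin.val_mk] at hge ⊢
        rw [show (⟨i.val - 1 + 1, by have := i.isLt; omega⟩ : Fin (2*n+1)) = i
          from Fin.ext (by simp; omega)] at hge ⊢
        omega
  right_inv t := by
    obtain ⟨τ, hτ⟩ := t
    apply Subtype.ext
    apply Equiv.ext
    intro i
    apply Fin.ext
    rw [permB_val, permB'_val_mid hn _ (by simp) (by have := i.isLt; simp; omega)]
    simp only [Fin.val_mk]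
    rw [show (⟨i.val + 1 - 1, by have := i.isLt; omega⟩ : Fin (2*n-1)) = i
      from Fin.ext (by simp)]
    omega


lemma upDown_trans_rev {m : ℕ} {τ : Equiv.Perm (Fin m)} (hτ : DownUp τ) :
    UpDown (τ.trans Fin.revPerm) := by
  intro i h
  have key := hτ i h
  have e : ∀ x : Fin m, (τ.trans Fin.revPerm) x = (τ x).rev := fun x => rfl
  by_cases he : Even i.val
  · rw [if_pos he] at key ⊢
    rw [e, e, Fin.rev_lt_rev]
    exact key
  · rw [if_neg he] at key ⊢
    rw [e, e, Fin.rev_lt_rev]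
    exact key

lemma downUp_trans_rev {m : ℕ} {τ : Equiv.Perm (Fin m)} (hτ : UpDown τ) :
    DownUp (τ.trans Fin.revPerm) := by
  intro i h
  have key := hτ i h
  have e : ∀ x : Fin m, (τ.trans Fin.revPerm) x = (τ x).rev := fun x => rfl
  by_cases he : Even i.val
  · rw [if_pos he] at key ⊢
    rw [e, e, Fin.rev_lt_rev]
    exact key
  · rw [if_neg he] at key ⊢
    rw [e, e, Fin.rev_lt_rev]
    exact key

/-- The complementation equivalence between down-up and up-down permutations. -/
noncomputable def equivC (m : ℕ) :
    {τ : Equiv.Perm (Fin m) // DownUp τ} ≃ {τ : Equiv.Perm (Fin m) // UpDown τ} where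
  toFun t := ⟨t.1.trans Fin.revPerm, upDown_trans_rev t.2⟩
  invFun t := ⟨t.1.trans Fin.revPerm, downUp_trans_rev t.2⟩
  left_inv t := by
    apply Subtype.ext
    apply Equiv.ext
    intro i
    show ((t.1 i).rev).rev = t.1 i
    exact Fin.rev_rev _
  right_inv t := by
    apply Subtype.ext
    apply Equiv.ext
    intro i
    show ((t.1 i).rev).rev = t.1 i
    exact Fin.rev_rev _

lemma UDcount_eq (m : ℕ) : UDcount m = Nat.card {τ : Equiv.Perm (Fin m) // UpDown τ} := by
  rw [UDcount, ← Nat.card_coe_set_eq]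
  rfl

end Aux

theorem stmt8 (n : ℕ) (hn : 1 ≤ n) :
    {σ : Equiv.Perm (Fin (2*n+1)) | UpDown σ ∧ mmp1 σ = 1}.ncard
      = UDcount (2*n) + UDcount (2*n - 1) := by
  classical
  have hset : {σ : Equiv.Perm (Fin (2*n+1)) | UpDown σ ∧ mmp1 σ = 1}
      = {σ : Equiv.Perm (Fin (2*n+1)) | UpDown σ ∧ Pc n σ ∧ (σ 0).val = 0}
      ∪ {σ : Equiv.Perm (Fin (2*n+1)) | UpDown σ ∧ Pc n σ ∧ (σ 0).val = 1} := by
    ext σ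
    simp only [Set.mem_setOf_eq, Set.mem_union]
    constructor
    · rintro ⟨h1, h2⟩
      have hP := (mmp1_eq_one_iff hn h1).mp h2
      rcases sigma0_cases hn h1 hP with h | h
      · exact Or.inl ⟨h1, hP, h⟩
      · exact Or.inr ⟨h1, hP, h⟩
    · rintro (⟨h1, hP, -⟩ | ⟨h1, hP, -⟩) <;>
        exact ⟨h1, (mmp1_eq_one_iff hn h1).mpr hP⟩
  have hdisj : Disjoint
      {σ : Equiv.Perm (Fin (2*n+1)) | UpDown σ ∧ Pc n σ ∧ (σ 0).val = 0}
      {σ : Equiv.Perm (Fin (2*n+1)) | UpDown σ ∧ Pc n σ ∧ (σ 0).val = 1} := by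
    rw [Set.disjoint_left]
    rintro σ ⟨-, -, h0⟩ ⟨-, -, h1⟩
    omega
  rw [hset, Set.ncard_union_eq hdisj (Set.toFinite _) (Set.toFinite _)]
  congr 1
  · rw [UDcount_eq, ← Nat.card_coe_set_eq]
    exact Nat.card_congr ((equivA hn).trans (equivC (2*n)))
  · rw [UDcount_eq, ← Nat.card_coe_set_eq]
    exact Nat.card_congr ((equivB hn).trans (equivC (2*n-1)))
end

section
/- For every n ≥ 1, the number of down-up permutations σ of length 2n+1 with mmp^{(1,0,∅,0)}(σ) = 1 equals the number of up-down permutations of length 2n−1. (Equivalently, the coefficient of x in D^{(1,0,∅,0)}_{2n+1}(x) is B_{2n−1}(1).) -/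
set_option maxHeartbeats 2000000


lemma du_step {n : ℕ} (σ : Equiv.Perm (Fin n)) (hσ : DownUp σ) (k : ℕ) (hk : k + 1 < n)
    (hk' : k < n) :
    if Even k then σ ⟨k+1, hk⟩ < σ ⟨k, hk'⟩ else σ ⟨k, hk'⟩ < σ ⟨k+1, hk⟩ :=
  hσ ⟨k, hk'⟩ hk

lemma matches_one {n : ℕ} (hn : 1 ≤ n) (σ : Equiv.Perm (Fin (2*n+1))) (hσ : DownUp σ) :
    Matches1 σ ⟨1, by omega⟩ := by
  have h0 := du_step σ hσ 0 (by omega) (by omega)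
  have h1 := du_step σ hσ 1 (by omega) (by omega)
  rw [if_pos (by decide)] at h0
  rw [if_neg (by decide)] at h1
  constructor
  · exact ⟨⟨2, by omega⟩, by simp [Fin.lt_def], h1⟩
  · rintro ⟨j, hj, hj2⟩
    have hj0 : j = ⟨0, by omega⟩ := by
      apply Fin.ext
      simp only [Fin.lt_def, Fin.val_mk] at hj ⊢
      omega
    rw [hj0] at hj2
    exact absurd h0 (not_lt.mpr hj2.le)

lemma mmp1_char {n : ℕ} (hn : 1 ≤ n) (σ : Equiv.Perm (Fin (2*n+1))) (hσ : DownUp σ) :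
    mmp1 σ = 1 ↔ σ ⟨0, by omega⟩ = ⟨2*n, by omega⟩ ∧ σ ⟨1, by omega⟩ = ⟨0, by omega⟩ := by
  constructor
  · intro h
    obtain ⟨a, ha⟩ := Set.ncard_eq_one.mp h
    have h1mem : (⟨1, by omega⟩ : Fin (2*n+1)) ∈ {i | Matches1 σ i} := matches_one hn σ hσ
    rw [ha, Set.mem_singleton_iff] at h1mem
    constructor
    · by_contra hne
      obtain ⟨jm, hjm⟩ : ∃ j, σ j = ⟨2*n, by omega⟩ := ⟨σ.symm _, Equiv.apply_symm_apply _ _⟩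
      have hmax : Matches1 σ ⟨0, by omega⟩ := by
        constructor
        · refine ⟨jm, ?_, ?_⟩
          · have hne0 : jm ≠ ⟨0, by omega⟩ := fun hc => hne (hc ▸ hjm)
            have := Fin.val_ne_of_ne hne0
            simp only [Fin.lt_def, Fin.val_mk] at this ⊢
            omega
          · rw [hjm]
            have hlt : (σ ⟨0, by omega⟩).val < 2*n + 1 := (σ ⟨0, by omega⟩).isLt
            have hne' : (σ ⟨0, by omega⟩).val ≠ 2*n := by
              intro hc; exact hne (Fin.ext (by simp only [Fin.val_mk]; exact hc))
            simp only [Fin.lt_def, Fin.val_mk]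
            omega
        · rintro ⟨j, hj, -⟩
          simp only [Fin.lt_def, Fin.val_mk] at hj
          omega
      have h0mem : (⟨0, by omega⟩ : Fin (2*n+1)) ∈ {i | Matches1 σ i} := hmax
      rw [ha, Set.mem_singleton_iff] at h0mem
      rw [Fin.ext_iff] at h0mem h1mem
      simp only [Fin.val_mk] at h0mem h1mem
      omega
    · -- the minimum is at position 1
      obtain ⟨k, hkv⟩ : ∃ k, σ k = ⟨0, by omega⟩ := ⟨σ.symm _, Equiv.apply_symm_apply _ _⟩
      have hklast : k.val ≠ 2*n := by
        intro hc
        have hlast := du_step σ hσ (2*n-1) (by omega) (by omega)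
        rw [if_neg (by rw [Nat.even_iff]; omega)] at hlast
        have hk2 : (⟨2*n-1+1, by omega⟩ : Fin (2*n+1)) = k := by
          apply Fin.ext; simp only [Fin.val_mk]; omega
        rw [hk2, hkv] at hlast
        simp only [Fin.lt_def, Fin.val_mk] at hlast
        omega
      have hklt : k.val < 2*n := by have := k.isLt; omega
      have hkm : Matches1 σ k := by
        constructor
        · refine ⟨⟨k.val + 1, by omega⟩, by simp [Fin.lt_def], ?_⟩
          rw [hkv]
          have hne0 : σ ⟨k.val + 1, by omega⟩ ≠ ⟨0, by omega⟩ := by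
            rw [← hkv]
            intro hc
            have := Fin.val_eq_of_eq (σ.injective hc)
            simp only [Fin.val_mk] at this
            omega
          have := Fin.val_ne_of_ne hne0
          simp only [Fin.val_mk] at this
          simp only [Fin.lt_def, Fin.val_mk]
          omega
        · rintro ⟨j, hj, hj2⟩
          rw [hkv] at hj2
          simp only [Fin.lt_def, Fin.val_mk] at hj2
          omega
      have hkmem : k ∈ {i | Matches1 σ i} := hkm
      rw [ha, Set.mem_singleton_iff] at hkmem
      rw [hkmem, ← h1mem] at hkv
      exact hkv
  · rintro ⟨h0, h1⟩
    have hset : {i | Matches1 σ i} = {(⟨1, by omega⟩ : Fin (2*n+1))} := by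
      ext i
      simp only [Set.mem_setOf_eq, Set.mem_singleton_iff]
      constructor
      · rintro ⟨⟨j, hj, hj2⟩, hno⟩
        apply Fin.ext
        simp only [Fin.val_mk]
        by_contra hne
        rcases Nat.lt_or_ge i.val 1 with hi | hi
        · have hieq : i = ⟨0, by omega⟩ := Fin.ext (by simp only [Fin.val_mk]; omega)
          rw [hieq, h0] at hj2
          simp only [Fin.lt_def, Fin.val_mk] at hj2
          have := (σ j).isLt
          omega
        · have hi2 : 1 < i.val := by omega
          apply hno
          refine ⟨⟨1, by omega⟩, ?_, ?_⟩
          · simp only [Fin.lt_def, Fin.val_mk]; omega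
          · rw [h1]
            have hne0 : σ i ≠ ⟨0, by omega⟩ := by
              rw [← h1]; intro hc
              have := Fin.val_eq_of_eq (σ.injective hc)
              simp only [Fin.val_mk] at this
              omega
            have := Fin.val_ne_of_ne hne0
            simp only [Fin.val_mk] at this
            simp only [Fin.lt_def, Fin.val_mk]
            omega
      · rintro rfl
        exact matches_one hn σ hσ
    rw [mmp1, hset, Set.ncard_singleton]

lemma ud_step {n : ℕ} (τ : Equiv.Perm (Fin n)) (hτ : UpDown τ) (k : ℕ) (hk : k + 1 < n)
    (hk' : k < n) :
    if Even k then τ ⟨k, hk'⟩ < τ ⟨k+1, hk⟩ else τ ⟨k+1, hk⟩ < τ ⟨k, hk'⟩ :=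
  hτ ⟨k, hk'⟩ hk

section Bij
variable {n : ℕ}

def extFun (hn : 1 ≤ n) (τ : Equiv.Perm (Fin (2*n-1))) : Fin (2*n+1) → Fin (2*n+1) :=
  fun i =>
    if i.val = 0 then ⟨2*n, by omega⟩
    else if i.val = 1 then ⟨0, by omega⟩
    else ⟨2*n - 1 - (τ ⟨i.val - 2, by have := i.isLt; omega⟩).val, by omega⟩

lemma extFun_mid (hn : 1 ≤ n) (τ : Equiv.Perm (Fin (2*n-1))) (i : Fin (2*n+1))
    (h2 : 2 ≤ i.val) :
    extFun hn τ i = ⟨2*n - 1 - (τ ⟨i.val - 2, by have := i.isLt; omega⟩).val, by omega⟩ := by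
  unfold extFun
  rw [if_neg (by omega), if_neg (by omega)]

lemma extFun_inj (hn : 1 ≤ n) (τ : Equiv.Perm (Fin (2*n-1))) :
    Function.Injective (extFun hn τ) := by
  intro i j hij
  unfold extFun at hij
  split_ifs at hij with h1 h2 h3 h4 h5 h6 h7 h8 <;>
    rw [Fin.ext_iff] at hij ⊢ <;> simp only [Fin.val_mk] at hij ⊢
  · omega
  · omega
  · have := (τ ⟨j.val - 2, by have := j.isLt; omega⟩).isLt; omega
  · omega
  · omega
  · have := (τ ⟨j.val - 2, by have := j.isLt; omega⟩).isLt; omega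
  · have := (τ ⟨i.val - 2, by have := i.isLt; omega⟩).isLt; omega
  · have := (τ ⟨i.val - 2, by have := i.isLt; omega⟩).isLt; omega
  · have hb1 := (τ ⟨i.val - 2, by have := i.isLt; omega⟩).isLt
    have hb2 := (τ ⟨j.val - 2, by have := j.isLt; omega⟩).isLt
    have hv : (τ ⟨i.val - 2, by have := i.isLt; omega⟩).val
        = (τ ⟨j.val - 2, by have := j.isLt; omega⟩).val := by omega
    have := Fin.val_eq_of_eq (τ.injective (Fin.ext hv))
    simp only [Fin.val_mk] at this
    omega

noncomputable def extPerm (hn : 1 ≤ n) (τ : Equiv.Perm (Fin (2*n-1))) :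
    Equiv.Perm (Fin (2*n+1)) :=
  Equiv.ofBijective (extFun hn τ) (Finite.injective_iff_bijective.mp (extFun_inj hn τ))

lemma extPerm_apply (hn : 1 ≤ n) (τ : Equiv.Perm (Fin (2*n-1))) (i : Fin (2*n+1)) :
    extPerm hn τ i = extFun hn τ i := rfl

lemma extPerm_downUp (hn : 1 ≤ n) (τ : Equiv.Perm (Fin (2*n-1))) (hτ : UpDown τ) :
    DownUp (extPerm hn τ) := by
  intro i h
  rw [extPerm_apply, extPerm_apply]
  rcases Nat.lt_or_ge i.val 2 with hi | hi
  · rcases Nat.lt_or_ge i.val 1 with hi0 | hi1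
    · -- i = 0
      have h0 : i.val = 0 := by omega
      rw [if_pos (by rw [Nat.even_iff]; omega)]
      unfold extFun
      rw [if_neg (by simp only [Fin.val_mk]; omega), if_pos (by simp only [Fin.val_mk]; omega),
        if_pos (by omega)]
      simp only [Fin.lt_def, Fin.val_mk]
      omega
    · -- i = 1
      have h1 : i.val = 1 := by omega
      rw [if_neg (by rw [Nat.even_iff]; omega)]
      unfold extFun
      rw [if_neg (by omega), if_pos (by omega), if_neg (by simp only [Fin.val_mk]; omega),
        if_neg (by simp only [Fin.val_mk]; omega)]
      simp only [Fin.lt_def, Fin.val_mk]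
      have hb := (τ ⟨i.val + 1 - 2, by omega⟩).isLt
      omega
  · -- i ≥ 2
    have hlt : i.val + 1 < 2*n + 1 := h
    have hstep := ud_step τ hτ (i.val - 2) (by omega) (by omega)
    have hmk : (⟨i.val - 2 + 1, by omega⟩ : Fin (2*n-1)) = ⟨i.val + 1 - 2, by omega⟩ :=
      Fin.ext (by simp only [Fin.val_mk]; omega)
    rw [hmk] at hstep
    rw [extFun_mid hn τ i hi, extFun_mid hn τ ⟨i.val+1, h⟩ (by simp only [Fin.val_mk]; omega)]
    simp only [Fin.val_mk]
    have hb1 := (τ ⟨i.val - 2, by omega⟩).isLt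
    have hb2 := (τ ⟨i.val + 1 - 2, by omega⟩).isLt
    by_cases he : Even i.val
    · rw [if_pos he]
      rw [if_pos (by rw [Nat.even_iff] at he ⊢; omega)] at hstep
      simp only [Fin.lt_def] at hstep ⊢
      omega
    · rw [if_neg he]
      rw [if_neg (by rw [Nat.even_iff] at he ⊢; omega)] at hstep
      simp only [Fin.lt_def] at hstep ⊢
      omega

end Bij

section Fwd
variable {n : ℕ}

lemma mid_bounds (hn : 1 ≤ n) (σ : Equiv.Perm (Fin (2*n+1)))
    (hσ0 : σ ⟨0, by omega⟩ = ⟨2*n, by omega⟩) (hσ1 : σ ⟨1, by omega⟩ = ⟨0, by omega⟩)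
    (p : Fin (2*n+1)) (hp : 2 ≤ p.val) :
    1 ≤ (σ p).val ∧ (σ p).val ≤ 2*n - 1 := by
  have hne1 : σ p ≠ ⟨0, by omega⟩ := by
    rw [← hσ1]; intro hc
    have := Fin.val_eq_of_eq (σ.injective hc)
    simp only [Fin.val_mk] at this; omega
  have hne0 : σ p ≠ ⟨2*n, by omega⟩ := by
    rw [← hσ0]; intro hc
    have := Fin.val_eq_of_eq (σ.injective hc)
    simp only [Fin.val_mk] at this; omega
  have hb := (σ p).isLt
  have h1 := Fin.val_ne_of_ne hne1
  have h0 := Fin.val_ne_of_ne hne0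
  simp only [Fin.val_mk] at h1 h0
  omega

def midFun (hn : 1 ≤ n) (σ : Equiv.Perm (Fin (2*n+1)))
    (hσ1 : σ ⟨1, by omega⟩ = ⟨0, by omega⟩) : Fin (2*n-1) → Fin (2*n-1) :=
  fun i => ⟨2*n - 1 - (σ ⟨i.val + 2, by have := i.isLt; omega⟩).val, by
    have hi := i.isLt
    have hne1 : σ ⟨i.val + 2, by omega⟩ ≠ ⟨0, by omega⟩ := by
      rw [← hσ1]; intro hc
      have := Fin.val_eq_of_eq (σ.injective hc)
      simp only [Fin.val_mk] at this; omega
    have h1 := Fin.val_ne_of_ne hne1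
    simp only [Fin.val_mk] at h1
    omega⟩

lemma midFun_inj (hn : 1 ≤ n) (σ : Equiv.Perm (Fin (2*n+1)))
    (hσ0 : σ ⟨0, by omega⟩ = ⟨2*n, by omega⟩) (hσ1 : σ ⟨1, by omega⟩ = ⟨0, by omega⟩) :
    Function.Injective (midFun hn σ hσ1) := by
  intro i j hij
  unfold midFun at hij
  rw [Fin.ext_iff] at hij
  simp only [Fin.val_mk] at hij
  have hb1 := mid_bounds hn σ hσ0 hσ1 ⟨i.val + 2, by have := i.isLt; omega⟩ (by
    simp only [Fin.val_mk]; omega)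
  have hb2 := mid_bounds hn σ hσ0 hσ1 ⟨j.val + 2, by have := j.isLt; omega⟩ (by
    simp only [Fin.val_mk]; omega)
  have hv : (σ ⟨i.val + 2, by have := i.isLt; omega⟩).val
      = (σ ⟨j.val + 2, by have := j.isLt; omega⟩).val := by omega
  have := Fin.val_eq_of_eq (σ.injective (Fin.ext hv))
  simp only [Fin.val_mk] at this
  exact Fin.ext (by omega)

noncomputable def midPerm (hn : 1 ≤ n) (σ : Equiv.Perm (Fin (2*n+1)))
    (hσ0 : σ ⟨0, by omega⟩ = ⟨2*n, by omega⟩) (hσ1 : σ ⟨1, by omega⟩ = ⟨0, by omega⟩) :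
    Equiv.Perm (Fin (2*n-1)) :=
  Equiv.ofBijective (midFun hn σ hσ1)
    (Finite.injective_iff_bijective.mp (midFun_inj hn σ hσ0 hσ1))

lemma midPerm_apply (hn : 1 ≤ n) (σ : Equiv.Perm (Fin (2*n+1))) (hσ0) (hσ1) (i : Fin (2*n-1)) :
    midPerm hn σ hσ0 hσ1 i = midFun hn σ hσ1 i := rfl

lemma midPerm_upDown (hn : 1 ≤ n) (σ : Equiv.Perm (Fin (2*n+1)))
    (hσ : DownUp σ) (hσ0) (hσ1) :
    UpDown (midPerm hn σ hσ0 hσ1) := by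
  intro i h
  rw [midPerm_apply, midPerm_apply]
  unfold midFun
  simp only [Fin.val_mk]
  have hilt := i.isLt
  have hstep := du_step σ hσ (i.val + 2) (by omega) (by omega)
  have hmk : (⟨i.val + 2 + 1, by omega⟩ : Fin (2*n+1)) = ⟨i.val + 1 + 2, by omega⟩ :=
    Fin.ext (by simp only [Fin.val_mk]; try omega)
  rw [hmk] at hstep
  have hb1 := mid_bounds hn σ hσ0 hσ1 ⟨i.val + 2, by omega⟩ (by simp only [Fin.val_mk]; omega)
  have hb2 := mid_bounds hn σ hσ0 hσ1 ⟨i.val + 1 + 2, by omega⟩ (by simp only [Fin.val_mk]; omega)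
  by_cases he : Even i.val
  · rw [if_pos he]
    rw [if_pos (by rw [Nat.even_iff] at he ⊢; omega)] at hstep
    simp only [Fin.lt_def, Fin.val_mk] at hstep ⊢
    omega
  · rw [if_neg he]
    rw [if_neg (by rw [Nat.even_iff] at he ⊢; omega)] at hstep
    simp only [Fin.lt_def, Fin.val_mk] at hstep ⊢
    omega

lemma extPerm_val0 (hn : 1 ≤ n) (τ : Equiv.Perm (Fin (2*n-1))) :
    extPerm hn τ ⟨0, by omega⟩ = ⟨2*n, by omega⟩ := by
  rw [extPerm_apply]; unfold extFun
  rw [if_pos (by simp only [Fin.val_mk])]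

lemma extPerm_val1 (hn : 1 ≤ n) (τ : Equiv.Perm (Fin (2*n-1))) :
    extPerm hn τ ⟨1, by omega⟩ = ⟨0, by omega⟩ := by
  rw [extPerm_apply]; unfold extFun
  rw [if_neg (by simp only [Fin.val_mk]; omega), if_pos (by simp only [Fin.val_mk])]

lemma midPerm_extPerm (hn : 1 ≤ n) (τ : Equiv.Perm (Fin (2*n-1))) :
    midPerm hn (extPerm hn τ) (extPerm_val0 hn τ) (extPerm_val1 hn τ) = τ := by
  apply Equiv.ext
  intro i
  rw [midPerm_apply]
  unfold midFun
  apply Fin.ext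
  simp only [Fin.val_mk]
  have hilt := i.isLt
  have hval := Fin.val_eq_of_eq
    (congrArg (extPerm hn τ) (rfl : (⟨i.val + 2, by omega⟩ : Fin (2*n+1)) = ⟨i.val + 2, by omega⟩))
  have hmid := Fin.val_eq_of_eq
    (extFun_mid hn τ ⟨i.val + 2, by omega⟩ (by simp only [Fin.val_mk]; omega))
  simp only [Fin.val_mk] at hmid
  have harg : (⟨i.val + 2 - 2, by omega⟩ : Fin (2*n-1)) = i :=
    Fin.ext (by simp only [Fin.val_mk]; omega)
  rw [harg] at hmid
  have hb := (τ i).isLt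
  rw [extPerm_apply]
  omega

end Fwd

theorem stmt10 (n : ℕ) (hn : 1 ≤ n) :
    {σ : Equiv.Perm (Fin (2*n+1)) | DownUp σ ∧ mmp1 σ = 1}.ncard
      = UDcount (2*n - 1) := by
  have hset : {σ : Equiv.Perm (Fin (2*n+1)) | DownUp σ ∧ mmp1 σ = 1}
      = {σ : Equiv.Perm (Fin (2*n+1)) | DownUp σ ∧ σ ⟨0, by omega⟩ = ⟨2*n, by omega⟩
          ∧ σ ⟨1, by omega⟩ = ⟨0, by omega⟩} := by
    ext σ
    simp only [Set.mem_setOf_eq]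
    constructor
    · rintro ⟨hdu, hm⟩; exact ⟨hdu, (mmp1_char hn σ hdu).mp hm⟩
    · rintro ⟨hdu, h01⟩; exact ⟨hdu, (mmp1_char hn σ hdu).mpr h01⟩
  rw [hset, UDcount, ← Nat.card_coe_set_eq, ← Nat.card_coe_set_eq]
  refine Nat.card_eq_of_bijective
    (fun s => ⟨midPerm hn s.1 s.2.2.1 s.2.2.2, midPerm_upDown hn s.1 s.2.1 s.2.2.1 s.2.2.2⟩)
    ⟨?_, ?_⟩
  · rintro ⟨σ, hdu, h0, h1⟩ ⟨σ', hdu', h0', h1'⟩ heq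
    simp only [Subtype.mk.injEq] at heq
    apply Subtype.ext
    show σ = σ'
    have key : ∀ i : Fin (2*n-1),
        σ ⟨i.val + 2, by have := i.isLt; omega⟩ = σ' ⟨i.val + 2, by have := i.isLt; omega⟩ := by
      intro i
      have hi := Equiv.ext_iff.mp heq i
      rw [midPerm_apply, midPerm_apply] at hi
      unfold midFun at hi
      rw [Fin.ext_iff] at hi
      simp only [Fin.val_mk] at hi
      have hb1 := mid_bounds hn σ h0 h1 ⟨i.val + 2, by have := i.isLt; omega⟩
        (by simp only [Fin.val_mk]; omega)
      have hb2 := mid_bounds hn σ' h0' h1' ⟨i.val + 2, by have := i.isLt; omega⟩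
        (by simp only [Fin.val_mk]; omega)
      exact Fin.ext (by omega)
    apply Equiv.ext
    intro j
    have hjlt := j.isLt
    rcases Nat.lt_or_ge j.val 2 with hj | hj
    · rcases Nat.lt_or_ge j.val 1 with hj0 | hj1
      · have : j = ⟨0, by omega⟩ := Fin.ext (by simp only [Fin.val_mk]; omega)
        rw [this, h0, h0']
      · have : j = ⟨1, by omega⟩ := Fin.ext (by simp only [Fin.val_mk]; omega)
        rw [this, h1, h1']
    · have hjj : j = ⟨(j.val - 2) + 2, by omega⟩ := Fin.ext (by simp only [Fin.val_mk]; omega)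
      rw [hjj]
      exact key ⟨j.val - 2, by omega⟩
  · rintro ⟨τ, hτ⟩
    refine ⟨⟨extPerm hn τ, extPerm_downUp hn τ hτ, extPerm_val0 hn τ, extPerm_val1 hn τ⟩, ?_⟩
    apply Subtype.ext
    exact midPerm_extPerm hn τ
end

section
/- For every n ≥ 1: every up-down permutation σ of length 2n+1 satisfies mmp^{(1,0,∅,0)}(σ) ≤ n, and the number of up-down permutations σ of length 2n+1 with mmp^{(1,0,∅,0)}(σ) = n equals (n+1)·(2n−1)!!. (Equivalently, the highest power of x appearing in B^{(1,0,∅,0)}_{2n+1}(x) is x^n, with coefficient (n+1)·(2n−1)!!.) -/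
/-- The odd double factorial `(2n−1)!! = ∏_{i=1}^{n} (2i−1)`. -/
def oddDF (n : ℕ) : ℕ := ∏ i ∈ Finset.range n, (2*i+1)

/-- The even double factorial `(2n)!! = ∏_{i=1}^{n} 2i`. -/
def evenDF (n : ℕ) : ℕ := ∏ i ∈ Finset.range n, (2*i+2)

def dbl {n : ℕ} (k : Fin n) : Fin (2*n+1) := ⟨2*k.1, by omega⟩

lemma dbl_inj {n : ℕ} : Function.Injective (dbl (n := n)) := by
  intro a b h
  have : 2*a.1 = 2*b.1 := congrArg Fin.val h
  exact Fin.ext (by omega)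

lemma updown_lt {n : ℕ} {σ : Equiv.Perm (Fin n)} (hσ : UpDown σ) (i : Fin n)
    (h : i.1 + 1 < n) (he : Even i.1) : σ i < σ ⟨i.1+1, h⟩ := by
  have := hσ i h
  rwa [if_pos he] at this

lemma updown_gt {n : ℕ} {σ : Equiv.Perm (Fin n)} (hσ : UpDown σ) (i : Fin n)
    (h : i.1 + 1 < n) (he : ¬ Even i.1) : σ ⟨i.1+1, h⟩ < σ i := by
  have := hσ i h
  rwa [if_neg he] at this

lemma matches_even_lt {n : ℕ} {σ : Equiv.Perm (Fin (2*n+1))} (hσ : UpDown σ) {i : Fin (2*n+1)}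
    (h : Matches1 σ i) : Even i.val ∧ i.val < 2*n := by
  constructor
  · by_contra ho
    obtain ⟨c, hc⟩ : Odd i.1 := Nat.not_even_iff_odd.mp ho
    have hi2 := i.2
    have hcb : 2*c < 2*n+1 := by omega
    have hje : Even (⟨2*c, hcb⟩ : Fin (2*n+1)).1 := ⟨c, two_mul c⟩
    have hlt : σ ⟨2*c, hcb⟩ < σ ⟨2*c+1, by omega⟩ := updown_lt hσ ⟨2*c, hcb⟩ (by show 2*c+1 < 2*n+1; omega) hje
    have hji : (⟨2*c+1, by omega⟩ : Fin (2*n+1)) = i := Fin.ext (by simp; omega)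
    rw [hji] at hlt
    exact h.2 ⟨⟨2*c, hcb⟩, Fin.lt_def.mpr (by simp; omega), hlt⟩
  · by_contra hge
    obtain ⟨j, hij, _⟩ := h.1
    have := j.2
    have := Fin.lt_def.mp hij
    omega

lemma matches_dbl_iff {n : ℕ} {σ : Equiv.Perm (Fin (2*n+1))} (hσ : UpDown σ) (k : Fin n) :
    Matches1 σ (dbl k) ↔ ∀ j, j < dbl k → σ (dbl k) < σ j := by
  constructor
  · intro h j hj
    have hne : σ j ≠ σ (dbl k) := fun he => (by
      have := σ.injective he
      exact absurd (this ▸ hj) (lt_irrefl _))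
    rcases lt_or_gt_of_ne hne with hlt | hgt
    · exact absurd ⟨j, hj, hlt⟩ h.2
    · exact hgt
  · intro hmin
    constructor
    · refine ⟨⟨2*k.1+1, by omega⟩, Fin.lt_def.mpr (by simp [dbl]), ?_⟩
      exact updown_lt hσ (dbl k) (by show 2*k.1+1 < 2*n+1; omega) ⟨k.1, two_mul k.1⟩
    · rintro ⟨j, hj, hlt⟩
      exact absurd hlt (not_lt_of_gt (hmin j hj))

lemma mmp1_eq {n : ℕ} {σ : Equiv.Perm (Fin (2*n+1))} (hσ : UpDown σ) :
    mmp1 σ = {k : Fin n | Matches1 σ (dbl k)}.ncard := by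
  have hset : {i : Fin (2*n+1) | Matches1 σ i} = dbl '' {k : Fin n | Matches1 σ (dbl k)} := by
    ext i
    constructor
    · intro hi
      obtain ⟨he, hlt⟩ := matches_even_lt hσ hi
      obtain ⟨c, hc⟩ := he
      have hcn : c < n := by omega
      have : i = dbl ⟨c, hcn⟩ := Fin.ext (by simp [dbl]; omega)
      refine ⟨⟨c, hcn⟩, ?_, this.symm⟩
      show Matches1 σ (dbl ⟨c, hcn⟩)
      rwa [← this]
    · rintro ⟨k, hk, rfl⟩
      exact hk
  rw [mmp1, hset, Set.ncard_image_of_injective _ dbl_inj]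

lemma mmp1_le {n : ℕ} {σ : Equiv.Perm (Fin (2*n+1))} (hσ : UpDown σ) : mmp1 σ ≤ n := by
  rw [mmp1_eq hσ]
  calc {k : Fin n | Matches1 σ (dbl k)}.ncard ≤ (Set.univ : Set (Fin n)).ncard :=
        Set.ncard_le_ncard (Set.subset_univ _) Set.finite_univ
    _ = n := by rw [Set.ncard_univ, Nat.card_eq_fintype_card, Fintype.card_fin]

lemma mmp1_eq_n_iff {n : ℕ} {σ : Equiv.Perm (Fin (2*n+1))} (hσ : UpDown σ) :
    mmp1 σ = n ↔ ∀ k l : Fin n, k < l → σ (dbl l) < σ (dbl k) := by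
  have huniv : (Set.univ : Set (Fin n)).ncard = n := by
    rw [Set.ncard_univ, Nat.card_eq_fintype_card, Fintype.card_fin]
  rw [mmp1_eq hσ]
  constructor
  · intro hcard k l hkl
    have : {k : Fin n | Matches1 σ (dbl k)} = Set.univ := by
      apply Set.eq_of_subset_of_ncard_le (Set.subset_univ _) (by rw [huniv, hcard])
        Set.finite_univ
    have hml : Matches1 σ (dbl l) := by
      have h' : l ∈ {k : Fin n | Matches1 σ (dbl k)} := by rw [this]; trivial
      exact h'
    have := (matches_dbl_iff hσ l).mp hml (dbl k)
      (Fin.lt_def.mpr (by simp [dbl]; omega))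
    exact this
  · intro hchain
    have : {k : Fin n | Matches1 σ (dbl k)} = Set.univ := by
      ext k
      simp only [Set.mem_setOf_eq, Set.mem_univ, iff_true]
      rw [matches_dbl_iff hσ]
      intro j hj
      have hjv : j.1 < 2*k.1 := Fin.lt_def.mp hj
      rcases Nat.even_or_odd j.1 with ⟨c, hc⟩ | ⟨c, hc⟩
      · have hcn : c < n := by omega
        have hje : j = dbl ⟨c, hcn⟩ := Fin.ext (by simp [dbl]; omega)
        rw [hje]
        exact hchain _ _ (Fin.lt_def.mpr (by simp; omega))
      · have hcn : c < n := by omega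
        have h1 : σ (dbl ⟨c, hcn⟩) < σ ⟨2*c+1, by omega⟩ :=
          updown_lt hσ (dbl ⟨c, hcn⟩) (by show 2*c+1 < 2*n+1; omega) ⟨c, two_mul c⟩
        have h2 : σ (dbl k) < σ (dbl ⟨c, hcn⟩) :=
          hchain _ _ (Fin.lt_def.mpr (by simp; omega))
        have hje : j = ⟨2*c+1, by omega⟩ := Fin.ext (by simp; omega)
        rw [hje]
        exact h2.trans h1
    rw [this, huniv]

open Finset Function

section PGsec

variable {N : ℕ}

def cmps {m : ℕ} (g : Fin m → Fin N × Fin N) : Fin m × Bool → Fin N :=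
  fun x => if x.2 then (g x.1).2 else (g x.1).1

def PG (m : ℕ) (s : Finset (Fin N)) (g : Fin m → Fin N × Fin N) : Prop :=
  Function.Injective (cmps g) ∧ (∀ x, cmps g x ∈ s) ∧
  (∀ i, (g i).1 < (g i).2) ∧ (∀ i j : Fin m, i < j → (g j).1 < (g i).1)

lemma PG_image {m : ℕ} {s : Finset (Fin N)} {g : Fin m → Fin N × Fin N}
    (hc : s.card = 2*m) (h : PG m s g) :
    Finset.image (cmps g) Finset.univ = s := by
  apply Finset.eq_of_subset_of_card_le
  · intro x hx
    simp only [mem_image] at hx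
    obtain ⟨y, _, rfl⟩ := hx
    exact h.2.1 y
  · rw [Finset.card_image_of_injective _ h.1, hc, card_univ]
    simp [Fintype.card_prod]
    omega

lemma PG_last_fst {m : ℕ} {s : Finset (Fin N)} {g : Fin (m+1) → Fin N × Fin N}
    (hc : s.card = 2*(m+1)) (h : PG (m+1) s g) (hne : s.Nonempty) :
    (g (Fin.last m)).1 = s.min' hne := by
  have himg := PG_image hc h
  have hm : s.min' hne ∈ Finset.image (cmps g) Finset.univ := himg ▸ s.min'_mem hne
  simp only [mem_image, mem_univ, true_and] at hm
  obtain ⟨⟨i, b⟩, hib⟩ := hm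
  cases b with
  | true =>
    exfalso
    have h1 : (g i).1 ∈ s := h.2.1 (i, false)
    have h2 : (g i).1 < (g i).2 := h.2.2.1 i
    have h3 : s.min' hne ≤ (g i).1 := s.min'_le _ h1
    have : (g i).2 = s.min' hne := hib
    exact absurd (this ▸ (h3.trans_lt h2)) (lt_irrefl _)
  | false =>
    have hib' : (g i).1 = s.min' hne := hib
    by_cases hi : i = Fin.last m
    · rw [← hi, hib']
    · exfalso
      have hlt : i < Fin.last m := lt_of_le_of_ne (Fin.le_last i) hi
      have h4 := h.2.2.2 i (Fin.last m) hlt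
      have h1 : (g (Fin.last m)).1 ∈ s := h.2.1 (Fin.last m, false)
      have h3 : s.min' hne ≤ (g (Fin.last m)).1 := s.min'_le _ h1
      rw [hib'] at h4
      exact absurd (h3.trans_lt h4) (lt_irrefl _)

lemma PG_init {m : ℕ} {s : Finset (Fin N)} {g : Fin (m+1) → Fin N × Fin N} {a q : Fin N}
    (h : PG (m+1) s g) (hlast : g (Fin.last m) = (a, q)) :
    PG m ((s.erase a).erase q) (Fin.init g) := by
  have hca : cmps g (Fin.last m, false) = a := by simp [cmps, hlast]
  have hcq : cmps g (Fin.last m, true) = q := by simp [cmps, hlast]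
  have hinit : ∀ (i : Fin m) (b : Bool), cmps (Fin.init g) (i, b) = cmps g (i.castSucc, b) := by
    intro i b
    simp [cmps, Fin.init]
  refine ⟨?_, ?_, ?_, ?_⟩
  · rintro ⟨i, b⟩ ⟨j, c⟩ heq
    rw [hinit, hinit] at heq
    have := h.1 heq
    simp only [Prod.mk.injEq] at this ⊢
    exact ⟨Fin.castSucc_injective _ this.1, this.2⟩
  · rintro ⟨i, b⟩
    rw [hinit]
    apply Finset.mem_erase.mpr
    constructor
    · intro hq
      have := h.1 (hq.trans hcq.symm)
      simp at this
    apply Finset.mem_erase.mpr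
    constructor
    · intro ha
      have := h.1 (ha.trans hca.symm)
      simp at this
    · exact h.2.1 _
  · intro i
    exact h.2.2.1 i.castSucc
  · intro i j hij
    exact h.2.2.2 i.castSucc j.castSucc (by simpa using hij)

lemma PG_snoc {m : ℕ} {s : Finset (Fin N)} {a q : Fin N}
    (ha : a ∈ s) (hq : q ∈ s) (haq : a < q)
    (hmin : ∀ x ∈ s, a ≤ x)
    {g' : Fin m → Fin N × Fin N} (h : PG m ((s.erase a).erase q) g') :
    PG (m+1) s (Fin.snoc g' (a, q)) := by
  set g : Fin (m+1) → Fin N × Fin N := Fin.snoc g' (a, q) with hg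
  have hcast : ∀ i : Fin m, g i.castSucc = g' i := fun i => Fin.snoc_castSucc _ _ i
  have hlast : g (Fin.last m) = (a, q) := Fin.snoc_last _ _
  have hc1 : ∀ (i : Fin m) (b : Bool), cmps g (i.castSucc, b) = cmps g' (i, b) := by
    intro i b; simp [cmps, hcast]
  have hc2 : ∀ b : Bool, cmps g (Fin.last m, b) = if b then q else a := by
    intro b; simp [cmps, hlast]
  have hne_q : ∀ x, cmps g' x ≠ q := fun x => (Finset.mem_erase.mp (h.2.1 x)).1
  have hmem_e : ∀ x, cmps g' x ∈ s.erase a := fun x => (Finset.mem_erase.mp (h.2.1 x)).2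
  have hne_a : ∀ x, cmps g' x ≠ a := fun x => (Finset.mem_erase.mp (hmem_e x)).1
  have hmem_s : ∀ x, cmps g' x ∈ s := fun x => (Finset.mem_erase.mp (hmem_e x)).2
  refine ⟨?_, ?_, ?_, ?_⟩
  · rintro ⟨x, b⟩ ⟨y, c⟩ heq
    rcases Fin.eq_castSucc_or_eq_last x with ⟨x', rfl⟩ | rfl <;>
      rcases Fin.eq_castSucc_or_eq_last y with ⟨y', rfl⟩ | rfl
    · rw [hc1, hc1] at heq
      have := h.1 heq
      simp only [Prod.mk.injEq] at this ⊢
      exact ⟨congrArg Fin.castSucc this.1, this.2⟩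
    · rw [hc1, hc2] at heq
      cases c
      · simp at heq; exact absurd heq (hne_a _)
      · simp at heq; exact absurd heq (hne_q _)
    · rw [hc2, hc1] at heq
      cases b
      · simp at heq; exact absurd heq.symm (hne_a _)
      · simp at heq; exact absurd heq.symm (hne_q _)
    · rw [hc2, hc2] at heq
      cases b <;> cases c
      · rfl
      · simp at heq; exact absurd heq (ne_of_lt haq)
      · simp at heq; exact absurd heq (ne_of_gt haq)
      · rfl
  · rintro ⟨x, b⟩
    rcases Fin.eq_castSucc_or_eq_last x with ⟨x', rfl⟩ | rfl
    · rw [hc1]; exact hmem_s _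
    · rw [hc2]; cases b
      · simpa using ha
      · simpa using hq
  · intro i
    rcases Fin.eq_castSucc_or_eq_last i with ⟨i', rfl⟩ | rfl
    · rw [hcast]; exact h.2.2.1 i'
    · rw [hlast]; exact haq
  · intro i j hij
    rcases Fin.eq_castSucc_or_eq_last j with ⟨j', rfl⟩ | rfl
    · have hi' : i < Fin.last m := hij.trans_le (Fin.le_last _)
      rcases Fin.eq_castSucc_or_eq_last i with ⟨i', rfl⟩ | rfl
      · rw [hcast, hcast]
        exact h.2.2.2 i' j' (by rwa [Fin.castSucc_lt_castSucc_iff] at hij)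
      · exact absurd hi' (lt_irrefl _)
    · rcases Fin.eq_castSucc_or_eq_last i with ⟨i', rfl⟩ | rfl
      · rw [hcast, hlast]
        have h1 : (g' i').1 ∈ s := hmem_s (i', false)
        have h2 : (g' i').1 ≠ a := hne_a (i', false)
        exact lt_of_le_of_ne (hmin _ h1) (Ne.symm h2)
      · exact absurd hij (lt_irrefl _)

attribute [local instance] Classical.propDecidable

lemma card_fiber {m : ℕ} {s : Finset (Fin N)} (hne : s.Nonempty)
    {q : Fin N} (hq : q ∈ s) (hqa : s.min' hne < q) :
    (univ.filter (fun g : Fin (m+1) → Fin N × Fin N =>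
        PG (m+1) s g ∧ g (Fin.last m) = (s.min' hne, q))).card
    = (univ.filter (fun g' : Fin m → Fin N × Fin N =>
        PG m ((s.erase (s.min' hne)).erase q) g')).card := by
  apply Finset.card_bij (fun g _ => Fin.init g)
  · intro g hg
    simp only [mem_filter, mem_univ, true_and] at hg ⊢
    exact PG_init hg.1 hg.2
  · intro g1 h1 g2 h2 heq
    simp only [mem_filter, mem_univ, true_and] at h1 h2
    have e1 : g1 = Fin.snoc (Fin.init g1) (g1 (Fin.last m)) := (Fin.snoc_init_self g1).symm
    rw [e1, heq, h1.2, ← h2.2, Fin.snoc_init_self]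
  · intro g' hg'
    simp only [mem_filter, mem_univ, true_and] at hg'
    refine ⟨Fin.snoc g' (s.min' hne, q), ?_, ?_⟩
    · simp only [mem_filter, mem_univ, true_and]
      exact ⟨PG_snoc (s.min'_mem hne) hq hqa (fun x hx => s.min'_le x hx) hg',
        Fin.snoc_last _ _⟩
    · exact Fin.init_snoc _ _

lemma card_PG : ∀ (m : ℕ) (s : Finset (Fin N)), s.card = 2*m →
    (univ.filter (fun g : Fin m → Fin N × Fin N => PG m s g)).card = oddDF m := by
  intro m
  induction m with
  | zero =>
    intro s hc
    have hall : ∀ g : Fin 0 → Fin N × Fin N, PG 0 s g := by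
      intro g
      refine ⟨fun x => x.1.elim0, fun x => x.1.elim0, fun i => i.elim0, fun i => i.elim0⟩
    rw [Finset.filter_true_of_mem (fun g _ => hall g), card_univ]
    simp [oddDF]
  | succ m ih =>
    intro s hc
    have hne : s.Nonempty := Finset.card_pos.mp (by omega)
    set a := s.min' hne with ha
    have hmem : ∀ g ∈ univ.filter (fun g : Fin (m+1) → Fin N × Fin N => PG (m+1) s g),
        (g (Fin.last m)).2 ∈ s.erase a := by
      intro g hg
      simp only [mem_filter, mem_univ, true_and] at hg
      refine Finset.mem_erase.mpr ⟨?_, hg.2.1 (Fin.last m, true)⟩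
      have h1 : (g (Fin.last m)).1 = a := PG_last_fst hc hg hne
      have h2 := hg.2.2.1 (Fin.last m)
      rw [h1] at h2
      exact ne_of_gt h2
    rw [Finset.card_eq_sum_card_fiberwise hmem]
    have hterm : ∀ q ∈ s.erase a,
        ((univ.filter (fun g : Fin (m+1) → Fin N × Fin N => PG (m+1) s g)).filter
          (fun g => (g (Fin.last m)).2 = q)).card = oddDF m := by
      intro q hqe
      have hq : q ∈ s := Finset.mem_of_mem_erase hqe
      have hqa : a < q := Finset.min'_lt_of_mem_erase_min' s hne hqe
      rw [Finset.filter_filter]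
      have heqf : Finset.filter (fun g : Fin (m+1) → Fin N × Fin N =>
          PG (m+1) s g ∧ (g (Fin.last m)).2 = q) univ
          = Finset.filter (fun g => PG (m+1) s g ∧ g (Fin.last m) = (a, q)) univ := by
        apply Finset.filter_congr
        intro g _
        constructor
        · rintro ⟨h1, h2⟩
          exact ⟨h1, Prod.ext (PG_last_fst hc h1 hne) h2⟩
        · rintro ⟨h1, h2⟩
          exact ⟨h1, by rw [h2]⟩
      rw [heqf, card_fiber hne hq hqa]
      apply ih
      rw [Finset.card_erase_of_mem (Finset.mem_erase.mpr ⟨ne_of_gt hqa, hq⟩),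
        Finset.card_erase_of_mem (s.min'_mem hne)]
      omega
    rw [Finset.sum_congr rfl hterm, Finset.sum_const,
      Finset.card_erase_of_mem (s.min'_mem hne), hc]
    simp only [oddDF, Finset.prod_range_succ, smul_eq_mul]
    have : 2 * (m+1) - 1 = 2*m+1 := by omega
    rw [this]
    ring

lemma card_PG_thr (m : ℕ) (s : Finset (Fin N)) (hc : s.card = 2*(m+1)) (hne : s.Nonempty)
    (t : Fin N) :
    (univ.filter (fun g : Fin (m+1) → Fin N × Fin N =>
        PG (m+1) s g ∧ t < (g (Fin.last m)).2)).card
    = ((s.erase (s.min' hne)).filter (fun q => t < q)).card * oddDF m := by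
  set a := s.min' hne with ha
  have hmem : ∀ g ∈ univ.filter (fun g : Fin (m+1) → Fin N × Fin N =>
      PG (m+1) s g ∧ t < (g (Fin.last m)).2),
      (g (Fin.last m)).2 ∈ (s.erase a).filter (fun q => t < q) := by
    intro g hg
    simp only [mem_filter, mem_univ, true_and] at hg
    refine Finset.mem_filter.mpr ⟨Finset.mem_erase.mpr ⟨?_, hg.1.2.1 (Fin.last m, true)⟩, hg.2⟩
    have h1 : (g (Fin.last m)).1 = a := PG_last_fst hc hg.1 hne
    have h2 := hg.1.2.2.1 (Fin.last m)
    rw [h1] at h2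
    exact ne_of_gt h2
  rw [Finset.card_eq_sum_card_fiberwise hmem]
  have hterm : ∀ q ∈ (s.erase a).filter (fun q => t < q),
      ((univ.filter (fun g : Fin (m+1) → Fin N × Fin N =>
        PG (m+1) s g ∧ t < (g (Fin.last m)).2)).filter
        (fun g => (g (Fin.last m)).2 = q)).card = oddDF m := by
    intro q hqe
    obtain ⟨hqe', htq⟩ := Finset.mem_filter.mp hqe
    have hq : q ∈ s := Finset.mem_of_mem_erase hqe'
    have hqa : a < q := Finset.min'_lt_of_mem_erase_min' s hne hqe'
    rw [Finset.filter_filter]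
    have heqf : Finset.filter (fun g : Fin (m+1) → Fin N × Fin N =>
        (PG (m+1) s g ∧ t < (g (Fin.last m)).2) ∧ (g (Fin.last m)).2 = q) univ
        = Finset.filter (fun g => PG (m+1) s g ∧ g (Fin.last m) = (a, q)) univ := by
      apply Finset.filter_congr
      intro g _
      constructor
      · rintro ⟨⟨h1, _⟩, h2⟩
        exact ⟨h1, Prod.ext (PG_last_fst hc h1 hne) h2⟩
      · rintro ⟨h1, h2⟩
        exact ⟨⟨h1, by rw [h2]; exact htq⟩, by rw [h2]⟩
    rw [heqf, card_fiber hne hq hqa]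
    apply card_PG
    rw [Finset.card_erase_of_mem (Finset.mem_erase.mpr ⟨ne_of_gt hqa, hq⟩),
      Finset.card_erase_of_mem (s.min'_mem hne)]
    omega
  rw [Finset.sum_congr rfl hterm, Finset.sum_const, smul_eq_mul]

end PGsec

attribute [local instance] Classical.propDecidable

section Assembly
variable (m : ℕ)
local notation "NN" => 2*(m+1)+1

def GT (x : (Fin (m+1) → Fin NN × Fin NN) × Fin NN) : Prop :=
  PG (m+1) (Finset.univ.erase x.2) x.1 ∧ x.2 < (x.1 (Fin.last m)).2

lemma erase_nonempty (w : Fin NN) : (Finset.univ.erase w).Nonempty := by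
  rw [← Finset.card_pos, Finset.card_erase_of_mem (Finset.mem_univ w), Finset.card_univ,
    Fintype.card_fin]
  omega

lemma erase_card (w : Fin NN) : (Finset.univ.erase w).card = 2*(m+1) := by
  rw [Finset.card_erase_of_mem (Finset.mem_univ w), Finset.card_univ, Fintype.card_fin]
  omega

lemma min'_erase_ne_zero {w : Fin NN} (hw : w.1 ≠ 0) :
    (Finset.univ.erase w).min' (erase_nonempty m w) = ⟨0, by omega⟩ := by
  apply le_antisymm
  · apply Finset.min'_le
    exact Finset.mem_erase.mpr ⟨fun h => hw (congrArg Fin.val h).symm, Finset.mem_univ _⟩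
  · exact Fin.mk_le_of_le_val (Nat.zero_le _)

lemma min'_erase_zero {w : Fin NN} (hw : w.1 = 0) :
    (Finset.univ.erase w).min' (erase_nonempty m w) = ⟨1, by omega⟩ := by
  apply le_antisymm
  · apply Finset.min'_le
    refine Finset.mem_erase.mpr ⟨fun h => ?_, Finset.mem_univ _⟩
    have := congrArg Fin.val h
    simp at this
    omega
  · apply Finset.le_min'
    intro y hy
    have h1 : y ≠ w := (Finset.mem_erase.mp hy).1
    have : y.1 ≠ 0 := fun h0 => h1 (Fin.ext (by omega))
    exact Fin.mk_le_of_le_val (by omega)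

lemma cval (w : Fin NN) :
    (((Finset.univ.erase w).erase
        ((Finset.univ.erase w).min' (erase_nonempty m w))).filter (fun q => w < q)).card
    = if w.1 = 0 then 2*(m+1) - 1 else 2*(m+1) - w.1 := by
  by_cases hw : w.1 = 0
  · rw [if_pos hw, min'_erase_zero m hw]
    have hset : ((Finset.univ.erase w).erase ⟨1, by omega⟩).filter (fun q => w < q)
        = Finset.Ioi (⟨1, by omega⟩ : Fin NN) := by
      ext q
      simp only [Finset.mem_filter, Finset.mem_erase, Finset.mem_univ, and_true,
        Finset.mem_Ioi, true_and]
      constructor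
      · rintro ⟨⟨h1, h2⟩, h3⟩
        rw [Fin.lt_def]
        have hq1 : q.1 ≠ 1 := fun h => h1 (Fin.ext h)
        have hqw : q.1 ≠ 0 := fun h => h2 (Fin.ext (by omega))
        simp only [Fin.lt_def] at *
        omega
      · intro h
        rw [Fin.lt_def] at h
        simp only [Fin.lt_def]
        refine ⟨⟨fun hq => ?_, fun hq => ?_⟩, by omega⟩
        · have := congrArg Fin.val hq; simp at this; omega
        · have := congrArg Fin.val hq; omega
    rw [hset, Fin.card_Ioi]
    show 2*(m+1)+1-1-1 = 2*(m+1)-1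
    omega
  · rw [if_neg hw, min'_erase_ne_zero m hw]
    have hset : ((Finset.univ.erase w).erase ⟨0, by omega⟩).filter (fun q => w < q)
        = Finset.Ioi w := by
      ext q
      simp only [Finset.mem_filter, Finset.mem_erase, Finset.mem_univ, and_true,
        Finset.mem_Ioi, true_and]
      constructor
      · rintro ⟨_, h3⟩
        exact h3
      · intro h
        rw [Fin.lt_def] at h
        refine ⟨⟨fun hq => ?_, fun hq => ?_⟩, h⟩
        · have : q.1 = 0 := congrArg Fin.val hq; omega
        · have := congrArg Fin.val hq; omega
    rw [hset, Fin.card_Ioi]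
    omega

lemma card_G : (Finset.univ.filter (GT m)).card = (m+2) * oddDF (m+1) := by
  have hmem : ∀ x ∈ Finset.univ.filter (GT m), Prod.snd x ∈ (Finset.univ : Finset (Fin NN)) :=
    fun x _ => Finset.mem_univ _
  rw [Finset.card_eq_sum_card_fiberwise hmem]
  have hterm : ∀ w : Fin NN,
      ((Finset.univ.filter (GT m)).filter (fun x => x.2 = w)).card
      = (if w.1 = 0 then 2*(m+1) - 1 else 2*(m+1) - w.1) * oddDF m := by
    intro w
    have hbij : ((Finset.univ.filter (GT m)).filter (fun x => x.2 = w)).card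
        = (Finset.univ.filter (fun g : Fin (m+1) → Fin NN × Fin NN =>
            PG (m+1) (Finset.univ.erase w) g ∧ w < (g (Fin.last m)).2)).card := by
      apply Finset.card_bij (fun x _ => x.1)
      · intro x hx
        simp only [Finset.mem_filter, Finset.mem_univ, true_and] at hx ⊢
        obtain ⟨⟨h1, h2⟩, h3⟩ := hx
        rw [h3] at h1 h2
        exact ⟨h1, h2⟩
      · intro x hx y hy heq
        simp only [Finset.mem_filter] at hx hy
        exact Prod.ext heq (hx.2.trans hy.2.symm)
      · intro g hg
        simp only [Finset.mem_filter, Finset.mem_univ, true_and] at hg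
        refine ⟨(g, w), ?_, rfl⟩
        simp only [Finset.mem_filter, Finset.mem_univ, true_and]
        exact ⟨⟨hg.1, hg.2⟩, trivial⟩
    rw [hbij, card_PG_thr m (Finset.univ.erase w) (erase_card m w) (erase_nonempty m w) w,
      cval m w]
  rw [Finset.sum_congr rfl (fun w _ => hterm w), ← Finset.sum_mul]
  have hsum : (∑ w : Fin NN, if w.1 = 0 then 2*(m+1) - 1 else 2*(m+1) - w.1)
      = (m+2) * (2*(m+1)-1) := by
    rw [Fin.sum_univ_eq_sum_range (fun k => if k = 0 then 2*(m+1) - 1 else 2*(m+1) - k),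
      Finset.sum_range_succ' (fun k => if k = 0 then 2*(m+1) - 1 else 2*(m+1) - k)]
    have h1 : ∀ k ∈ Finset.range (2*(m+1)),
        (if k+1 = 0 then 2*(m+1) - 1 else 2*(m+1) - (k+1)) = 2*(m+1) - 1 - k := by
      intro k _
      rw [if_neg (Nat.succ_ne_zero k)]
      omega
    rw [Finset.sum_congr rfl h1, Finset.sum_range_reflect (fun j => j) (2*(m+1))]
    have hg : (∑ j ∈ Finset.range (2*(m+1)), j) = (m+1) * (2*(m+1)-1) := by
      have h2 := Finset.sum_range_id_mul_two (2*(m+1))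
      have h4 : (m+1) * (2*(m+1)-1) * 2 = 2*(m+1) * (2*(m+1) - 1) := by
        have h3 : 2*(m+1) - 1 = 2*m+1 := by omega
        rw [h3]; ring
      exact Nat.eq_of_mul_eq_mul_right (by norm_num) (h2.trans h4.symm)
    rw [hg, if_pos rfl]
    have h3 : 2*(m+1) - 1 = 2*m+1 := by omega
    rw [h3]
    ring
  rw [hsum]
  have hodd : oddDF (m+1) = oddDF m * (2*m+1) := Finset.prod_range_succ _ m
  have h21 : 2*(m+1) - 1 = 2*m+1 := by omega
  rw [h21, hodd]
  ring
lemma hk2 {m : ℕ} (k : Fin (m+1)) : 2*k.1 < 2*(m+1)+1 := by have := k.2; omega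
lemma hk2' {m : ℕ} (k : Fin (m+1)) : 2*k.1+1 < 2*(m+1)+1 := by have := k.2; omega

def Cnd (f : Fin NN → Fin NN) : Prop :=
  (∀ k : Fin (m+1), f ⟨2*k.1, hk2 k⟩ < f ⟨2*k.1+1, hk2' k⟩) ∧
  (∀ k l : Fin (m+1), k < l → f ⟨2*l.1, hk2 l⟩ < f ⟨2*k.1, hk2 k⟩) ∧
  f ⟨2*(m+1), by omega⟩ < f ⟨2*m+1, by omega⟩

def Phi (x : (Fin (m+1) → Fin NN × Fin NN) × Fin NN) : Fin NN → Fin NN :=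
  fun j => if h : j.1 < 2*(m+1) then
      (if j.1 % 2 = 0 then (x.1 ⟨j.1/2, by omega⟩).1 else (x.1 ⟨j.1/2, by omega⟩).2)
    else x.2

lemma val_mk' {n a : ℕ} (h : a < n) : (⟨a, h⟩ : Fin n).1 = a := rfl

lemma Phi_even (x) (k : Fin (m+1)) : Phi m x ⟨2*k.1, hk2 k⟩ = (x.1 k).1 := by
  have hk := k.2
  simp only [Phi, val_mk']
  rw [dif_pos (by omega : 2*k.1 < 2*(m+1)), if_pos (by omega : 2*k.1 % 2 = 0)]
  exact congrArg (fun t => (x.1 t).1) (Fin.ext (show 2*k.1/2 = k.1 by omega))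

lemma Phi_odd (x) (k : Fin (m+1)) : Phi m x ⟨2*k.1+1, hk2' k⟩ = (x.1 k).2 := by
  have hk := k.2
  simp only [Phi, val_mk']
  rw [dif_pos (by omega : 2*k.1+1 < 2*(m+1)), if_neg (by omega : ¬ (2*k.1+1) % 2 = 0)]
  exact congrArg (fun t => (x.1 t).2) (Fin.ext (show (2*k.1+1)/2 = k.1 by omega))

lemma Phi_last (x) : Phi m x ⟨2*(m+1), by omega⟩ = x.2 := by
  simp only [Phi, val_mk']
  rw [dif_neg (by omega : ¬ 2*(m+1) < 2*(m+1))]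

lemma tricho (j : Fin NN) :
    (∃ k : Fin (m+1), j = ⟨2*k.1, hk2 k⟩) ∨ (∃ k : Fin (m+1), j = ⟨2*k.1+1, hk2' k⟩) ∨
    j = ⟨2*(m+1), by omega⟩ := by
  have hj := j.2
  by_cases hl : j.1 = 2*(m+1)
  · exact Or.inr (Or.inr (Fin.ext hl))
  · by_cases hp : j.1 % 2 = 0
    · exact Or.inl ⟨⟨j.1/2, by omega⟩, Fin.ext (show j.1 = 2*(j.1/2) by omega)⟩
    · exact Or.inr (Or.inl ⟨⟨j.1/2, by omega⟩, Fin.ext (show j.1 = 2*(j.1/2)+1 by omega)⟩)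

lemma image_Phi :
    Phi m '' {x | GT m x} = {f | Function.Bijective f ∧ Cnd m f} := by
  ext f
  constructor
  · rintro ⟨⟨g, w⟩, hx, rfl⟩
    have hPG : PG (m+1) (Finset.univ.erase w) g := hx.1
    have hne_w : ∀ z, cmps g z ≠ w := fun z => (Finset.mem_erase.mp (hPG.2.1 z)).1
    have hinj : Function.Injective (Phi m (g, w)) := by
      intro j j' heq
      rcases tricho m j with ⟨k, rfl⟩ | ⟨k, rfl⟩ | rfl <;>
        rcases tricho m j' with ⟨k', rfl⟩ | ⟨k', rfl⟩ | rfl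
      · rw [Phi_even, Phi_even] at heq
        have := hPG.1 (show cmps g (k, false) = cmps g (k', false) from heq)
        simp only [Prod.mk.injEq] at this
        rw [this.1]
      · rw [Phi_even, Phi_odd] at heq
        have := hPG.1 (show cmps g (k, false) = cmps g (k', true) from heq)
        simp at this
      · rw [Phi_even, Phi_last] at heq
        exact absurd heq (hne_w (k, false))
      · rw [Phi_odd, Phi_even] at heq
        have := hPG.1 (show cmps g (k, true) = cmps g (k', false) from heq)
        simp at this
      · rw [Phi_odd, Phi_odd] at heq
        have := hPG.1 (show cmps g (k, true) = cmps g (k', true) from heq)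
        simp only [Prod.mk.injEq] at this
        rw [this.1]
      · rw [Phi_odd, Phi_last] at heq
        exact absurd heq (hne_w (k, true))
      · rw [Phi_last, Phi_even] at heq
        exact absurd heq.symm (hne_w (k', false))
      · rw [Phi_last, Phi_odd] at heq
        exact absurd heq.symm (hne_w (k', true))
      · rfl
    refine ⟨Finite.injective_iff_bijective.mp hinj, ?_, ?_, ?_⟩
    · intro k
      rw [Phi_even, Phi_odd]
      exact hPG.2.2.1 k
    · intro k l hkl
      rw [Phi_even, Phi_even]
      exact hPG.2.2.2 k l hkl
    · rw [Phi_last]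
      have he : (⟨2*m+1, by omega⟩ : Fin NN) = ⟨2*(Fin.last m).1+1, hk2' (Fin.last m)⟩ := rfl
      rw [he, Phi_odd]
      exact hx.2
  · rintro ⟨hbij, hcnd⟩
    refine ⟨(fun k => (f ⟨2*k.1, hk2 k⟩, f ⟨2*k.1+1, hk2' k⟩), f ⟨2*(m+1), by omega⟩), ?_, ?_⟩
    · set g : Fin (m+1) → Fin NN × Fin NN :=
        fun k => (f ⟨2*k.1, hk2 k⟩, f ⟨2*k.1+1, hk2' k⟩) with hg
      set w : Fin NN := f ⟨2*(m+1), by omega⟩ with hw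
      have hcmf : ∀ k : Fin (m+1), cmps g (k, false) = f ⟨2*k.1, hk2 k⟩ := fun k => rfl
      have hcmt : ∀ k : Fin (m+1), cmps g (k, true) = f ⟨2*k.1+1, hk2' k⟩ := fun k => rfl
      show GT m (g, w)
      refine ⟨⟨?_, ?_, ?_, ?_⟩, ?_⟩
      · rintro ⟨k, b⟩ ⟨k', b'⟩ heq
        cases b <;> cases b'
        · rw [hcmf, hcmf] at heq
          have hv : 2*k.1 = 2*k'.1 := congrArg Fin.val (hbij.1 heq)
          simp only [Prod.mk.injEq]
          exact ⟨Fin.ext (by omega), by trivial⟩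
        · rw [hcmf, hcmt] at heq
          have hv : 2*k.1 = 2*k'.1+1 := congrArg Fin.val (hbij.1 heq)
          exact absurd hv (by omega)
        · rw [hcmt, hcmf] at heq
          have hv : 2*k.1+1 = 2*k'.1 := congrArg Fin.val (hbij.1 heq)
          exact absurd hv (by omega)
        · rw [hcmt, hcmt] at heq
          have hv : 2*k.1+1 = 2*k'.1+1 := congrArg Fin.val (hbij.1 heq)
          simp only [Prod.mk.injEq]
          exact ⟨Fin.ext (by omega), by trivial⟩
      · rintro ⟨k, b⟩
        refine Finset.mem_erase.mpr ⟨fun h => ?_, Finset.mem_univ _⟩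
        have hk := k.2
        cases b
        · rw [hcmf] at h
          have hv : 2*k.1 = 2*(m+1) := congrArg Fin.val (hbij.1 h)
          omega
        · rw [hcmt] at h
          have hv : 2*k.1+1 = 2*(m+1) := congrArg Fin.val (hbij.1 h)
          omega
      · intro k
        exact hcnd.1 k
      · intro k l hkl
        exact hcnd.2.1 k l hkl
      · show w < (g (Fin.last m)).2
        exact hcnd.2.2
    · funext j
      rcases tricho m j with ⟨k, rfl⟩ | ⟨k, rfl⟩ | rfl
      · rw [Phi_even]
      · rw [Phi_odd]
      · rw [Phi_last]

lemma Phi_inj : Function.Injective (Phi m) := by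
  intro x y h
  have h2 : x.2 = y.2 := by
    have := congrFun h ⟨2*(m+1), by omega⟩
    rwa [Phi_last, Phi_last] at this
  have h1 : x.1 = y.1 := by
    funext k
    have he := congrFun h ⟨2*k.1, hk2 k⟩
    rw [Phi_even, Phi_even] at he
    have ho := congrFun h ⟨2*k.1+1, hk2' k⟩
    rw [Phi_odd, Phi_odd] at ho
    exact Prod.ext he ho
  exact Prod.ext h1 h2

lemma cnd_iff (σ : Equiv.Perm (Fin NN)) :
    (UpDown σ ∧ mmp1 σ = m+1) ↔ Cnd m ⇑σ := by
  constructor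
  · rintro ⟨hσ, hm⟩
    have hchain := (mmp1_eq_n_iff hσ).mp hm
    refine ⟨?_, ?_, ?_⟩
    · intro k
      exact updown_lt hσ ⟨2*k.1, hk2 k⟩ (by show 2*k.1+1 < 2*(m+1)+1; have := k.2; omega)
        ⟨k.1, two_mul k.1⟩
    · intro k l hkl
      exact hchain k l hkl
    · have h := updown_gt hσ ⟨2*m+1, by omega⟩ (by show 2*m+1+1 < 2*(m+1)+1; omega)
        (show ¬ Even (2*m+1) from by rw [Nat.even_iff]; omega)
      have he : (⟨2*m+1+1, by omega⟩ : Fin NN) = ⟨2*(m+1), by omega⟩ :=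
        Fin.ext (show 2*m+1+1 = 2*(m+1) by omega)
      rwa [he] at h
  · intro hcnd
    have hud : UpDown σ := by
      intro i h
      have hi := i.2
      by_cases hp : Even i.1
      · rw [if_pos hp]
        obtain ⟨c, hc⟩ := hp
        have hcm : c < m+1 := by omega
        have h1 := hcnd.1 ⟨c, hcm⟩
        have e1 : (⟨2*(⟨c, hcm⟩ : Fin (m+1)).1, hk2 _⟩ : Fin NN) = i :=
          Fin.ext (show 2*c = i.1 by omega)
        have e2 : (⟨2*(⟨c, hcm⟩ : Fin (m+1)).1+1, hk2' _⟩ : Fin NN) = ⟨i.1+1, h⟩ :=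
          Fin.ext (show 2*c+1 = i.1+1 by omega)
        rwa [e1, e2] at h1
      · rw [if_neg hp]
        obtain ⟨c, hc⟩ := Nat.not_even_iff_odd.mp hp
        have hcm : c ≤ m := by omega
        by_cases hcm' : c < m
        · have h1 := hcnd.2.1 ⟨c, by omega⟩ ⟨c+1, by omega⟩
            (show (⟨c, by omega⟩ : Fin (m+1)) < ⟨c+1, by omega⟩ from
              Fin.lt_def.mpr (by show c < c+1; omega))
          have h2 := hcnd.1 ⟨c, by omega⟩
          have h3 := h1.trans h2
          have e1 : (⟨2*(⟨c+1, by omega⟩ : Fin (m+1)).1, hk2 _⟩ : Fin NN) = ⟨i.1+1, h⟩ :=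
            Fin.ext (show 2*(c+1) = i.1+1 by omega)
          have e2 : (⟨2*(⟨c, by omega⟩ : Fin (m+1)).1+1, hk2' _⟩ : Fin NN) = i :=
            Fin.ext (show 2*c+1 = i.1 by omega)
          rw [e1, e2] at h3
          exact h3
        · have hcm2 : c = m := by omega
          have h1 := hcnd.2.2
          have e1 : (⟨2*(m+1), by omega⟩ : Fin NN) = ⟨i.1+1, h⟩ :=
            Fin.ext (show 2*(m+1) = i.1+1 by omega)
          have e2 : (⟨2*m+1, by omega⟩ : Fin NN) = i :=
            Fin.ext (show 2*m+1 = i.1 by omega)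
          rw [e1, e2] at h1
          exact h1
    refine ⟨hud, ?_⟩
    rw [mmp1_eq_n_iff hud]
    intro k l hkl
    exact hcnd.2.1 k l hkl

lemma final_count :
    {σ : Equiv.Perm (Fin NN) | UpDown σ ∧ mmp1 σ = m+1}.ncard = (m+2) * oddDF (m+1) := by
  have hs1 : {σ : Equiv.Perm (Fin NN) | UpDown σ ∧ mmp1 σ = m+1}
      = {σ : Equiv.Perm (Fin NN) | Cnd m ⇑σ} := by
    ext σ; exact cnd_iff m σ
  rw [hs1]
  have hs2 : (fun σ : Equiv.Perm (Fin NN) => ⇑σ) '' {σ | Cnd m ⇑σ}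
      = {f | Function.Bijective f ∧ Cnd m f} := by
    ext f
    constructor
    · rintro ⟨σ, hσ, rfl⟩
      exact ⟨σ.bijective, hσ⟩
    · rintro ⟨hbij, hcnd⟩
      exact ⟨Equiv.ofBijective f hbij, hcnd, rfl⟩
  have hinj : Function.Injective (fun σ : Equiv.Perm (Fin NN) => ⇑σ) :=
    fun σ τ h => Equiv.coe_fn_injective h
  rw [← Set.ncard_image_of_injective _ hinj, hs2, ← image_Phi,
    Set.ncard_image_of_injective _ (Phi_inj m)]
  rw [Set.ncard_eq_toFinset_card', Set.toFinset_setOf]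
  exact card_G m

end Assembly

theorem stmt12 (n : ℕ) (hn : 1 ≤ n) :
    (∀ σ : Equiv.Perm (Fin (2*n+1)), UpDown σ → mmp1 σ ≤ n) ∧
    {σ : Equiv.Perm (Fin (2*n+1)) | UpDown σ ∧ mmp1 σ = n}.ncard = (n+1) * oddDF n := by
  obtain ⟨m, rfl⟩ : ∃ m, n = m + 1 := ⟨n - 1, by omega⟩
  constructor
  · intro σ hσ
    exact mmp1_le hσ
  · have := final_count m
    have he : (m+1+1) = m+2 := by omega
    rw [he]
    exact this
end

section
/- For every n ≥ 2: every down-up permutation σ of length 2n satisfies mmp^{(1,0,∅,0)}(σ) ≤ n, and the number of down-up permutations σ of length 2n with mmp^{(1,0,∅,0)}(σ) = n equals (2n²−n−1)·(2n−4)!! − n·(2n−3)!!. (Equivalently, the highest power of x appearing in C^{(1,0,∅,0)}_{2n}(x) is x^n, with coefficient (2n²−n−1)((2n−4)!!) − n((2n−3)!!).) -/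
namespace Stmt13Aux

def gv (l : List ℕ) (i : ℕ) : ℕ := l.getD i 0
def DUL (l : List ℕ) : Prop :=
  ∀ i : ℕ, i + 1 < l.length →
    if Even i then gv l (i+1) < gv l i else gv l i < gv l (i+1)
def PM (l : List ℕ) (j : ℕ) : Prop := ∀ i < j, gv l j < gv l i
def GoodO (l : List ℕ) : Prop := DUL l ∧ ∀ j, ¬ Even j → j < l.length → PM l j
def CC (V : Finset ℕ) : Set (List ℕ) :=
  {l | l.Nodup ∧ l.toFinset = V ∧ GoodO l}

lemma gv_mem {l : List ℕ} {i : ℕ} (h : i < l.length) : gv l i ∈ l := by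
  rw [gv, List.getD_eq_getElem _ _ h]
  exact List.getElem_mem _

lemma exists_gv {l : List ℕ} {x : ℕ} (h : x ∈ l) : ∃ i, i < l.length ∧ gv l i = x := by
  obtain ⟨i, hi, hx⟩ := List.mem_iff_getElem.mp h
  exact ⟨i, hi, by rw [gv, List.getD_eq_getElem _ _ hi, hx]⟩

lemma gv_append {l t : List ℕ} {i : ℕ} (h : i < l.length) : gv (l ++ t) i = gv l i :=
  List.getD_append _ _ _ _ h

lemma gv_append_right (l t : List ℕ) (k : ℕ) : gv (l ++ t) (l.length + k) = gv t k := by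
  rw [gv, List.getD_append_right _ _ _ _ (Nat.le_add_right _ _)]
  simp [gv]

lemma gv_app1 (l : List ℕ) (a : ℕ) : gv (l ++ [a]) l.length = a := by
  exact gv_append_right l [a] 0

lemma gv_app2_a (l : List ℕ) (a b : ℕ) : gv (l ++ [a, b]) l.length = a := by
  exact gv_append_right l [a, b] 0

lemma gv_app2_b (l : List ℕ) (a b : ℕ) : gv (l ++ [a, b]) (l.length + 1) = b := by
  exact gv_append_right l [a, b] 1

lemma gv_nodup_ne {l : List ℕ} (h : l.Nodup) {i j : ℕ} (hi : i < l.length)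
    (hj : j < l.length) (hij : i ≠ j) : gv l i ≠ gv l j := by
  rw [gv, gv, List.getD_eq_getElem _ _ hi, List.getD_eq_getElem _ _ hj]
  intro hEq
  exact hij (List.Nodup.getElem_inj_iff h |>.mp hEq)

lemma mem_of_mem_CC {V : Finset ℕ} {l : List ℕ} (h : l ∈ CC V) {y : ℕ} (hy : y ∈ l) :
    y ∈ V := by
  rw [← h.2.1]; exact List.mem_toFinset.mpr hy

/-- building an odd structure from a smaller one by appending `[μ, x]`. -/
lemma append2_mem_CC {V : Finset ℕ} {μ x : ℕ} {l' : List ℕ}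
    (hμV : μ ∈ V) (hμ : ∀ y ∈ V, μ ≤ y) (hxV : x ∈ V) (hxμ : x ≠ μ)
    (hodd : Odd l'.length)
    (h : l' ∈ CC ((V.erase μ).erase x)) : l' ++ [μ, x] ∈ CC V := by
  have hnd := h.1
  have hfin := h.2.1
  have hDUL := h.2.2.1
  have hPM := h.2.2.2
  set L := l'.length with hL
  have hmem : ∀ y ∈ l', y ∈ V ∧ y ≠ μ ∧ y ≠ x := by
    intro y hy
    have : y ∈ (V.erase μ).erase x := by rw [← hfin]; exact List.mem_toFinset.mpr hy
    simp only [Finset.mem_erase] at this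
    exact ⟨this.2.2, this.2.1, this.1⟩
  have hgt : ∀ y ∈ l', μ < y := by
    intro y hy
    exact lt_of_le_of_ne (hμ y (hmem y hy).1) (Ne.symm (hmem y hy).2.1)
  refine ⟨?_, ?_, ?_, ?_⟩
  · rw [List.nodup_append]
    refine ⟨hnd, by simp [hxμ.symm], ?_⟩
    intro a ha b hamem hab
    subst hab
    simp only [List.mem_cons, List.mem_singleton] at hamem
    rcases hamem with rfl | rfl | h'
    · exact (hmem a ha).2.1 rfl
    · exact (hmem a ha).2.2 rfl
    · exact absurd h' List.not_mem_nil
  · ext y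
    simp only [List.toFinset_append, Finset.mem_union, List.mem_toFinset, List.toFinset_cons,
      List.toFinset_nil, LawfulSingleton.insert_empty_eq, Finset.mem_insert, Finset.mem_singleton]
    constructor
    · rintro (hy | rfl | rfl)
      · exact (hmem y hy).1
      · exact hμV
      · exact hxV
    · intro hyV
      by_cases h1 : y = μ
      · exact Or.inr (Or.inl h1)
      by_cases h2 : y = x
      · exact Or.inr (Or.inr h2)
      · left
        have : y ∈ (V.erase μ).erase x := by simp [Finset.mem_erase, h1, h2, hyV]
        rw [← hfin] at this
        exact List.mem_toFinset.mp this
  · -- DUL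
    intro i hi
    simp only [List.length_append, List.length_cons, List.length_nil] at hi
    obtain ⟨mm, hmm⟩ := hodd
    rcases Nat.lt_or_ge (i+1) L with hA | hA
    · rw [gv_append (by omega), gv_append (by omega)]
      exact hDUL i (by omega)
    · rcases Nat.eq_or_lt_of_le hA with hB | hB
      · -- i + 1 = L, i = L - 1 even
        have hieven : Even i := ⟨mm, by omega⟩
        rw [if_pos hieven, show i + 1 = L + 0 by omega, gv_append_right, gv_append (by omega)]
        exact hgt _ (gv_mem (by omega))
      · -- i = L
        have hiL : i = L := by omega
        have : ¬ Even i := by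
          rw [hiL, Nat.even_iff]; omega
        rw [if_neg this, hiL, show L = L + 0 by omega, gv_append_right,
          show L + 0 + 1 = L + 1 by omega, gv_append_right]
        simp only [gv]
        exact lt_of_le_of_ne (hμ x hxV) (Ne.symm hxμ)
  · -- PM
    intro j hj hjlt
    simp only [List.length_append, List.length_cons, List.length_nil] at hjlt
    obtain ⟨mm, hmm⟩ := hodd
    rcases Nat.lt_or_ge j L with hA | hA
    · intro i hi
      rw [gv_append (by omega), gv_append (by omega)]
      exact hPM j hj hA i hi
    · have hjL : j = L := by
        rcases Nat.eq_or_lt_of_le hA with h' | h'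
        · omega
        · exfalso; apply hj; rw [Nat.even_iff]; omega
      subst hjL
      intro i hi
      rw [show L = L + 0 by omega, gv_append_right, gv_append (by omega)]
      simp only [gv]
      exact hgt _ (gv_mem (by omega))

/-- decomposition of an odd structure of length ≥ 3. -/
lemma CC_decomp {V : Finset ℕ} {μ : ℕ} {l : List ℕ}
    (hμV : μ ∈ V) (hμ : ∀ y ∈ V, μ ≤ y) (hl : l ∈ CC V)
    (hlen : 3 ≤ l.length) (hodd : Odd l.length) :
    gv l (l.length - 2) = μ ∧
    (gv l (l.length - 1) ∈ V ∧ gv l (l.length - 1) ≠ μ) ∧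
    l.take (l.length - 2) ∈ CC ((V.erase μ).erase (gv l (l.length - 1))) ∧
    l = l.take (l.length - 2) ++ [μ, gv l (l.length - 1)] := by
  have hnd := hl.1
  have hfin := hl.2.1
  have hDUL := hl.2.2.1
  have hPM := hl.2.2.2
  obtain ⟨mm, hmm⟩ := hodd
  set L := l.length - 2 with hLdef
  have hLL : l.length = L + 2 := by omega
  have hLodd : ¬ Even L := by rw [Nat.even_iff]; omega
  rw [show l.length - 1 = L + 1 from by omega]
  -- prefix min at L
  have hPML : ∀ i < L, gv l L < gv l i := hPM L hLodd (by omega)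
  have hDL : gv l L < gv l (L+1) := by
    have := hDUL L (by omega)
    rwa [if_neg hLodd] at this
  -- gv l L = μ
  have hmin : gv l L = μ := by
    have hle : ∀ y ∈ V, gv l L ≤ y := by
      intro y hy
      have : y ∈ l := by rw [← List.mem_toFinset, hfin]; exact hy
      obtain ⟨i, hi, rfl⟩ := exists_gv this
      rcases Nat.lt_trichotomy i L with h' | rfl | h'
      · exact le_of_lt (hPML i h')
      · exact le_refl _
      · have : i = L + 1 := by omega
        subst this; exact le_of_lt hDL
    exact le_antisymm (hle μ hμV) (hμ _ (mem_of_mem_CC hl (gv_mem (by omega))))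
  set x := gv l (L + 1) with hxdef
  have hxV : x ∈ V := mem_of_mem_CC hl (gv_mem (by omega))
  have hxμ : x ≠ μ := by rw [← hmin]; exact (gv_nodup_ne hnd (by omega) (by omega) (by omega)).symm
  -- representation
  have hrep : l = l.take L ++ [μ, x] := by
    have hdrop : l.drop L = [μ, x] := by
      apply List.ext_getElem
      · simp [hLL]
      · intro i h1 h2
        have hgd : (l.drop L)[i] = l[L + i]'(by simp at h1; omega) := List.getElem_drop
        simp only [List.length_drop, hLL] at h1
        have hi2 : i < 2 := by omega
        interval_cases i
        · rw [hgd]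
          simp only [List.getElem_cons_zero]
          rw [← hmin, gv, List.getD_eq_getElem _ _ (by omega)]
          simp
        · rw [hgd]
          simp only [List.getElem_cons_succ, List.getElem_cons_zero]
          simp only [hxdef, gv]
          exact (List.getD_eq_getElem _ _ (by omega : L + 1 < l.length)).symm
    conv_lhs => rw [← List.take_append_drop L l]
    rw [hdrop]
  have htklen : (l.take L).length = L := by simp [hLL]
  have hgvtake : ∀ i < L, gv (l.take L) i = gv l i := by
    intro i hi
    conv_rhs => rw [hrep]
    exact (gv_append (by omega)).symm
  have hmemtake : ∀ y ∈ l.take L, y ∈ l := fun y hy => List.mem_of_mem_take hy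
  refine ⟨hmin, ⟨hxV, hxμ⟩, ⟨?_, ?_, ?_, ?_⟩, hrep⟩
  · exact List.Nodup.sublist (List.take_sublist L l) hnd
  · -- toFinset of take
    have hndrep : (l.take L ++ [μ, x]).Nodup := by rw [← hrep]; exact hnd
    rw [List.nodup_append] at hndrep
    have hdisj := hndrep.2.2
    ext y
    simp only [List.mem_toFinset, Finset.mem_erase]
    constructor
    · intro hy
      refine ⟨?_, ?_, ?_⟩
      · intro h'; subst h'; exact hdisj _ hy _ (by simp) rfl
      · intro h'; subst h'; exact hdisj _ hy _ (by simp) rfl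
      · rw [← hfin]; exact List.mem_toFinset.mpr (hmemtake y hy)
    · rintro ⟨h1, h2, h3⟩
      have : y ∈ l := by rw [← List.mem_toFinset, hfin]; exact h3
      rw [hrep] at this
      rcases List.mem_append.mp this with h' | h'
      · exact h'
      · simp only [List.mem_cons, List.mem_singleton] at h'
        rcases h' with rfl | rfl | h'
        · exact absurd rfl h2
        · exact absurd rfl h1
        · exact absurd h' List.not_mem_nil
  · intro i hi
    rw [htklen] at hi
    rw [hgvtake i (by omega), hgvtake (i+1) (by omega)]
    exact hDUL i (by omega)
  · intro j hj hjlt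
    rw [htklen] at hjlt
    intro i hi
    rw [hgvtake i (by omega), hgvtake j (by omega)]
    exact hPM j hj (by omega) i hi



def DD (V : Finset ℕ) : Set (List ℕ) := {l | l ∈ CC V ∧ ∀ x ∈ V, x ≤ gv l 0}

lemma length_of_mem_CC {V : Finset ℕ} {l : List ℕ} (h : l ∈ CC V) : l.length = V.card := by
  rw [← h.2.1, List.toFinset_card_of_nodup h.1]

lemma finite_nodup_toFinset (V : Finset ℕ) :
    {l : List ℕ | l.Nodup ∧ l.toFinset = V}.Finite := by
  apply Set.Finite.subset (V.toList.permutations.toFinset.finite_toSet)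
  rintro l ⟨h1, h2⟩
  simp only [Finset.mem_coe, List.mem_toFinset, List.mem_permutations]
  exact List.perm_of_nodup_nodup_toFinset_eq h1 V.nodup_toList
    (by rw [h2, Finset.toList_toFinset])

lemma finite_CC (V : Finset ℕ) : (CC V).Finite :=
  (finite_nodup_toFinset V).subset fun l h => ⟨h.1, h.2.1⟩

lemma finite_DD (V : Finset ℕ) : (DD V).Finite :=
  (finite_CC V).subset fun l h => h.1

lemma ncard_biUnion {α β : Type*} (F : Finset α) (E : α → Set β)
    (hfin : ∀ x ∈ F, (E x).Finite)
    (hdisj : ∀ x ∈ F, ∀ y ∈ F, x ≠ y → Disjoint (E x) (E y)) :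
    (⋃ x ∈ F, E x).ncard = ∑ x ∈ F, (E x).ncard := by
  classical
  induction F using Finset.induction with
  | empty => simp
  | @insert a s hx ih =>
    rw [Finset.sum_insert hx]
    have h1 : (⋃ x ∈ insert a s, E x) = E a ∪ ⋃ x ∈ s, E x := by
      simp [Set.biUnion_insert]
    have hfa : (E a).Finite := hfin a (Finset.mem_insert_self a s)
    have hfu : (⋃ x ∈ s, E x).Finite := by
      apply Set.Finite.biUnion (Finset.finite_toSet s)
      intro x hx'; exact hfin x (Finset.mem_insert_of_mem hx')
    have hd : Disjoint (E a) (⋃ x ∈ s, E x) := by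
      apply Set.disjoint_iff_forall_ne.mpr
      rintro b hb c hc
      simp only [Set.mem_iUnion] at hc
      obtain ⟨x, hxs, hcx⟩ := hc
      have := hdisj a (Finset.mem_insert_self a s) x (Finset.mem_insert_of_mem hxs)
        (by rintro rfl; exact hx hxs)
      exact fun hbc => Set.disjoint_iff_forall_ne.mp this hb hcx hbc
    rw [h1, Set.ncard_union_eq hd hfa hfu,
      ih (fun x hx' => hfin x (Finset.mem_insert_of_mem hx'))
        (fun x hx' y hy' hxy => hdisj x (Finset.mem_insert_of_mem hx') y
          (Finset.mem_insert_of_mem hy') hxy)]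

lemma append2_mem_DD {V : Finset ℕ} {μ M x : ℕ} {l' : List ℕ}
    (hμV : μ ∈ V) (hμ : ∀ y ∈ V, μ ≤ y) (hMV : M ∈ V) (hM : ∀ y ∈ V, y ≤ M)
    (hxV : x ∈ V) (hxμ : x ≠ μ) (hxM : x ≠ M) (hμM : μ ≠ M)
    (hodd : Odd l'.length)
    (h : l' ∈ DD ((V.erase μ).erase x)) : l' ++ [μ, x] ∈ DD V := by
  have hcc := append2_mem_CC hμV hμ hxV hxμ hodd h.1
  refine ⟨hcc, ?_⟩
  have hpos : 0 < l'.length := by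
    obtain ⟨k, hk⟩ := hodd; omega
  have hgv0 : gv (l' ++ [μ, x]) 0 = gv l' 0 := gv_append hpos
  have hMF : M ∈ (V.erase μ).erase x := by
    simp only [Finset.mem_erase]
    exact ⟨fun h' => hxM h'.symm, fun h' => hμM h'.symm, hMV⟩
  have hMle : M ≤ gv l' 0 := h.2 M hMF
  intro y hy
  rw [hgv0]
  exact le_trans (hM y hy) hMle

lemma DD_decomp {V : Finset ℕ} {μ M : ℕ} {l : List ℕ}
    (hμV : μ ∈ V) (hμ : ∀ y ∈ V, μ ≤ y) (hMV : M ∈ V) (hM : ∀ y ∈ V, y ≤ M)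
    (hl : l ∈ DD V) (hlen : 3 ≤ l.length) (hodd : Odd l.length) :
    gv l (l.length - 1) ≠ M ∧
    l.take (l.length - 2) ∈ DD ((V.erase μ).erase (gv l (l.length - 1))) := by
  obtain ⟨hmin, ⟨hxV, hxμ⟩, htake, hrep⟩ := CC_decomp hμV hμ hl.1 hlen hodd
  have hgv0 : gv l 0 = gv (l.take (l.length - 2)) 0 := by
    conv_lhs => rw [hrep]
    apply gv_append
    rw [List.length_take]
    omega
  have hMeq : gv l 0 = M := by
    refine le_antisymm (hM _ (mem_of_mem_CC hl.1 (gv_mem (by omega)))) ?_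
    exact hl.2 M hMV
  have hne : gv l (l.length - 1) ≠ M := by
    rw [← hMeq]
    exact gv_nodup_ne hl.1.1 (by omega) (by omega) (by omega)
  refine ⟨hne, htake, ?_⟩
  intro y hy
  rw [← hgv0, hMeq]
  exact hM y (Finset.mem_of_mem_erase (Finset.mem_of_mem_erase hy))

lemma evenDF_succ (m : ℕ) : evenDF (m+1) = evenDF m * (2*m+2) := Finset.prod_range_succ _ _
lemma oddDF_succ (m : ℕ) : oddDF (m+1) = oddDF m * (2*m+1) := Finset.prod_range_succ _ _

lemma CC_singleton (a : ℕ) : CC {a} = {[a]} := by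
  ext l
  constructor
  · intro hl
    have hlen : l.length = 1 := by
      rw [length_of_mem_CC hl, Finset.card_singleton]
    obtain ⟨y, rfl⟩ := List.length_eq_one_iff.mp hlen
    have := hl.2.1
    simp only [List.toFinset_cons, List.toFinset_nil, LawfulSingleton.insert_empty_eq] at this
    have hya : y = a := by
      have : y ∈ ({a} : Finset ℕ) := this ▸ Finset.mem_singleton_self y
      simpa using this
    simp [hya]
  · rintro rfl
    refine ⟨by simp, by simp, ?_, ?_⟩
    · intro i hi; simp at hi
    · intro j hj hjlt
      simp only [List.length_singleton] at hjlt
      interval_cases j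
      · exact absurd (by simp [Nat.even_iff]) hj

lemma DD_singleton (a : ℕ) : DD {a} = {[a]} := by
  ext l
  constructor
  · intro hl
    have : l ∈ CC {a} := hl.1
    rwa [CC_singleton] at this
  · rintro rfl
    refine ⟨by rw [CC_singleton]; rfl, ?_⟩
    intro x hx
    simp only [Finset.mem_singleton] at hx
    subst hx
    simp [gv]

lemma ccard : ∀ m : ℕ, ∀ V : Finset ℕ, V.card = 2*m+1 → (CC V).ncard = evenDF m := by
  intro m
  induction m with
  | zero =>
    intro V hV
    obtain ⟨a, rfl⟩ := Finset.card_eq_one.mp (by simpa using hV)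
    rw [CC_singleton, Set.ncard_singleton]
    simp [evenDF]
  | succ m ih =>
    intro V hV
    have hne : V.Nonempty := Finset.card_pos.mp (by omega)
    set μ := V.min' hne with hμdef
    have hμV : μ ∈ V := V.min'_mem hne
    have hμ : ∀ y ∈ V, μ ≤ y := fun y hy => V.min'_le y hy
    set F := V.erase μ with hFdef
    have hFcard : F.card = 2*m+2 := by
      rw [hFdef, Finset.card_erase_of_mem hμV]; omega
    have hEcard : ∀ x ∈ F, ((V.erase μ).erase x).card = 2*m+1 := by
      intro x hx
      rw [Finset.card_erase_of_mem hx, hFcard]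
      omega
    set E : ℕ → Set (List ℕ) := fun x => (fun l' => l' ++ [μ, x]) '' CC ((V.erase μ).erase x)
      with hEdef
    have hEq : CC V = ⋃ x ∈ F, E x := by
      ext l
      simp only [Set.mem_iUnion, hEdef]
      constructor
      · intro hl
        have hlen : l.length = 2*m+3 := by rw [length_of_mem_CC hl]; omega
        obtain ⟨hmin, ⟨hxV, hxμ⟩, htake, hrep⟩ :=
          CC_decomp hμV hμ hl (by omega) ⟨m+1, by omega⟩
        exact ⟨gv l (l.length - 1), Finset.mem_erase.mpr ⟨hxμ, hxV⟩,
          ⟨l.take (l.length - 2), htake, hrep.symm⟩⟩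
      · rintro ⟨x, hxF, l', hl', rfl⟩
        apply append2_mem_CC hμV hμ (Finset.mem_of_mem_erase hxF)
          (Finset.ne_of_mem_erase hxF) ?_ hl'
        rw [length_of_mem_CC hl', hEcard x hxF]
        exact ⟨m, by omega⟩
    rw [hEq, ncard_biUnion]
    · have hconst : ∀ x ∈ F, (E x).ncard = evenDF m := by
        intro x hx
        rw [hEdef]
        simp only
        rw [Set.ncard_image_of_injective _ (List.append_left_injective [μ, x]),
          ih _ (hEcard x hx)]
      rw [Finset.sum_congr rfl hconst, Finset.sum_const, hFcard, evenDF_succ]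
      ring
    · intro x _
      exact ((finite_CC _).image _)
    · intro x hx y hy hxy
      apply Set.disjoint_left.mpr
      rintro l ⟨l1, h1, rfl⟩ ⟨l2, h2, heq⟩
      have hl1 : l1.length = 2*m+1 := by rw [length_of_mem_CC h1, hEcard x hx]
      have hl2 : l2.length = 2*m+1 := by rw [length_of_mem_CC h2, hEcard y hy]
      have e1 : gv (l1 ++ [μ, x]) (2*m+2) = x := by
        rw [show 2*m+2 = l1.length + 1 by omega, gv_app2_b]
      have e2 : gv (l2 ++ [μ, y]) (2*m+2) = y := by
        rw [show 2*m+2 = l2.length + 1 by omega, gv_app2_b]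
      have heq' : l2 ++ [μ, y] = l1 ++ [μ, x] := heq
      rw [heq'] at e2
      exact hxy (e1 ▸ e2 ▸ rfl)

lemma dcard : ∀ m : ℕ, ∀ V : Finset ℕ, V.card = 2*m+1 → (DD V).ncard = oddDF m := by
  intro m
  induction m with
  | zero =>
    intro V hV
    obtain ⟨a, rfl⟩ := Finset.card_eq_one.mp (by simpa using hV)
    rw [DD_singleton, Set.ncard_singleton]
    simp [oddDF]
  | succ m ih =>
    intro V hV
    have hne : V.Nonempty := Finset.card_pos.mp (by omega)
    set μ := V.min' hne with hμdef
    set M := V.max' hne with hMdef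
    have hμV : μ ∈ V := V.min'_mem hne
    have hMV : M ∈ V := V.max'_mem hne
    have hμ : ∀ y ∈ V, μ ≤ y := fun y hy => V.min'_le y hy
    have hM : ∀ y ∈ V, y ≤ M := fun y hy => V.le_max' y hy
    have hμM : μ ≠ M := ne_of_lt (V.min'_lt_max'_of_card (by omega))
    set F := (V.erase μ).erase M with hFdef
    have hFcard : F.card = 2*m+1 := by
      rw [hFdef, Finset.card_erase_of_mem
        (Finset.mem_erase.mpr ⟨Ne.symm hμM, hMV⟩), Finset.card_erase_of_mem hμV]
      omega
    have hEcard : ∀ x ∈ F, ((V.erase μ).erase x).card = 2*m+1 := by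
      intro x hx
      rw [Finset.card_erase_of_mem (Finset.mem_of_mem_erase hx),
        Finset.card_erase_of_mem hμV]
      omega
    set E : ℕ → Set (List ℕ) := fun x => (fun l' => l' ++ [μ, x]) '' DD ((V.erase μ).erase x)
      with hEdef
    have hEq : DD V = ⋃ x ∈ F, E x := by
      ext l
      simp only [Set.mem_iUnion, hEdef]
      constructor
      · intro hl
        have hlen : l.length = 2*m+3 := by rw [length_of_mem_CC hl.1]; omega
        obtain ⟨hmin, ⟨hxV, hxμ⟩, htake, hrep⟩ :=
          CC_decomp hμV hμ hl.1 (by omega) ⟨m+1, by omega⟩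
        obtain ⟨hne', htake'⟩ := DD_decomp hμV hμ hMV hM hl (by omega) ⟨m+1, by omega⟩
        exact ⟨gv l (l.length - 1),
          Finset.mem_erase.mpr ⟨hne', Finset.mem_erase.mpr ⟨hxμ, hxV⟩⟩,
          ⟨l.take (l.length - 2), htake', hrep.symm⟩⟩
      · rintro ⟨x, hxF, l', hl', rfl⟩
        have hxVe : x ∈ V.erase μ := Finset.mem_of_mem_erase hxF
        apply append2_mem_DD hμV hμ hMV hM (Finset.mem_of_mem_erase hxVe)
          (Finset.ne_of_mem_erase hxVe) (Finset.ne_of_mem_erase hxF) hμM ?_ hl'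
        rw [length_of_mem_CC hl'.1, hEcard x hxF]
        exact ⟨m, by omega⟩
    rw [hEq, ncard_biUnion]
    · have hconst : ∀ x ∈ F, (E x).ncard = oddDF m := by
        intro x hx
        rw [hEdef]
        simp only
        rw [Set.ncard_image_of_injective _ (List.append_left_injective [μ, x]),
          ih _ (hEcard x hx)]
      rw [Finset.sum_congr rfl hconst, Finset.sum_const, hFcard, oddDF_succ]
      ring
    · intro x _
      exact ((finite_DD _).image _)
    · intro x hx y hy hxy
      apply Set.disjoint_left.mpr
      rintro l ⟨l1, h1, rfl⟩ ⟨l2, h2, heq⟩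
      have hl1 : l1.length = 2*m+1 := by rw [length_of_mem_CC h1.1, hEcard x hx]
      have hl2 : l2.length = 2*m+1 := by rw [length_of_mem_CC h2.1, hEcard y hy]
      have e1 : gv (l1 ++ [μ, x]) (2*m+2) = x := by
        rw [show 2*m+2 = l1.length + 1 by omega, gv_app2_b]
      have e2 : gv (l2 ++ [μ, y]) (2*m+2) = y := by
        rw [show 2*m+2 = l2.length + 1 by omega, gv_app2_b]
      have heq' : l2 ++ [μ, y] = l1 ++ [μ, x] := heq
      rw [heq'] at e2
      exact hxy (e1 ▸ e2 ▸ rfl)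

def GoodE (l : List ℕ) : Prop := DUL l ∧ ∀ j, ¬ Even j → j + 1 < l.length → PM l j
def AA (V : Finset ℕ) : Set (List ℕ) := {l | l.Nodup ∧ l.toFinset = V ∧ GoodE l}
def BB (V : Finset ℕ) : Set (List ℕ) := {l | l ∈ AA V ∧ ∀ x ∈ V, x ≤ gv l 0}

lemma length_of_mem_AA {V : Finset ℕ} {l : List ℕ} (h : l ∈ AA V) : l.length = V.card := by
  rw [← h.2.1, List.toFinset_card_of_nodup h.1]

lemma mem_of_mem_AA {V : Finset ℕ} {l : List ℕ} (h : l ∈ AA V) {y : ℕ} (hy : y ∈ l) :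
    y ∈ V := by
  rw [← h.2.1]; exact List.mem_toFinset.mpr hy

lemma finite_AA (V : Finset ℕ) : (AA V).Finite :=
  (finite_nodup_toFinset V).subset fun l h => ⟨h.1, h.2.1⟩

lemma finite_BB (V : Finset ℕ) : (BB V).Finite :=
  (finite_AA V).subset fun l h => h.1

lemma gv_app3_b (l : List ℕ) (a b c : ℕ) : gv (l ++ [a, b, c]) (l.length + 1) = b := by
  exact gv_append_right l [a, b, c] 1

lemma gv_app3_c (l : List ℕ) (a b c : ℕ) : gv (l ++ [a, b, c]) (l.length + 2) = c := by
  exact gv_append_right l [a, b, c] 2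

/-- generic last-element representation -/
lemma rep_last (l : List ℕ) (h : 1 ≤ l.length) :
    l = l.take (l.length - 1) ++ [gv l (l.length - 1)] := by
  have hdrop : l.drop (l.length - 1) = [gv l (l.length - 1)] := by
    apply List.ext_getElem
    · simp; omega
    · intro i h1 h2
      simp only [List.length_drop] at h1
      have : i = 0 := by omega
      subst this
      have hgd : (l.drop (l.length - 1))[0] = l[l.length - 1 + 0]'(by omega) :=
        List.getElem_drop
      rw [hgd]
      simp only [List.getElem_cons_zero, gv]
      rw [List.getD_eq_getElem _ _ (by omega : l.length - 1 < l.length)]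
      congr 1
  conv_lhs => rw [← List.take_append_drop (l.length - 1) l, hdrop]

/-- appending a final element to an odd structure gives an even structure -/
lemma append1_mem_AA {V : Finset ℕ} {c : ℕ} {l' : List ℕ}
    (hcV : c ∈ V) (h : l' ∈ CC (V.erase c)) (hodd : Odd l'.length)
    (hlast : c < gv l' (l'.length - 1)) : l' ++ [c] ∈ AA V := by
  have hnd := h.1
  have hfin := h.2.1
  have hmem : ∀ y ∈ l', y ∈ V ∧ y ≠ c := by
    intro y hy
    have : y ∈ V.erase c := by rw [← hfin]; exact List.mem_toFinset.mpr hy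
    exact ⟨Finset.mem_of_mem_erase this, Finset.ne_of_mem_erase this⟩
  set L := l'.length with hL
  have hLpos : 0 < L := by obtain ⟨k, hk⟩ := hodd; omega
  refine ⟨?_, ?_, ?_, ?_⟩
  · rw [List.nodup_append]
    refine ⟨hnd, by simp, fun a ha b ha' hab => ?_⟩
    subst hab
    simp only [List.mem_singleton] at ha'
    subst ha'
    exact (hmem a ha).2 rfl
  · ext y
    simp only [List.toFinset_append, Finset.mem_union, List.mem_toFinset, List.toFinset_cons,
      List.toFinset_nil, LawfulSingleton.insert_empty_eq, Finset.mem_singleton]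
    constructor
    · rintro (hy | rfl)
      · exact (hmem y hy).1
      · exact hcV
    · intro hyV
      by_cases h1 : y = c
      · exact Or.inr h1
      · left
        have : y ∈ V.erase c := Finset.mem_erase.mpr ⟨h1, hyV⟩
        rw [← hfin] at this
        exact List.mem_toFinset.mp this
  · intro i hi
    simp only [List.length_append, List.length_cons, List.length_nil] at hi
    rcases Nat.lt_or_ge (i+1) L with hA | hA
    · rw [gv_append (by omega), gv_append (by omega)]
      exact h.2.2.1 i (by omega)
    · have hiL : i + 1 = L := by omega
      have hieven : Even i := by
        obtain ⟨k, hk⟩ := hodd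
        exact ⟨k, by omega⟩
      rw [if_pos hieven, hiL, gv_app1, gv_append (by omega)]
      have : gv l' i = gv l' (L - 1) := by congr 1; omega
      rw [this]
      exact hlast
  · intro j hj hjlt
    simp only [List.length_append, List.length_cons, List.length_nil] at hjlt
    intro i hi
    rw [gv_append (by omega), gv_append (by omega)]
    exact h.2.2.2 j hj (by omega) i hi

/-- decomposition of an even structure: peel off the last element -/
lemma AA_decomp {V : Finset ℕ} {l : List ℕ}
    (hl : l ∈ AA V) (hlen : 2 ≤ l.length) (heven : Even l.length) :
    gv l (l.length - 1) ∈ V ∧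
    l.take (l.length - 1) ∈ CC (V.erase (gv l (l.length - 1))) ∧
    l = l.take (l.length - 1) ++ [gv l (l.length - 1)] ∧
    gv l (l.length - 1) < gv l (l.length - 2) := by
  have hnd := hl.1
  have hfin := hl.2.1
  set L := l.length - 1 with hLdef
  have hLL : l.length = L + 1 := by omega
  set c := gv l L with hcdef
  have hcV : c ∈ V := mem_of_mem_AA hl (gv_mem (by omega))
  have hrep : l = l.take L ++ [c] := rep_last l (by omega)
  have htklen : (l.take L).length = L := by simp [hLL]
  have hgvtake : ∀ i < L, gv (l.take L) i = gv l i := by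
    intro i hi
    conv_rhs => rw [hrep]
    exact (gv_append (by omega)).symm
  refine ⟨hcV, ⟨?_, ?_, ?_, ?_⟩, hrep, ?_⟩
  · exact List.Nodup.sublist (List.take_sublist L l) hnd
  · have hndrep : (l.take L ++ [c]).Nodup := by rw [← hrep]; exact hnd
    rw [List.nodup_append] at hndrep
    have hdisj := hndrep.2.2
    ext y
    simp only [List.mem_toFinset, Finset.mem_erase]
    constructor
    · intro hy
      refine ⟨fun h' => hdisj _ hy _ (by simp [h']) rfl, ?_⟩
      rw [← hfin]
      exact List.mem_toFinset.mpr (List.mem_of_mem_take hy)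
    · rintro ⟨h1, h2⟩
      have : y ∈ l := by rw [← List.mem_toFinset, hfin]; exact h2
      rw [hrep] at this
      rcases List.mem_append.mp this with h' | h'
      · exact h'
      · simp only [List.mem_singleton] at h'
        exact absurd h' h1
  · intro i hi
    rw [htklen] at hi
    rw [hgvtake i (by omega), hgvtake (i+1) (by omega)]
    exact hl.2.2.1 i (by omega)
  · intro j hj hjlt
    rw [htklen] at hjlt
    intro i hi
    rw [hgvtake i (by omega), hgvtake j (by omega)]
    exact hl.2.2.2 j hj (by omega) i hi
  · have hev : Even (l.length - 2) := by
      obtain ⟨k, hk⟩ := heven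
      exact ⟨k - 1, by omega⟩
    have := hl.2.2.1 (l.length - 2) (by omega)
    rw [if_pos hev] at this
    have h2 : gv l (l.length - 2 + 1) < gv l (l.length - 2) := this
    rwa [show l.length - 2 + 1 = L by omega] at h2

lemma card_lt_pairs (F : Finset ℕ) :
    2 * ((F ×ˢ F).filter fun p => p.2 < p.1).card = F.card * F.card - F.card := by
  have hswap : ((F ×ˢ F).filter fun p => p.2 < p.1).card
      = ((F ×ˢ F).filter fun p => p.1 < p.2).card := by
    apply Finset.card_nbij' (fun p => (p.2, p.1)) (fun p => (p.2, p.1))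
    · intro p hp
      simp only [Finset.mem_coe, Finset.mem_filter, Finset.mem_product] at hp ⊢
      exact ⟨⟨hp.1.2, hp.1.1⟩, hp.2⟩
    · intro p hp
      simp only [Finset.mem_coe, Finset.mem_filter, Finset.mem_product] at hp ⊢
      exact ⟨⟨hp.1.2, hp.1.1⟩, hp.2⟩
    · intro p _; rfl
    · intro p _; rfl
  have hdisj : Disjoint ((F ×ˢ F).filter fun p => p.2 < p.1)
      ((F ×ˢ F).filter fun p => p.1 < p.2) := by
    apply Finset.disjoint_left.mpr
    intro p hp1 hp2
    simp only [Finset.mem_filter] at hp1 hp2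
    omega
  have hunion : ((F ×ˢ F).filter fun p => p.2 < p.1) ∪ ((F ×ˢ F).filter fun p => p.1 < p.2)
      = F.offDiag := by
    ext p
    simp only [Finset.mem_union, Finset.mem_filter, Finset.mem_product, Finset.mem_offDiag]
    constructor
    · rintro (⟨⟨h1, h2⟩, h3⟩ | ⟨⟨h1, h2⟩, h3⟩) <;> exact ⟨h1, h2, by omega⟩
    · rintro ⟨h1, h2, h3⟩
      by_cases h : p.2 < p.1
      · exact Or.inl ⟨⟨h1, h2⟩, h⟩
      · exact Or.inr ⟨⟨h1, h2⟩, by omega⟩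
  have hcu := Finset.card_union_of_disjoint hdisj
  rw [hunion, Finset.offDiag_card] at hcu
  omega

lemma acard (k : ℕ) (V : Finset ℕ) (hV : V.card = 2*k+4) :
    (AA V).ncard = evenDF (k+1) + ((2*k+3)*(k+1)) * evenDF k := by
  have hne : V.Nonempty := Finset.card_pos.mp (by omega)
  set μ := V.min' hne with hμdef
  have hμV : μ ∈ V := V.min'_mem hne
  have hμ : ∀ y ∈ V, μ ≤ y := fun y hy => V.min'_le y hy
  set F := V.erase μ with hFdef
  have hFcard : F.card = 2*k+3 := by rw [hFdef, Finset.card_erase_of_mem hμV]; omega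
  set P := (F ×ˢ F).filter (fun p => p.2 < p.1) with hPdef
  set E1 : Set (List ℕ) := (fun l' => l' ++ [μ]) '' CC F with hE1def
  set E2 : ℕ × ℕ → Set (List ℕ) :=
    fun p => (fun l'' => l'' ++ [μ, p.1, p.2]) '' CC ((F.erase p.1).erase p.2) with hE2def
  have hPmem : ∀ p ∈ P, p.1 ∈ F ∧ p.2 ∈ F ∧ p.2 < p.1 := by
    intro p hp
    rw [hPdef, Finset.mem_filter, Finset.mem_product] at hp
    exact ⟨hp.1.1, hp.1.2, hp.2⟩
  have hWcard : ∀ p ∈ P, ((F.erase p.1).erase p.2).card = 2*k+1 := by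
    intro p hp
    obtain ⟨h1, h2, h3⟩ := hPmem p hp
    rw [Finset.card_erase_of_mem (Finset.mem_erase.mpr ⟨by omega, h2⟩),
      Finset.card_erase_of_mem h1, hFcard]
    omega
  have herase : ∀ a b : ℕ, ((V.erase b).erase μ).erase a = (F.erase a).erase b := by
    intro a b
    rw [hFdef]
    ext y
    simp only [Finset.mem_erase]
    tauto
  have hEq : AA V = E1 ∪ ⋃ p ∈ P, E2 p := by
    ext l
    constructor
    · intro hl
      have hlen : l.length = 2*k+4 := by rw [length_of_mem_AA hl, hV]
      obtain ⟨hcV, htake1, hrep1, hclt⟩ := AA_decomp hl (by omega) ⟨k+2, by omega⟩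
      set c := gv l (l.length - 1) with hcdef
      by_cases hcμ : c = μ
      · left
        rw [hcμ] at htake1 hrep1
        exact ⟨l.take (l.length - 1), htake1, hrep1.symm⟩
      · right
        have hcF : c ∈ F := Finset.mem_erase.mpr ⟨hcμ, hcV⟩
        set t1 := l.take (l.length - 1) with ht1def
        have htklen : t1.length = 2*k+3 := by rw [ht1def]; simp [hlen]
        have hμV' : μ ∈ V.erase c := Finset.mem_erase.mpr ⟨fun h => hcμ h.symm, hμV⟩
        have hμ' : ∀ y ∈ V.erase c, μ ≤ y := fun y hy => hμ y (Finset.mem_of_mem_erase hy)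
        obtain ⟨hmin2, ⟨haV, haμ⟩, htake2, hrep2⟩ :=
          CC_decomp hμV' hμ' htake1 (by omega) ⟨k+1, by omega⟩
        set a := gv t1 (t1.length - 1) with hadef
        have hgva : gv l (l.length - 2) = a := by
          rw [show l.length - 2 = t1.length - 1 by omega]
          conv_lhs => rw [hrep1]
          rw [gv_append (by omega)]
        have haF : a ∈ F := Finset.mem_erase.mpr ⟨haμ, Finset.mem_of_mem_erase haV⟩
        have hac : c < a := by rw [← hgva]; exact hclt
        have hPmem2 : (a, c) ∈ P := by
          rw [hPdef, Finset.mem_filter, Finset.mem_product]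
          exact ⟨⟨haF, hcF⟩, hac⟩
        apply Set.mem_biUnion hPmem2
        rw [hE2def]
        refine ⟨t1.take (t1.length - 2), ?_, ?_⟩
        · rw [← herase a c]
          exact htake2
        · show t1.take (t1.length - 2) ++ [μ, a, c] = l
          have : t1.take (t1.length - 2) ++ [μ, a, c]
              = (t1.take (t1.length - 2) ++ [μ, a]) ++ [c] := by
            rw [List.append_assoc]; rfl
          rw [this, ← hrep2, ← hrep1]
    · intro hl
      rcases hl with ⟨l', hl', rfl⟩ | hmem
      · apply append1_mem_AA hμV hl' ?_ ?_
        · rw [length_of_mem_CC hl', hFcard]; exact ⟨k+1, by omega⟩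
        · have : gv l' (l'.length - 1) ∈ F := by
            apply mem_of_mem_CC hl' (gv_mem ?_)
            rw [length_of_mem_CC hl', hFcard]; omega
          exact lt_of_le_of_ne (hμ _ (Finset.mem_of_mem_erase this))
            (Ne.symm (Finset.ne_of_mem_erase this))
      · rw [Set.mem_iUnion₂] at hmem
        obtain ⟨p, hpP, hlp⟩ := hmem
        rw [hE2def] at hlp
        obtain ⟨l'', hl'', rfl⟩ := hlp
        obtain ⟨haF, hbF, hba⟩ := hPmem p hpP
        have hl''len : l''.length = 2*k+1 := by
          rw [length_of_mem_CC hl'', hWcard p hpP]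
        have step1 : l'' ++ [μ, p.1] ∈ CC (V.erase p.2) := by
          apply append2_mem_CC (V := V.erase p.2) (μ := μ) (x := p.1)
            (Finset.mem_erase.mpr ⟨Ne.symm (Finset.ne_of_mem_erase hbF), hμV⟩)
            (fun y hy => hμ y (Finset.mem_of_mem_erase hy))
            (Finset.mem_erase.mpr ⟨by omega, Finset.mem_of_mem_erase haF⟩)
            (Finset.ne_of_mem_erase haF)
            ⟨k, by omega⟩
          rw [herase p.1 p.2]
          exact hl''
        have step2 : (l'' ++ [μ, p.1]) ++ [p.2] ∈ AA V := by
          apply append1_mem_AA (Finset.mem_of_mem_erase hbF) step1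
            ⟨k+1, by simp [hl''len]; omega⟩
          have : (l'' ++ [μ, p.1]).length - 1 = l''.length + 1 := by
            simp [hl''len]
          rw [this, gv_app2_b]
          exact hba
        rwa [List.append_assoc] at step2
  have hfin1 : E1.Finite := (finite_CC F).image _
  have hfinU : (⋃ p ∈ P, E2 p).Finite :=
    Set.Finite.biUnion P.finite_toSet (fun p _ => (finite_CC _).image _)
  -- last-entry values distinguish the pieces
  have hlastE1 : ∀ l ∈ E1, gv l (2*k+3) = μ := by
    rintro l ⟨l1, h1, rfl⟩
    have : l1.length = 2*k+3 := by rw [length_of_mem_CC h1, hFcard]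
    rw [show (2*k+3) = l1.length from this.symm, gv_app1]
  have hlastE2 : ∀ p ∈ P, ∀ l ∈ E2 p, gv l (2*k+3) = p.2 ∧ gv l (2*k+2) = p.1 := by
    intro p hp l hl
    rw [hE2def] at hl
    obtain ⟨l2, h2, rfl⟩ := hl
    have hh : l2.length = 2*k+1 := by rw [length_of_mem_CC h2, hWcard p hp]
    constructor
    · rw [show (2*k+3) = l2.length + 2 by omega, gv_app3_c]
    · rw [show (2*k+2) = l2.length + 1 by omega, gv_app3_b]
  have hdisj : Disjoint E1 (⋃ p ∈ P, E2 p) := by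
    apply Set.disjoint_left.mpr
    intro l hl1 hl2
    rw [Set.mem_iUnion₂] at hl2
    obtain ⟨p, hpP, hlp⟩ := hl2
    have e1 := hlastE1 l hl1
    have e2 := (hlastE2 p hpP l hlp).1
    have : p.2 ∈ F := (hPmem p hpP).2.1
    exact Finset.ne_of_mem_erase (hFdef ▸ this) (by rw [← e2, e1])
  rw [hEq, Set.ncard_union_eq hdisj hfin1 hfinU]
  have hn1 : E1.ncard = evenDF (k+1) := by
    rw [hE1def, Set.ncard_image_of_injective _ (List.append_left_injective [μ]),
      ccard (k+1) F hFcard]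
  have hn2 : (⋃ p ∈ P, E2 p).ncard = ((2*k+3)*(k+1)) * evenDF k := by
    rw [ncard_biUnion]
    · have hconst : ∀ p ∈ P, (E2 p).ncard = evenDF k := by
        intro p hp
        rw [hE2def]
        simp only
        rw [Set.ncard_image_of_injective _ (List.append_left_injective [μ, p.1, p.2]),
          ccard k _ (hWcard p hp)]
      rw [Finset.sum_congr rfl hconst, Finset.sum_const, smul_eq_mul]
      congr 1
      have hp1 := card_lt_pairs F
      rw [hFcard] at hp1
      have hp2 : (2*k+3) * (2*k+3) - (2*k+3) = 2*((2*k+3)*(k+1)) := by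
        apply Nat.sub_eq_of_eq_add
        ring
      exact Nat.eq_of_mul_eq_mul_left (by norm_num) (hp1.trans hp2)
    · intro p _; exact (finite_CC _).image _
    · intro p hp q hq hpq
      apply Set.disjoint_left.mpr
      intro l hlp hlq
      have ep := hlastE2 p hp l hlp
      have eq' := hlastE2 q hq l hlq
      apply hpq
      apply Prod.ext
      · rw [← ep.2, ← eq'.2]
      · rw [← ep.1, ← eq'.1]
  rw [hn1, hn2]

lemma append1_mem_BB {V : Finset ℕ} {c M : ℕ} {l' : List ℕ}
    (hcV : c ∈ V) (hMV : M ∈ V) (hM : ∀ y ∈ V, y ≤ M) (hcM : c ≠ M)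
    (h : l' ∈ DD (V.erase c)) (hodd : Odd l'.length)
    (hlast : c < gv l' (l'.length - 1)) : l' ++ [c] ∈ BB V := by
  refine ⟨append1_mem_AA hcV h.1 hodd hlast, ?_⟩
  have hpos : 0 < l'.length := by obtain ⟨t, ht⟩ := hodd; omega
  have hgv0 : gv (l' ++ [c]) 0 = gv l' 0 := gv_append hpos
  have hMe : M ∈ V.erase c := Finset.mem_erase.mpr ⟨Ne.symm hcM, hMV⟩
  have hMle : M ≤ gv l' 0 := h.2 M hMe
  intro y hy
  rw [hgv0]
  exact le_trans (hM y hy) hMle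

lemma bcard (k : ℕ) (V : Finset ℕ) (hV : V.card = 2*k+4) :
    (BB V).ncard = oddDF (k+1) + ((2*k+1)*(k+1)) * oddDF k := by
  have hne : V.Nonempty := Finset.card_pos.mp (by omega)
  set μ := V.min' hne with hμdef
  set M := V.max' hne with hMdef
  have hμV : μ ∈ V := V.min'_mem hne
  have hMV : M ∈ V := V.max'_mem hne
  have hμ : ∀ y ∈ V, μ ≤ y := fun y hy => V.min'_le y hy
  have hM : ∀ y ∈ V, y ≤ M := fun y hy => V.le_max' y hy
  have hμM : μ ≠ M := ne_of_lt (V.min'_lt_max'_of_card (by omega))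
  set F := V.erase μ with hFdef
  have hFcard : F.card = 2*k+3 := by rw [hFdef, Finset.card_erase_of_mem hμV]; omega
  have hMF : M ∈ F := Finset.mem_erase.mpr ⟨Ne.symm hμM, hMV⟩
  set F' := F.erase M with hF'def
  have hF'card : F'.card = 2*k+2 := by
    rw [hF'def, Finset.card_erase_of_mem hMF, hFcard]
    omega
  set P := (F' ×ˢ F').filter (fun p => p.2 < p.1) with hPdef
  set E1 : Set (List ℕ) := (fun l' => l' ++ [μ]) '' DD F with hE1def
  set E2 : ℕ × ℕ → Set (List ℕ) :=
    fun p => (fun l'' => l'' ++ [μ, p.1, p.2]) '' DD ((F.erase p.1).erase p.2) with hE2def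
  have hPmem : ∀ p ∈ P, (p.1 ∈ F ∧ p.1 ≠ M) ∧ (p.2 ∈ F ∧ p.2 ≠ M) ∧ p.2 < p.1 := by
    intro p hp
    rw [hPdef, Finset.mem_filter, Finset.mem_product] at hp
    rw [hF'def] at hp
    exact ⟨⟨Finset.mem_of_mem_erase hp.1.1, Finset.ne_of_mem_erase hp.1.1⟩,
      ⟨Finset.mem_of_mem_erase hp.1.2, Finset.ne_of_mem_erase hp.1.2⟩, hp.2⟩
  have hWcard : ∀ p ∈ P, ((F.erase p.1).erase p.2).card = 2*k+1 := by
    intro p hp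
    obtain ⟨⟨h1, _⟩, ⟨h2, _⟩, h3⟩ := hPmem p hp
    rw [Finset.card_erase_of_mem (Finset.mem_erase.mpr ⟨by omega, h2⟩),
      Finset.card_erase_of_mem h1, hFcard]
    omega
  have herase : ∀ a b : ℕ, ((V.erase b).erase μ).erase a = (F.erase a).erase b := by
    intro a b
    rw [hFdef]
    ext y
    simp only [Finset.mem_erase]
    tauto
  have hEq : BB V = E1 ∪ ⋃ p ∈ P, E2 p := by
    ext l
    constructor
    · intro hl
      have hlen : l.length = 2*k+4 := by rw [length_of_mem_AA hl.1, hV]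
      obtain ⟨hcV, htake1, hrep1, hclt⟩ := AA_decomp hl.1 (by omega) ⟨k+2, by omega⟩
      set c := gv l (l.length - 1) with hcdef
      set t1 := l.take (l.length - 1) with ht1def
      have htklen : t1.length = 2*k+3 := by rw [ht1def]; simp [hlen]
      have hgv0 : gv l 0 = gv t1 0 := by
        conv_lhs => rw [hrep1]
        exact gv_append (by omega)
      have hMeq : gv l 0 = M := by
        refine le_antisymm (hM _ (mem_of_mem_AA hl.1 (gv_mem (by omega)))) (hl.2 M hMV)
      have hcM : c ≠ M := by
        rw [hcdef, ← hMeq]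
        exact gv_nodup_ne hl.1.1 (by omega) (by omega) (by omega)
      have hheadt1 : ∀ y ∈ V, y ≤ gv t1 0 := by
        intro y hy
        rw [← hgv0]
        exact hl.2 y hy
      by_cases hcμ : c = μ
      · left
        rw [hcμ] at htake1 hrep1
        refine ⟨t1, ⟨htake1, ?_⟩, hrep1.symm⟩
        intro y hy
        exact hheadt1 y (Finset.mem_of_mem_erase hy)
      · right
        have hcF : c ∈ F := Finset.mem_erase.mpr ⟨hcμ, hcV⟩
        have hμV' : μ ∈ V.erase c := Finset.mem_erase.mpr ⟨fun h => hcμ h.symm, hμV⟩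
        have hμ' : ∀ y ∈ V.erase c, μ ≤ y := fun y hy => hμ y (Finset.mem_of_mem_erase hy)
        obtain ⟨hmin2, ⟨haV, haμ⟩, htake2, hrep2⟩ :=
          CC_decomp hμV' hμ' htake1 (by omega) ⟨k+1, by omega⟩
        set a := gv t1 (t1.length - 1) with hadef
        have hgva : gv l (l.length - 2) = a := by
          rw [show l.length - 2 = t1.length - 1 by omega]
          conv_lhs => rw [hrep1]
          rw [gv_append (by omega)]
        have haF : a ∈ F := Finset.mem_erase.mpr ⟨haμ, Finset.mem_of_mem_erase haV⟩
        have haM : a ≠ M := by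
          rw [← hgva, ← hMeq]
          exact gv_nodup_ne hl.1.1 (by omega) (by omega) (by omega)
        have hac : c < a := by rw [← hgva]; exact hclt
        have hPmem2 : (a, c) ∈ P := by
          rw [hPdef, Finset.mem_filter, Finset.mem_product, hF'def]
          exact ⟨⟨Finset.mem_erase.mpr ⟨haM, haF⟩, Finset.mem_erase.mpr ⟨hcM, hcF⟩⟩, hac⟩
        apply Set.mem_biUnion hPmem2
        rw [hE2def]
        set t2 := t1.take (t1.length - 2) with ht2def
        have ht2len : t2.length = 2*k+1 := by rw [ht2def]; simp [htklen]
        have hgv0' : gv t1 0 = gv t2 0 := by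
          conv_lhs => rw [hrep2]
          exact gv_append (by omega)
        refine ⟨t2, ⟨?_, ?_⟩, ?_⟩
        · rw [← herase a c]
          exact htake2
        · intro y hy
          rw [← hgv0', ← hgv0, hMeq]
          have hyF : y ∈ F := Finset.mem_of_mem_erase (Finset.mem_of_mem_erase hy)
          rw [hFdef] at hyF
          exact hM y (Finset.mem_of_mem_erase hyF)
        · show t2 ++ [μ, a, c] = l
          have : t2 ++ [μ, a, c] = (t2 ++ [μ, a]) ++ [c] := by
            rw [List.append_assoc]; rfl
          rw [this, ← hrep2, ← hrep1]
    · intro hl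
      rcases hl with ⟨l', hl', rfl⟩ | hmem
      · apply append1_mem_BB hμV hMV hM hμM hl' ?_ ?_
        · rw [length_of_mem_CC hl'.1, hFcard]; exact ⟨k+1, by omega⟩
        · have : gv l' (l'.length - 1) ∈ F := by
            apply mem_of_mem_CC hl'.1 (gv_mem ?_)
            rw [length_of_mem_CC hl'.1, hFcard]; omega
          exact lt_of_le_of_ne (hμ _ (Finset.mem_of_mem_erase this))
            (Ne.symm (Finset.ne_of_mem_erase this))
      · rw [Set.mem_iUnion₂] at hmem
        obtain ⟨p, hpP, hlp⟩ := hmem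
        rw [hE2def] at hlp
        obtain ⟨l'', hl'', rfl⟩ := hlp
        obtain ⟨⟨haF, haM⟩, ⟨hbF, hbM⟩, hba⟩ := hPmem p hpP
        have hl''len : l''.length = 2*k+1 := by
          rw [length_of_mem_CC hl''.1, hWcard p hpP]
        have step1 : l'' ++ [μ, p.1] ∈ DD (V.erase p.2) := by
          apply append2_mem_DD (V := V.erase p.2) (μ := μ) (M := M) (x := p.1)
            (Finset.mem_erase.mpr ⟨Ne.symm (Finset.ne_of_mem_erase hbF), hμV⟩)
            (fun y hy => hμ y (Finset.mem_of_mem_erase hy))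
            (Finset.mem_erase.mpr ⟨Ne.symm hbM, hMV⟩)
            (fun y hy => hM y (Finset.mem_of_mem_erase hy))
            (Finset.mem_erase.mpr ⟨by omega, Finset.mem_of_mem_erase haF⟩)
            (Finset.ne_of_mem_erase haF) haM hμM
            ⟨k, by omega⟩
          rw [herase p.1 p.2]
          exact hl''
        have step2 : (l'' ++ [μ, p.1]) ++ [p.2] ∈ BB V := by
          apply append1_mem_BB (Finset.mem_of_mem_erase hbF) hMV hM hbM step1
            ⟨k+1, by simp [hl''len]; omega⟩
          have : (l'' ++ [μ, p.1]).length - 1 = l''.length + 1 := by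
            simp [hl''len]
          rw [this, gv_app2_b]
          exact hba
        rwa [List.append_assoc] at step2
  have hfin1 : E1.Finite := (finite_DD F).image _
  have hfinU : (⋃ p ∈ P, E2 p).Finite :=
    Set.Finite.biUnion P.finite_toSet (fun p _ => (finite_DD _).image _)
  have hlastE1 : ∀ l ∈ E1, gv l (2*k+3) = μ := by
    rintro l ⟨l1, h1, rfl⟩
    have : l1.length = 2*k+3 := by rw [length_of_mem_CC h1.1, hFcard]
    rw [show (2*k+3) = l1.length from this.symm, gv_app1]
  have hlastE2 : ∀ p ∈ P, ∀ l ∈ E2 p, gv l (2*k+3) = p.2 ∧ gv l (2*k+2) = p.1 := by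
    intro p hp l hl
    rw [hE2def] at hl
    obtain ⟨l2, h2, rfl⟩ := hl
    have hh : l2.length = 2*k+1 := by rw [length_of_mem_CC h2.1, hWcard p hp]
    constructor
    · rw [show (2*k+3) = l2.length + 2 by omega, gv_app3_c]
    · rw [show (2*k+2) = l2.length + 1 by omega, gv_app3_b]
  have hdisj : Disjoint E1 (⋃ p ∈ P, E2 p) := by
    apply Set.disjoint_left.mpr
    intro l hl1 hl2
    rw [Set.mem_iUnion₂] at hl2
    obtain ⟨p, hpP, hlp⟩ := hl2
    have e1 := hlastE1 l hl1
    have e2 := (hlastE2 p hpP l hlp).1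
    have : p.2 ∈ F := (hPmem p hpP).2.1.1
    exact Finset.ne_of_mem_erase (hFdef ▸ this) (by rw [← e2, e1])
  rw [hEq, Set.ncard_union_eq hdisj hfin1 hfinU]
  have hn1 : E1.ncard = oddDF (k+1) := by
    rw [hE1def, Set.ncard_image_of_injective _ (List.append_left_injective [μ]),
      dcard (k+1) F hFcard]
  have hn2 : (⋃ p ∈ P, E2 p).ncard = ((2*k+1)*(k+1)) * oddDF k := by
    rw [ncard_biUnion]
    · have hconst : ∀ p ∈ P, (E2 p).ncard = oddDF k := by
        intro p hp
        rw [hE2def]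
        simp only
        rw [Set.ncard_image_of_injective _ (List.append_left_injective [μ, p.1, p.2]),
          dcard k _ (hWcard p hp)]
      rw [Finset.sum_congr rfl hconst, Finset.sum_const, smul_eq_mul]
      congr 1
      have hp1 := card_lt_pairs F'
      rw [hF'card] at hp1
      have hp2 : (2*k+2) * (2*k+2) - (2*k+2) = 2*((2*k+1)*(k+1)) := by
        apply Nat.sub_eq_of_eq_add
        ring
      exact Nat.eq_of_mul_eq_mul_left (by norm_num) (hp1.trans hp2)
    · intro p _; exact (finite_DD _).image _
    · intro p hp q hq hpq
      apply Set.disjoint_left.mpr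
      intro l hlp hlq
      have ep := hlastE2 p hp l hlp
      have eq' := hlastE2 q hq l hlq
      apply hpq
      apply Prod.ext
      · rw [← ep.2, ← eq'.2]
      · rw [← ep.1, ← eq'.1]
  rw [hn1, hn2]


lemma matches_iff {n : ℕ} (hn : 2 ≤ n) (σ : Equiv.Perm (Fin (2*n))) (hσ : DownUp σ)
    (i : Fin (2*n)) :
    Matches1 σ i ↔ (i.val = 0 ∧ σ i ≠ ⟨2*n-1, by omega⟩) ∨
      (¬ Even i.val ∧ i.val + 1 < 2*n ∧ ∀ j, j < i → σ j > σ i) := by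
  constructor
  · rintro ⟨⟨j, hij, hσij⟩, hno⟩
    by_cases h0 : i.val = 0
    · left
      refine ⟨h0, fun htop => ?_⟩
      have h1 : (σ i).val < (σ j).val := hσij
      have h2 : (σ i).val = 2*n-1 := by rw [htop]
      have h3 : (σ j).val < 2*n := (σ j).isLt
      omega
    · right
      have hodd : ¬ Even i.val := by
        intro hev
        have hge : 2 ≤ i.val := by
          rw [Nat.even_iff] at hev; omega
        set p : Fin (2*n) := ⟨i.val - 1, by omega⟩ with hpdef
        have hstep := hσ p (by simp [hpdef]; omega)
        have hpodd : ¬ Even p.val := by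
          simp only [hpdef, Nat.even_iff] at *
          omega
        rw [if_neg hpodd] at hstep
        have hpi : (⟨p.val + 1, by simp [hpdef]; omega⟩ : Fin (2*n)) = i :=
          Fin.ext (by simp [hpdef]; omega)
        rw [hpi] at hstep
        exact hno ⟨p, by rw [Fin.lt_def]; simp [hpdef]; omega, hstep⟩
      have hlt : i.val + 1 < 2*n := by
        have h1 : j.val < 2*n := j.isLt
        have h2 : i.val < j.val := hij
        omega
      refine ⟨hodd, hlt, fun j' hj' => ?_⟩
      have hne : σ j' ≠ σ i := fun h =>
        absurd (σ.injective h) (by intro h'; rw [h'] at hj'; exact lt_irrefl _ hj')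
      rcases lt_or_gt_of_ne hne with h | h
      · exact absurd ⟨j', hj', h⟩ hno
      · exact h
  · rintro (⟨h0, htop⟩ | ⟨hodd, hlt, hall⟩)
    · constructor
      · set jt := σ.symm ⟨2*n-1, by omega⟩ with hjtdef
        have hσjt : σ jt = ⟨2*n-1, by omega⟩ := σ.apply_symm_apply _
        have hne' : jt ≠ i := fun h => htop (by rw [← h, hσjt])
        refine ⟨jt, ?_, ?_⟩
        · rw [Fin.lt_def]
          have : jt.val ≠ i.val := fun h => hne' (Fin.ext h)
          omega
        · rw [hσjt, Fin.lt_def]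
          have h1 : (σ i).val < 2*n := (σ i).isLt
          have h2 : (σ i).val ≠ 2*n-1 := fun h => htop (Fin.ext h)
          simpa using by omega
      · rintro ⟨j, hj, _⟩
        rw [Fin.lt_def, h0] at hj
        omega
    · constructor
      · refine ⟨⟨i.val + 1, hlt⟩, by rw [Fin.lt_def]; simp, ?_⟩
        have := hσ i hlt
        rwa [if_neg hodd] at this
      · rintro ⟨j, hj, hlt'⟩
        exact absurd hlt' (not_lt.mpr (le_of_lt (hall j hj)))

def TT (n : ℕ) : Finset (Fin (2*n)) :=
  Finset.univ.filter (fun i => i.val = 0 ∨ (i.val % 2 = 1 ∧ i.val + 1 < 2*n))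

lemma TT_card {n : ℕ} (hn : 2 ≤ n) : (TT n).card = n := by
  have h2n : 0 < 2*n := by omega
  have h : (TT n).card = (Finset.range n).card := by
    apply Finset.card_nbij' (i := fun a => (a.val + 1) / 2)
      (j := fun b => if h : 0 < b ∧ b < n then ⟨2*b - 1, by omega⟩ else ⟨0, h2n⟩)
    · intro a ha
      simp only [Finset.mem_coe, TT, Finset.mem_filter] at ha
      simp only [Finset.mem_coe, Finset.mem_range]
      omega
    · intro b hb
      simp only [Finset.mem_coe, Finset.mem_range] at hb
      simp only [Finset.mem_coe, TT, Finset.mem_filter]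
      refine ⟨Finset.mem_univ _, ?_⟩
      split_ifs with h
      · right
        constructor
        · simp; omega
        · simp; omega
      · left; simp
    · intro a ha
      simp only [Finset.mem_coe, TT, Finset.mem_filter] at ha
      rcases ha.2 with h0 | ⟨hodd, hlt⟩
      · have : (a.val + 1) / 2 = 0 := by omega
        beta_reduce
        rw [this]
        simp only [lt_irrefl, false_and, dite_false]
        exact Fin.ext (by simp [h0])
      · have h1 : 0 < (a.val + 1) / 2 ∧ (a.val + 1) / 2 < n := by omega
        beta_reduce
        rw [dif_pos h1]
        exact Fin.ext (by simp; omega)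
    · intro b hb
      simp only [Finset.mem_coe, Finset.mem_range] at hb
      beta_reduce
      split_ifs with h
      · simp; omega
      · simp; omega
  rw [h, Finset.card_range]

lemma matchset_subset {n : ℕ} (hn : 2 ≤ n) (σ : Equiv.Perm (Fin (2*n))) (hσ : DownUp σ) :
    {i : Fin (2*n) | Matches1 σ i} ⊆ ↑(TT n) := by
  intro i hi
  rw [Set.mem_setOf_eq] at hi
  rw [matches_iff hn σ hσ] at hi
  simp only [Finset.coe_filter, TT, Set.mem_setOf_eq, Finset.mem_coe, Finset.mem_filter]
  refine ⟨Finset.mem_univ _, ?_⟩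
  rcases hi with ⟨h0, _⟩ | ⟨hodd, hlt, _⟩
  · exact Or.inl h0
  · rw [Nat.even_iff] at hodd
    exact Or.inr ⟨by omega, hlt⟩

lemma mmp1_le {n : ℕ} (hn : 2 ≤ n) (σ : Equiv.Perm (Fin (2*n))) (hσ : DownUp σ) :
    mmp1 σ ≤ n := by
  have := Set.ncard_le_ncard (matchset_subset hn σ hσ) (TT n).finite_toSet
  rwa [Set.ncard_coe_finset, TT_card hn] at this

lemma mmp1_eq_iff {n : ℕ} (hn : 2 ≤ n) (σ : Equiv.Perm (Fin (2*n))) (hσ : DownUp σ) :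
    mmp1 σ = n ↔ (σ ⟨0, by omega⟩ ≠ ⟨2*n-1, by omega⟩ ∧
      ∀ j : Fin (2*n), ¬ Even j.val → j.val + 1 < 2*n → ∀ i, i < j → σ i > σ j) := by
  constructor
  · intro hm
    have heq : {i : Fin (2*n) | Matches1 σ i} = ↑(TT n) := by
      apply Set.eq_of_subset_of_ncard_le (matchset_subset hn σ hσ)
      rw [Set.ncard_coe_finset, TT_card hn]
      exact hm.symm.le
    constructor
    · have h0T : (⟨0, by omega⟩ : Fin (2*n)) ∈ TT n := by
        simp [TT]
      have : Matches1 σ ⟨0, by omega⟩ := by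
        rw [← Set.mem_setOf_eq (p := fun i => Matches1 σ i), heq]
        exact_mod_cast h0T
      rw [matches_iff hn σ hσ] at this
      rcases this with ⟨_, h⟩ | ⟨h, _⟩
      · exact h
      · exact absurd (by simp : Even (0:ℕ)) h
    · intro j hodd hlt i hij
      have hjT : j ∈ TT n := by
        simp only [TT, Finset.mem_filter]
        rw [Nat.even_iff] at hodd
        exact ⟨Finset.mem_univ _, Or.inr ⟨by omega, hlt⟩⟩
      have : Matches1 σ j := by
        rw [← Set.mem_setOf_eq (p := fun i => Matches1 σ i), heq]
        exact_mod_cast hjT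
      rw [matches_iff hn σ hσ] at this
      rcases this with ⟨h0, _⟩ | ⟨_, _, h⟩
      · exfalso; apply hodd; rw [h0]; simp
      · exact h i hij
  · rintro ⟨hhead, hpm⟩
    have heq : {i : Fin (2*n) | Matches1 σ i} = ↑(TT n) := by
      apply Set.Subset.antisymm (matchset_subset hn σ hσ)
      intro i hiT
      simp only [TT, Finset.coe_filter, Finset.mem_coe, Finset.mem_filter] at hiT
      rw [Set.mem_setOf_eq, matches_iff hn σ hσ]
      rcases hiT.2 with h0 | ⟨hodd, hlt⟩
      · left
        refine ⟨h0, ?_⟩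
        have : i = ⟨0, by omega⟩ := Fin.ext h0
        rw [this]; exact hhead
      · right
        refine ⟨by rw [Nat.even_iff]; omega, hlt, ?_⟩
        intro j hij
        exact hpm i (by rw [Nat.even_iff]; omega) hlt j hij
    rw [mmp1, heq, Set.ncard_coe_finset, TT_card hn]

section Glue

variable {n : ℕ}

def pl (σ : Equiv.Perm (Fin (2*n))) : List ℕ := List.ofFn (fun i => (σ i : ℕ))

lemma pl_length (σ : Equiv.Perm (Fin (2*n))) : (pl σ).length = 2*n := by simp [pl]

lemma gv_pl (σ : Equiv.Perm (Fin (2*n))) (i : ℕ) (h : i < 2*n) :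
    gv (pl σ) i = (σ ⟨i, h⟩ : ℕ) := by
  rw [gv, List.getD_eq_getElem _ _ (by simp [pl]; omega)]
  simp [pl]

lemma pl_nodup (σ : Equiv.Perm (Fin (2*n))) : (pl σ).Nodup := by
  rw [pl, List.nodup_ofFn]
  intro i j h
  exact σ.injective (Fin.ext h)

lemma pl_toFinset (σ : Equiv.Perm (Fin (2*n))) :
    (pl σ).toFinset = Finset.range (2*n) := by
  ext y
  simp only [List.mem_toFinset, Finset.mem_range, pl, List.mem_ofFn, Set.mem_range]
  constructor
  · rintro ⟨i, rfl⟩; exact (σ i).isLt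
  · intro hy; exact ⟨σ.symm ⟨y, hy⟩, by simp⟩

lemma pl_DUL (σ : Equiv.Perm (Fin (2*n))) : DownUp σ ↔ DUL (pl σ) := by
  constructor
  · intro h i hi
    rw [pl_length] at hi
    have := h ⟨i, by omega⟩ (by simpa using hi)
    rw [gv_pl σ i (by omega), gv_pl σ (i+1) (by omega)]
    split_ifs at this ⊢ with hev
    · exact this
    · exact this
  · intro h i hi
    have hi' : i.val + 1 < (pl σ).length := by rw [pl_length]; exact hi
    have := h i.val hi'
    rw [gv_pl σ i.val (by omega), gv_pl σ (i.val+1) (by omega)] at this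
    split_ifs at this ⊢ with hev
    · simp only [Fin.eta] at this; exact this
    · simp only [Fin.eta] at this; exact this

lemma image_eq (hn : 2 ≤ n) :
    pl '' {σ : Equiv.Perm (Fin (2*n)) | DownUp σ ∧ mmp1 σ = n}
      = AA (Finset.range (2*n)) \ BB (Finset.range (2*n)) := by
  ext l
  constructor
  · rintro ⟨σ, ⟨hD, hm⟩, rfl⟩
    obtain ⟨hhead, hpm⟩ := (mmp1_eq_iff hn σ hD).mp hm
    have hAA : pl σ ∈ AA (Finset.range (2*n)) := by
      refine ⟨pl_nodup σ, pl_toFinset σ, (pl_DUL σ).mp hD, ?_⟩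
      intro j hj hjlt i hij
      rw [pl_length] at hjlt
      have := hpm ⟨j, by omega⟩ (by simpa using hj) (by simpa using hjlt)
        ⟨i, by omega⟩ (by rw [Fin.lt_def]; simpa using hij)
      rw [gv_pl σ j (by omega), gv_pl σ i (by omega)]
      exact this
    refine ⟨hAA, fun hBB => ?_⟩
    apply hhead
    have h1 := hBB.2 (2*n-1) (by simp only [Finset.mem_range]; omega)
    have hv : gv (pl σ) 0 = (σ ⟨0, by omega⟩ : ℕ) := gv_pl σ 0 (by omega)
    rw [hv] at h1
    have h2 : (σ ⟨0, by omega⟩ : ℕ) < 2*n := (σ _).isLt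
    exact Fin.ext (by simp; omega)
  · rintro ⟨hAA, hnB⟩
    have hlen : l.length = 2*n := by
      rw [length_of_mem_AA hAA, Finset.card_range]
    have hval : ∀ i : Fin (2*n), gv l i.val < 2*n := by
      intro i
      have := mem_of_mem_AA hAA (gv_mem (by omega : i.val < l.length))
      simpa [Finset.mem_range] using this
    set g : Fin (2*n) → Fin (2*n) := fun i => ⟨gv l i.val, hval i⟩ with hgdef
    have hginj : Function.Injective g := by
      intro i j hij
      by_contra hne
      exact gv_nodup_ne hAA.1 (by omega : i.val < l.length) (by omega : j.val < l.length)
        (fun h => hne (Fin.ext h)) (congrArg Fin.val hij)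
    have hbij := Finite.injective_iff_bijective.mp hginj
    set σ : Equiv.Perm (Fin (2*n)) := Equiv.ofBijective g hbij with hσdef
    have hσg : ∀ i, σ i = g i := fun i => rfl
    have hpl : pl σ = l := by
      apply List.ext_getElem (by rw [pl_length, hlen])
      intro i h1 h2
      have h1' : i < 2*n := by rwa [pl_length] at h1
      have e1 : gv (pl σ) i = (σ ⟨i, h1'⟩ : ℕ) := gv_pl σ i h1'
      have e2 : (σ ⟨i, h1'⟩ : ℕ) = gv l i := by rw [hσg]
      rw [← List.getD_eq_getElem (pl σ) 0 h1, ← List.getD_eq_getElem l 0 h2]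
      show gv (pl σ) i = gv l i
      rw [e1, e2]
    have hD : DownUp σ := by
      rw [pl_DUL σ, hpl]
      exact hAA.2.2.1
    refine ⟨σ, ⟨hD, ?_⟩, hpl⟩
    refine (mmp1_eq_iff hn σ hD).mpr ⟨?_, ?_⟩
    · intro htop
      apply hnB
      refine ⟨hAA, ?_⟩
      intro x hx
      have hg0 : gv l 0 = 2*n-1 := by
        have := gv_pl σ 0 (by omega)
        rw [hpl] at this
        rw [this, htop]
      rw [hg0]
      simp only [Finset.mem_range] at hx
      omega
    · intro j hjodd hjlt i hij
      have hpm := hAA.2.2.2 j.val hjodd (by omega) i.val (Fin.lt_def.mp hij)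
      have ei : gv l i.val = (σ i).val := by
        rw [← hpl, gv_pl σ i.val i.isLt]
      have ej : gv l j.val = (σ j).val := by
        rw [← hpl, gv_pl σ j.val j.isLt]
      rw [ei, ej] at hpm
      exact hpm

lemma pl_injective : Function.Injective (pl (n := n)) := by
  intro σ τ h
  apply Equiv.ext
  intro i
  apply Fin.ext
  have h1 := gv_pl σ i.val i.isLt
  have h2 := gv_pl τ i.val i.isLt
  rw [h, h2] at h1
  simpa using h1.symm

end Glue

end Stmt13Aux

/-- Here `(2n−4)!! = evenDF (n−2)` and `(2n−3)!! = oddDF (n−1)`. -/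
theorem stmt13 (n : ℕ) (hn : 2 ≤ n) :
    (∀ σ : Equiv.Perm (Fin (2*n)), DownUp σ → mmp1 σ ≤ n) ∧
    ({σ : Equiv.Perm (Fin (2*n)) | DownUp σ ∧ mmp1 σ = n}.ncard : ℤ)
      = (2*(n:ℤ)^2 - n - 1) * (evenDF (n-2) : ℤ) - (n : ℤ) * (oddDF (n-1) : ℤ) := by
  obtain ⟨k, rfl⟩ : ∃ k, n = k + 2 := ⟨n - 2, by omega⟩
  constructor
  · intro σ hσ
    exact Stmt13Aux.mmp1_le (by omega) σ hσ
  · have hcard : (Finset.range (2*(k+2))).card = 2*k+4 := by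
      rw [Finset.card_range]; ring
    have hsubBA : Stmt13Aux.BB (Finset.range (2*(k+2))) ⊆ Stmt13Aux.AA (Finset.range (2*(k+2))) :=
      fun l h => h.1
    have himg := Stmt13Aux.image_eq (n := k+2) (by omega)
    have h1 : {σ : Equiv.Perm (Fin (2*(k+2))) | DownUp σ ∧ mmp1 σ = k+2}.ncard
        = (Stmt13Aux.AA (Finset.range (2*(k+2)))).ncard
          - (Stmt13Aux.BB (Finset.range (2*(k+2)))).ncard := by
      rw [← Set.ncard_image_of_injective _ Stmt13Aux.pl_injective, himg,
        Set.ncard_diff hsubBA (Stmt13Aux.finite_BB _)]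
    have hle := Set.ncard_le_ncard hsubBA (Stmt13Aux.finite_AA (Finset.range (2*(k+2))))
    rw [h1, Nat.cast_sub hle, Stmt13Aux.acard k _ hcard, Stmt13Aux.bcard k _ hcard,
      show (k+2) - 2 = k from by omega, show (k+2) - 1 = k+1 from by omega,
      Stmt13Aux.evenDF_succ k, Stmt13Aux.oddDF_succ k]
    push_cast
    ring
end
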